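/- arXiv:math/0302309 — 4 statements merged into one kernel-verified Lean document; each statement's English description precedes it below -/
import Mathlib

section
/- Let (W,S) be a finite Coxeter system and suppose S = K₁ ⊔ K₂ is a disjoint union such that every element of K₁ commutes with every element of K₂ (so W = W_{K₁} × W_{K₂} internally). For I ⊆ S write I_p = I ∩ K_p for p = 1,2, and for a Coxeter class λ ∈ Λ(W) with I ∈ λ set π_p(λ) = λ(I_p) ∈ Λ(W_{K_p}), the Coxeter class of I_p in the Coxeter system (W_{K_p}, K_p). Then π_p is well defined (independent of the choice of I ∈ λ), the map π : Λ(W) → Λ(W_{K₁}) × Λ(W_{K₂}) given by π(λ) = (π₁(λ), π₂(λ)) is a bijection, and for every λ ∈ Λ(W) one has |C(λ)| = |C(π₁(λ))| · |C(π₂(λ))|, where C(π_p(λ)) denotes the π_p(λ)-set inside W_{K_p}. -/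
set_option linter.unusedSectionVars false
set_option maxHeartbeats 1600000


open scoped Classical

variable {B : Type*} {W : Type*} [Group W] {M : CoxeterMatrix B}

/-- The parabolic subgroup `W_I` generated by the simple reflections indexed by `I`. -/
def parabolic (cs : CoxeterSystem M W) (I : Set B) : Subgroup W :=
  Subgroup.closure (cs.simple '' I)

/-- `X_I`: minimal length coset representatives of `W / W_I`. -/
def minReps (cs : CoxeterSystem M W) (I : Set B) : Set W :=
  {w : W | ∀ i ∈ I, cs.length w < cs.length (w * cs.simple i)}

/-- `I ∼_W J`: the subsets of simple reflections are conjugate under `W`. -/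
def ConjSubsets (cs : CoxeterSystem M W) (I J : Set B) : Prop :=
  ∃ w : W, (fun x => w * x * w⁻¹) '' (cs.simple '' I) = cs.simple '' J

theorem conjSubsets_equivalence (cs : CoxeterSystem M W) : Equivalence (ConjSubsets cs) where
  refl I := ⟨1, by simp⟩
  symm := by
    rintro I J ⟨w, h⟩
    refine ⟨w⁻¹, ?_⟩
    rw [← h, Set.image_image]
    simp [mul_assoc]
  trans := by
    rintro I J K ⟨w, h⟩ ⟨v, h'⟩
    refine ⟨v * w, ?_⟩
    rw [← h', ← h]
    simp [Set.image_image, mul_assoc]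

/-- The setoid of Coxeter classes. -/
def coxSetoid (cs : CoxeterSystem M W) : Setoid (Set B) :=
  ⟨ConjSubsets cs, conjSubsets_equivalence cs⟩

/-- The set of Coxeter classes `Λ(W)`. -/
def CoxeterClass (cs : CoxeterSystem M W) := Quotient (coxSetoid cs)

/-- `C` is a conjugacy class of the parabolic subgroup `W_I`. -/
def IsConjClassOfParabolic (cs : CoxeterSystem M W) (I : Set B) (C : Set W) : Prop :=
  ∃ v ∈ parabolic cs I, C = {x : W | ∃ u ∈ parabolic cs I, u * v * u⁻¹ = x}

/-- `C` is an `I`-cuspidal class: a conjugacy class of `W_I` meeting no proper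
parabolic subgroup of `W_I`. -/
def IsCuspidalClass (cs : CoxeterSystem M W) (I : Set B) (C : Set W) : Prop :=
  IsConjClassOfParabolic cs I C ∧ ∀ K : Set B, K ⊂ I → C ∩ (parabolic cs K : Set W) = ∅

/-- `w` is an `I`-element: `C(w) ∩ W_I` is an `I`-cuspidal class. -/
def IsElementOf (cs : CoxeterSystem M W) (I : Set B) (w : W) : Prop :=
  IsCuspidalClass cs I ({x : W | IsConj w x} ∩ (parabolic cs I : Set W))

/-- The λ-set `C(λ)` of the Coxeter class of `I`: the set of `λ(I)`-elements. -/
def lambdaSet (cs : CoxeterSystem M W) (I : Set B) : Set W :=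
  {w : W | ∃ J : Set B, ConjSubsets cs I J ∧ IsElementOf cs J w}

/-- The λ-set of a Coxeter class. -/
def lambdaSetQ (cs : CoxeterSystem M W) (lam : CoxeterClass cs) : Set W :=
  {w : W | ∃ I : Set B, Quotient.mk (coxSetoid cs) I = lam ∧ IsElementOf cs I w}

/-- The induced character `1_{W_I}^W` of the trivial character of `W_I`,
as a `ℚ`-valued function on `W`. -/
noncomputable def indTriv (cs : CoxeterSystem M W) (I : Set B) : W → ℚ :=
  fun w => (Nat.card {g : W | g ∈ minReps cs I ∧ g⁻¹ * w * g ∈ parabolic cs I} : ℚ)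


/-- `I ∼_{W_K} J`: conjugation by an element of the parabolic subgroup `W_K`. -/
def ConjSubsetsIn (cs : CoxeterSystem M W) (K I J : Set B) : Prop :=
  ∃ w ∈ parabolic cs K, (fun x => w * x * w⁻¹) '' (cs.simple '' I) = cs.simple '' J

/-- The setoid of Coxeter classes of the parabolic Coxeter system `(W_K, K)`. -/
def coxSetoidIn (cs : CoxeterSystem M W) (K : Set B) : Setoid {I : Set B // I ⊆ K} :=
  ⟨fun I J => ConjSubsetsIn cs K I.1 J.1, by
    constructor
    · intro I; exact ⟨1, one_mem _, by simp⟩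
    · rintro I J ⟨w, hw, h⟩
      refine ⟨w⁻¹, inv_mem hw, ?_⟩
      rw [← h]
      simp [Set.image_image, mul_assoc]
    · rintro I J K' ⟨w, hw, h⟩ ⟨v, hv, h'⟩
      refine ⟨v * w, mul_mem hv hw, ?_⟩
      rw [← h', ← h]
      simp [Set.image_image, mul_assoc]⟩

/-- The set of Coxeter classes of the parabolic Coxeter system `(W_K, K)`. -/
def CoxeterClassIn (cs : CoxeterSystem M W) (K : Set B) := Quotient (coxSetoidIn cs K)

/-- `w` is an `I`-element of the parabolic Coxeter system `(W_K, K)` (`I ⊆ K`). -/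
def IsElementIn (cs : CoxeterSystem M W) (K I : Set B) (w : W) : Prop :=
  w ∈ parabolic cs K ∧
    IsCuspidalClass cs I
      ({x : W | ∃ u ∈ parabolic cs K, u * w * u⁻¹ = x} ∩ (parabolic cs I : Set W))

/-- The λ-set of a Coxeter class of the parabolic Coxeter system `(W_K, K)`. -/
def lambdaSetInQ (cs : CoxeterSystem M W) (K : Set B) (lam : CoxeterClassIn cs K) : Set W :=
  {w : W | ∃ I : {I : Set B // I ⊆ K},
    Quotient.mk (coxSetoidIn cs K) I = lam ∧ IsElementIn cs K I.1 w}

namespace Stmt2Aux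

noncomputable def kk (M : CoxeterMatrix B) (a b : B) : ℝ :=
  -(2 * Real.cos (Real.pi / (M a b)))
noncomputable def phi (M : CoxeterMatrix B) (a : B) : (B →₀ ℝ) →ₗ[ℝ] ℝ :=
  Finsupp.linearCombination ℝ (fun b => kk M a b)
lemma phi_single (M : CoxeterMatrix B) (a b : B) :
    phi M a (Finsupp.single b 1) = kk M a b := by
  simp [phi]
lemma kk_self (M : CoxeterMatrix B) (a : B) : kk M a a = 2 := by
  simp [kk, M.diagonal a]
lemma kk_symm (M : CoxeterMatrix B) (a b : B) : kk M a b = kk M b a := by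
  rw [kk, kk, M.symmetric]
noncomputable def sigma (M : CoxeterMatrix B) (a : B) : Module.End ℝ (B →₀ ℝ) :=
  LinearMap.id - (phi M a).smulRight (Finsupp.single a 1)
lemma sigma_apply (M : CoxeterMatrix B) (a : B) (v : B →₀ ℝ) :
    sigma M a v = v - (phi M a v) • Finsupp.single a 1 := rfl
lemma phi_sigma (M : CoxeterMatrix B) (a b : B) (v : B →₀ ℝ) :
    phi M b (sigma M a v) = phi M b v - (phi M a v) * kk M b a := by
  rw [sigma_apply, map_sub, map_smul, phi_single, smul_eq_mul]
lemma sigma_sq (M : CoxeterMatrix B) (a : B) : sigma M a * sigma M a = 1 := by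
  apply LinearMap.ext
  intro v
  rw [Module.End.mul_apply, sigma_apply M a (sigma M a v), phi_sigma, kk_self,
    sigma_apply, Module.End.one_apply]
  module

noncomputable def Phi (M : CoxeterMatrix B) (a b : B) (N : Matrix (Fin 2) (Fin 2) ℝ) :
    Module.End ℝ (B →₀ ℝ) :=
  N 0 0 • (phi M a).smulRight (Finsupp.single a 1) +
  N 0 1 • (phi M b).smulRight (Finsupp.single a 1) +
  N 1 0 • (phi M a).smulRight (Finsupp.single b 1) +
  N 1 1 • (phi M b).smulRight (Finsupp.single b 1)

lemma Phi_apply (M : CoxeterMatrix B) (a b : B) (N : Matrix (Fin 2) (Fin 2) ℝ) (v : B →₀ ℝ) :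
    Phi M a b N v = (N 0 0 * phi M a v + N 0 1 * phi M b v) • Finsupp.single a 1 +
      (N 1 0 * phi M a v + N 1 1 * phi M b v) • Finsupp.single b 1 := by
  simp only [Phi, LinearMap.add_apply, LinearMap.smul_apply, LinearMap.smulRight_apply,
    smul_eq_mul]
  module

lemma Phi_add (M : CoxeterMatrix B) (a b : B) (N N' : Matrix (Fin 2) (Fin 2) ℝ) :
    Phi M a b (N + N') = Phi M a b N + Phi M a b N' := by
  apply LinearMap.ext; intro v
  simp only [Phi_apply, Matrix.add_apply, LinearMap.add_apply]
  module

lemma Phi_zero (M : CoxeterMatrix B) (a b : B) : Phi M a b 0 = 0 := by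
  apply LinearMap.ext; intro v
  simp [Phi_apply]

lemma phi_Phi_a (M : CoxeterMatrix B) (a b : B) (N : Matrix (Fin 2) (Fin 2) ℝ) (v : B →₀ ℝ) :
    phi M a (Phi M a b N v) =
      (N 0 0 * phi M a v + N 0 1 * phi M b v) * 2 +
      (N 1 0 * phi M a v + N 1 1 * phi M b v) * kk M a b := by
  rw [Phi_apply, map_add, map_smul, map_smul, phi_single, phi_single, kk_self,
    smul_eq_mul, smul_eq_mul]

lemma phi_Phi_b (M : CoxeterMatrix B) (a b : B) (N : Matrix (Fin 2) (Fin 2) ℝ) (v : B →₀ ℝ) :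
    phi M b (Phi M a b N v) =
      (N 0 0 * phi M a v + N 0 1 * phi M b v) * kk M a b +
      (N 1 0 * phi M a v + N 1 1 * phi M b v) * 2 := by
  rw [Phi_apply, map_add, map_smul, map_smul, phi_single, phi_single, kk_self,
    smul_eq_mul, smul_eq_mul, kk_symm M b a]

lemma Phi_mul (M : CoxeterMatrix B) (a b : B) (N N' : Matrix (Fin 2) (Fin 2) ℝ) :
    Phi M a b N * Phi M a b N' = Phi M a b (N * !![(2:ℝ), kk M a b; kk M a b, 2] * N') := by
  apply LinearMap.ext; intro v
  rw [Module.End.mul_apply, Phi_apply, phi_Phi_a, phi_Phi_b, Phi_apply]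
  generalize Finsupp.single a (1:ℝ) = ea
  generalize Finsupp.single b (1:ℝ) = eb
  simp [Matrix.mul_apply, Fin.sum_univ_two]
  module

lemma T_eq (M : CoxeterMatrix B) (a b : B) :
    sigma M a * sigma M b = 1 + Phi M a b !![-1, kk M a b; 0, -1] := by
  apply LinearMap.ext; intro v
  rw [Module.End.mul_apply, sigma_apply M a (sigma M b v), phi_sigma, sigma_apply,
    LinearMap.add_apply, Module.End.one_apply, Phi_apply, kk_symm M a b]
  generalize Finsupp.single a (1:ℝ) = ea
  generalize Finsupp.single b (1:ℝ) = eb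
  simp [Matrix.mul_apply, Fin.sum_univ_two]
  module


lemma hrec (θ : ℝ) (y : ℝ) :
    Real.sin (y + 2*θ) = 2*Real.cos θ*Real.sin (y+θ) - Real.sin y := by
  have h1 : Real.sin (y + 2*θ) = Real.sin (y+θ)*Real.cos θ + Real.cos (y+θ)*Real.sin θ := by
    rw [show y + 2*θ = (y+θ)+θ by ring, Real.sin_add]
  have h2 := Real.sin_sub (y+θ) θ
  rw [add_sub_cancel_right] at h2
  rw [h1, h2]; ring

lemma A_pow_trig (θ : ℝ) (k : ℕ) :
    Real.sin θ • (!![4*Real.cos θ^2-1, -(2*Real.cos θ); 2*Real.cos θ, -1] :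
        Matrix (Fin 2) (Fin 2) ℝ) ^ k =
    !![Real.sin ((2*(k:ℝ)+1)*θ), -Real.sin ((2*(k:ℝ))*θ);
       Real.sin ((2*(k:ℝ))*θ), -Real.sin ((2*(k:ℝ)-1)*θ)] := by
  induction k with
  | zero =>
      ext i j
      fin_cases i <;> fin_cases j <;>
        simp [Matrix.one_apply, Real.sin_neg]
  | succ k ih =>
      have E1 : Real.sin ((2*(k:ℝ)+1)*θ)
          = 2*Real.cos θ*Real.sin ((2*(k:ℝ))*θ) - Real.sin ((2*(k:ℝ)-1)*θ) := by
        have h := hrec θ ((2*(k:ℝ)-1)*θ)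
        rw [show (2*(k:ℝ)-1)*θ + 2*θ = (2*(k:ℝ)+1)*θ by ring,
          show (2*(k:ℝ)-1)*θ + θ = (2*(k:ℝ))*θ by ring] at h
        exact h
      have E2 : Real.sin ((2*(k:ℝ)+2)*θ)
          = 2*Real.cos θ*Real.sin ((2*(k:ℝ)+1)*θ) - Real.sin ((2*(k:ℝ))*θ) := by
        have h := hrec θ ((2*(k:ℝ))*θ)
        rw [show (2*(k:ℝ))*θ + 2*θ = (2*(k:ℝ)+2)*θ by ring,
          show (2*(k:ℝ))*θ + θ = (2*(k:ℝ)+1)*θ by ring] at h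
        exact h
      have E3 : Real.sin ((2*(k:ℝ)+3)*θ)
          = 2*Real.cos θ*Real.sin ((2*(k:ℝ)+2)*θ) - Real.sin ((2*(k:ℝ)+1)*θ) := by
        have h := hrec θ ((2*(k:ℝ)+1)*θ)
        rw [show (2*(k:ℝ)+1)*θ + 2*θ = (2*(k:ℝ)+3)*θ by ring,
          show (2*(k:ℝ)+1)*θ + θ = (2*(k:ℝ)+2)*θ by ring] at h
        exact h
      rw [pow_succ', ← mul_smul_comm, ih]
      ext i j
      have harg1 : (2*((k:ℝ)+1)+1)*θ = (2*(k:ℝ)+3)*θ := by ring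
      have harg2 : (2*((k:ℝ)+1))*θ = (2*(k:ℝ)+2)*θ := by ring
      have harg3 : (2*((k:ℝ)+1)-1)*θ = (2*(k:ℝ)+1)*θ := by ring
      fin_cases i <;> fin_cases j <;>
        simp only [Matrix.mul_apply, Fin.sum_univ_two, Nat.cast_add, Nat.cast_one] <;>
        push_cast <;> simp only [harg1, harg2, harg3] <;> simp
      · linear_combination (-1)*E3 + (-2*Real.cos θ)*E2
      · linear_combination E2 + (2*Real.cos θ)*E1
      · linear_combination (-1)*E2
      · linear_combination E1

lemma A_pow_m (m : ℕ) (hm : 2 ≤ m) :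
    (!![4*Real.cos (Real.pi/m)^2-1, -(2*Real.cos (Real.pi/m));
        2*Real.cos (Real.pi/m), -1] : Matrix (Fin 2) (Fin 2) ℝ) ^ m = 1 := by
  set θ := Real.pi / (m:ℝ) with hθ
  have hm0 : (0:ℝ) < m := by positivity
  have hmθ : (m:ℝ) * θ = Real.pi := by
    rw [hθ]; field_simp
  have hθpos : 0 < θ := by rw [hθ]; positivity
  have hθlt : θ < Real.pi := by
    rw [hθ]
    calc Real.pi / (m:ℝ) ≤ Real.pi / 2 := by
          apply div_le_div_of_nonneg_left Real.pi_pos.le (by norm_num)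
          exact_mod_cast hm
      _ < Real.pi := by linarith [Real.pi_pos]
  have hs : Real.sin θ ≠ 0 := ne_of_gt (Real.sin_pos_of_pos_of_lt_pi hθpos hθlt)
  have h := A_pow_trig θ m
  have e1 : (2*(m:ℝ)+1)*θ = θ + 2*Real.pi := by
    have : (2*(m:ℝ))*θ = 2*Real.pi := by rw [mul_assoc, hmθ]
    linarith [this]
  have e2 : (2*(m:ℝ))*θ = 2*Real.pi := by rw [mul_assoc, hmθ]
  have e3 : (2*(m:ℝ)-1)*θ = 2*Real.pi - θ := by
    have : (2*(m:ℝ))*θ = 2*Real.pi := by rw [mul_assoc, hmθ]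
    nlinarith [this]
  rw [e1, e2, e3, Real.sin_add_two_pi, Real.sin_two_pi, Real.sin_two_pi_sub] at h
  have h2 : Real.sin θ • (!![4*Real.cos θ^2-1, -(2*Real.cos θ); 2*Real.cos θ, -1] :
      Matrix (Fin 2) (Fin 2) ℝ) ^ m = Real.sin θ • (1 : Matrix (Fin 2) (Fin 2) ℝ) := by
    rw [h]; ext i j; fin_cases i <;> fin_cases j <;> simp [Matrix.one_apply]
  exact smul_right_injective _ hs h2

lemma sigma_mul_pow (M : CoxeterMatrix B) (a b : B) (hab : a ≠ b) (h0 : M a b ≠ 0) :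
    (sigma M a * sigma M b) ^ (M a b) = 1 := by
  have h1 : M a b ≠ 1 := M.off_diagonal a b hab
  have hm : 2 ≤ M a b := by omega
  set m := M a b with hmdef
  set θ := Real.pi / (m:ℝ) with hθ
  set c := Real.cos θ with hc
  set s := Real.sin θ with hs
  have hκ : kk M a b = -(2*c) := rfl
  have hm0 : (0:ℝ) < m := by positivity
  have hθpos : 0 < θ := by rw [hθ]; positivity
  have hθlt : θ < Real.pi := by
    rw [hθ]
    calc Real.pi / (m:ℝ) ≤ Real.pi / 2 := by
          apply div_le_div_of_nonneg_left Real.pi_pos.le (by norm_num)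
          exact_mod_cast hm
      _ < Real.pi := by linarith [Real.pi_pos]
  have hsne : s ≠ 0 := ne_of_gt (Real.sin_pos_of_pos_of_lt_pi hθpos hθlt)
  have hsc : s^2 + c^2 = 1 := Real.sin_sq_add_cos_sq θ
  have h4s : (4*s^2) ≠ 0 := by positivity
  set A : Matrix (Fin 2) (Fin 2) ℝ := !![4*c^2-1, -(2*c); 2*c, -1] with hA
  set Gm : Matrix (Fin 2) (Fin 2) ℝ := !![(2:ℝ), kk M a b; kk M a b, 2] with hGm
  set X : Matrix (Fin 2) (Fin 2) ℝ := !![-1, kk M a b; 0, -1] with hX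
  set Ginv : Matrix (Fin 2) (Fin 2) ℝ := (4*s^2)⁻¹ • !![(2:ℝ), 2*c; 2*c, 2] with hGi
  have hGG : Gm * Ginv = 1 := by
    rw [hGm, hGi, hκ]
    ext i j
    fin_cases i <;> fin_cases j <;>
      · simp [Matrix.mul_apply, Fin.sum_univ_two, Matrix.one_apply]
        field_simp
        nlinarith [hsc]
  have hGG' : Ginv * Gm = 1 := by
    rw [hGm, hGi, hκ]
    ext i j
    fin_cases i <;> fin_cases j <;>
      · simp [Matrix.mul_apply, Fin.sum_univ_two, Matrix.one_apply]
        field_simp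
        nlinarith [hsc]
  have hXG : X * Gm = A - 1 := by
    rw [hX, hGm, hA, hκ]
    ext i j
    fin_cases i <;> fin_cases j <;>
      simp [Matrix.mul_apply, Fin.sum_univ_two, Matrix.one_apply, Matrix.sub_apply] <;> ring
  have hpow : ∀ k : ℕ, (sigma M a * sigma M b)^k = 1 + Phi M a b ((A^k - 1) * Ginv) := by
    intro k
    induction k with
    | zero => simp [Phi_zero]
    | succ k ih =>
        have hPGm : ((A^k - 1) * Ginv) * Gm = A^k - 1 := by
          rw [mul_assoc, hGG', mul_one]
        rw [pow_succ, ih, T_eq M a b]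
        rw [show (1 + Phi M a b ((A^k - 1) * Ginv)) * (1 + Phi M a b !![-1, kk M a b; 0, -1])
            = 1 + (Phi M a b !![-1, kk M a b; 0, -1] + Phi M a b ((A^k - 1) * Ginv)
              + Phi M a b ((A^k - 1) * Ginv) * Phi M a b !![-1, kk M a b; 0, -1]) by noncomm_ring]
        rw [Phi_mul, ← Phi_add, ← Phi_add]
        congr 2
        have hXX : !![(-1:ℝ), kk M a b; 0, -1] = X := rfl
        rw [hXX]
        calc X + (A^k - 1) * Ginv + (A ^ k - 1) * Ginv * Gm * X
            = (X + (A^k - 1) * Ginv + (A^k - 1) * X) * (Gm * Ginv) := by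
              rw [hPGm, hGG, mul_one]
          _ = (X * Gm + (A^k - 1) * (Ginv * Gm) + (A^k - 1) * (X * Gm)) * Ginv := by
              noncomm_ring
          _ = ((A - 1) + (A^k - 1) + (A^k - 1) * (A - 1)) * Ginv := by
              rw [hXG, hGG', mul_one]
          _ = (A^(k+1) - 1) * Ginv := by
              rw [pow_succ]; noncomm_ring
  have hAm : A ^ m = 1 := A_pow_m m hm
  rw [hpow m, hAm, sub_self, Matrix.zero_mul, Phi_zero, add_zero]

lemma sigma_liftable (M : CoxeterMatrix B) : M.IsLiftable (fun a => sigma M a) := by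
  intro a b
  by_cases hab : a = b
  · subst hab
    rw [M.diagonal, pow_one]
    exact sigma_sq M a
  · by_cases h0 : M a b = 0
    · rw [h0, pow_zero]
    · exact sigma_mul_pow M a b hab h0

lemma commute_M_eq_two {W : Type*} [Group W] {M : CoxeterMatrix B} (cs : CoxeterSystem M W)
    {i j : B} (hij : i ≠ j) (h : Commute (cs.simple i) (cs.simple j)) : M i j = 2 := by
  have hlift := sigma_liftable M
  have hcomm : sigma M i * sigma M j = sigma M j * sigma M i := by
    have h1 : cs.lift ⟨fun a => sigma M a, hlift⟩ (cs.simple i * cs.simple j)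
        = cs.lift ⟨fun a => sigma M a, hlift⟩ (cs.simple j * cs.simple i) := by rw [h.eq]
    rwa [map_mul, map_mul, cs.lift_apply_simple, cs.lift_apply_simple] at h1
  have h2 := congrArg (fun (f : Module.End ℝ (B →₀ ℝ)) => (f (Finsupp.single i 1)) j) hcomm
  simp only [Module.End.mul_apply, sigma_apply, map_sub, map_smul, phi_single, kk_self,
    Finsupp.sub_apply, Finsupp.smul_apply, Finsupp.single_apply, smul_eq_mul] at h2
  simp only [Finsupp.single_apply, Finsupp.single_eq_of_ne hij, Finsupp.single_eq_same,
    if_neg hij, if_true] at h2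
  have hker : kk M j i = 0 := by linarith
  have hcos : Real.cos (Real.pi / (M i j : ℝ)) = 0 := by
    have := hker
    rw [kk_symm M j i, kk] at this
    linarith
  have h1 : M i j ≠ 1 := M.off_diagonal i j hij
  have h0 : M i j ≠ 0 := by
    intro h0
    rw [h0] at hcos
    norm_num at hcos
  have hge : 2 ≤ M i j := by omega
  by_contra hne
  have hgt : 2 < M i j := by omega
  have hgt' : (2:ℝ) < (M i j : ℝ) := by exact_mod_cast hgt
  have hpos : 0 < Real.pi / (M i j : ℝ) := by positivity
  have hlt : Real.pi / (M i j : ℝ) < Real.pi / 2 :=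
    div_lt_div_of_pos_left Real.pi_pos (by norm_num) hgt'
  have := Real.cos_pos_of_mem_Ioo ⟨by linarith, hlt⟩
  linarith



section Part2
variable {B : Type*} {W : Type*} [Group W] {M : CoxeterMatrix B}
variable (cs : CoxeterSystem M W)

lemma simple_mem_parabolic {I : Set B} {i : B} (hi : i ∈ I) :
    cs.simple i ∈ parabolic cs I :=
  Subgroup.subset_closure ⟨i, hi, rfl⟩

lemma parabolic_mono {I J : Set B} (h : I ⊆ J) : parabolic cs I ≤ parabolic cs J :=
  Subgroup.closure_mono (Set.image_mono h)

lemma parabolic_univ : parabolic cs Set.univ = ⊤ := by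
  rw [parabolic, Set.image_univ, cs.subgroup_closure_range_simple]

lemma simple_ne_one (i : B) : cs.simple i ≠ 1 := by
  intro h
  have h1 := cs.length_simple i
  rw [h, cs.length_one] at h1
  exact one_ne_zero h1.symm

variable {K1 K2 : Set B}

section Proj
variable (hU : K1 ∪ K2 = Set.univ) (hD : K1 ∩ K2 = ∅)
variable (hcomm : ∀ x ∈ parabolic cs K1, ∀ y ∈ parabolic cs K2, Commute x y)
variable (φ1 φ2 : W →* W)
variable (hs1 : ∀ i ∈ K1, φ1 (cs.simple i) = cs.simple i)
variable (hk1 : ∀ i ∈ K2, φ1 (cs.simple i) = 1)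
variable (hs2 : ∀ i ∈ K2, φ2 (cs.simple i) = cs.simple i)
variable (hk2 : ∀ i ∈ K1, φ2 (cs.simple i) = 1)

include hU in
lemma mem_K2_of_not_K1 {i : B} (h : i ∉ K1) : i ∈ K2 := by
  have h2 : i ∈ K1 ∪ K2 := by rw [hU]; trivial
  exact ((Set.mem_union _ _ _).mp h2).resolve_left h

include hD in
lemma not_K2_of_K1 {i : B} (h : i ∈ K1) : i ∉ K2 := by
  intro h2
  have : i ∈ K1 ∩ K2 := ⟨h, h2⟩
  rw [hD] at this
  exact this

include hU hs1 hk1 in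
lemma phi_mem_inter (J : Set B) {w : W} (hw : w ∈ parabolic cs J) :
    φ1 w ∈ parabolic cs (J ∩ K1) := by
  induction hw using Subgroup.closure_induction with
  | mem y hy =>
      obtain ⟨i, hi, rfl⟩ := hy
      by_cases h1 : i ∈ K1
      · rw [hs1 i h1]
        exact simple_mem_parabolic cs ⟨hi, h1⟩
      · rw [hk1 i (mem_K2_of_not_K1 hU h1)]
        exact one_mem _
  | one => simp [one_mem]
  | mul a b _ _ ha hb => rw [map_mul]; exact mul_mem ha hb
  | inv a _ ha => rw [map_inv]; exact inv_mem ha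

include hU hs1 hk1 in
lemma phi_mem (w : W) : φ1 w ∈ parabolic cs K1 := by
  have hw : w ∈ parabolic cs Set.univ := by rw [parabolic_univ]; trivial
  have := phi_mem_inter cs hU φ1 hs1 hk1 Set.univ hw
  rwa [Set.univ_inter] at this

include hs1 in
lemma phi_fix {w : W} (hw : w ∈ parabolic cs K1) : φ1 w = w := by
  induction hw using Subgroup.closure_induction with
  | mem y hy => obtain ⟨i, hi, rfl⟩ := hy; exact hs1 i hi
  | one => exact map_one φ1
  | mul a b _ _ ha hb => rw [map_mul, ha, hb]
  | inv a _ ha => rw [map_inv, ha]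

include hk1 in
lemma phi_kill {w : W} (hw : w ∈ parabolic cs K2) : φ1 w = 1 := by
  induction hw using Subgroup.closure_induction with
  | mem y hy => obtain ⟨i, hi, rfl⟩ := hy; exact hk1 i hi
  | one => exact map_one φ1
  | mul a b _ _ ha hb => rw [map_mul, ha, hb, one_mul]
  | inv a _ ha => rw [map_inv, ha, inv_one]

include hU hD hcomm hs1 hk1 hs2 hk2 in
lemma phi_decomp (w : W) : φ1 w * φ2 w = w := by
  induction w using cs.simple_induction with
  | simple i =>
      by_cases h1 : i ∈ K1
      · rw [hs1 i h1, hk2 i h1, mul_one]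
      · have h2 := mem_K2_of_not_K1 hU h1
        rw [hk1 i h2, hs2 i h2, one_mul]
  | one => simp
  | mul w w' hw hw' =>
      have hc : Commute (φ1 w') (φ2 w) :=
        hcomm _ (phi_mem cs hU φ1 hs1 hk1 w') _ (phi_mem cs (by rw [Set.union_comm]; exact hU) φ2 hs2 hk2 w)
      rw [map_mul, map_mul]
      calc φ1 w * φ1 w' * (φ2 w * φ2 w')
          = φ1 w * (φ1 w' * φ2 w) * φ2 w' := by group
        _ = φ1 w * (φ2 w * φ1 w') * φ2 w' := by rw [hc.eq]
        _ = (φ1 w * φ2 w) * (φ1 w' * φ2 w') := by group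
        _ = w * w' := by rw [hw, hw']

set_option linter.unusedSectionVars false in
include hU hs2 hk2 in
lemma simple_mem_K1_of_mem {j : B} (h : cs.simple j ∈ parabolic cs K1) : j ∈ K1 := by
  by_contra hj
  have h2 := mem_K2_of_not_K1 hU hj
  have e1 : φ2 (cs.simple j) = cs.simple j := hs2 j h2
  have e2 : φ2 (cs.simple j) = 1 := phi_kill cs φ2 hk2 h
  exact simple_ne_one cs j (e1.symm.trans e2)


lemma conj_prod {G : Type*} [Group G] (u1 u2 a b : G) (h1 : Commute a u2)
    (h2 : Commute (u2*b*u2⁻¹) u1⁻¹) :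
    (u1*u2)*(a*b)*(u1*u2)⁻¹ = (u1*a*u1⁻¹)*(u2*b*u2⁻¹) := by
  calc (u1*u2)*(a*b)*(u1*u2)⁻¹ = u1*(u2*a)*(b*u2⁻¹)*u1⁻¹ := by group
    _ = u1*(a*u2)*(b*u2⁻¹)*u1⁻¹ := by rw [h1.symm.eq]
    _ = u1*a*((u2*b*u2⁻¹)*u1⁻¹) := by group
    _ = u1*a*(u1⁻¹*(u2*b*u2⁻¹)) := by rw [h2.eq]
    _ = (u1*a*u1⁻¹)*(u2*b*u2⁻¹) := by group

lemma conj_eq_of_commute {G : Type*} [Group G] {u a : G} (h : Commute u a) :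
    u * a * u⁻¹ = a := by
  rw [h.eq]; group

include hU hD hcomm hs1 hk1 hs2 hk2 in
lemma isConj_iff_proj (w x : W) :
    IsConj w x ↔ (∃ u ∈ parabolic cs K1, u * φ1 w * u⁻¹ = φ1 x) ∧
      (∃ u ∈ parabolic cs K2, u * φ2 w * u⁻¹ = φ2 x) := by
  have hU' : K2 ∪ K1 = Set.univ := by rw [Set.union_comm]; exact hU
  constructor
  · intro h
    obtain ⟨c, hc⟩ := isConj_iff.mp h
    constructor
    · exact ⟨φ1 c, phi_mem cs hU φ1 hs1 hk1 c, by rw [← hc]; simp [map_mul]⟩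
    · exact ⟨φ2 c, phi_mem cs hU' φ2 hs2 hk2 c, by rw [← hc]; simp [map_mul]⟩
  · rintro ⟨⟨u1, hu1, h1⟩, ⟨u2, hu2, h2⟩⟩
    rw [isConj_iff]
    refine ⟨u1 * u2, ?_⟩
    have c1 : Commute (φ1 w) u2 := hcomm _ (phi_mem cs hU φ1 hs1 hk1 w) _ hu2
    have c2 : Commute (u2 * φ2 w * u2⁻¹) u1⁻¹ :=
      (hcomm _ (inv_mem hu1) _ (mul_mem (mul_mem hu2 (phi_mem cs hU' φ2 hs2 hk2 w)) (inv_mem hu2))).symm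
    calc (u1*u2)*w*(u1*u2)⁻¹ = (u1*u2)*(φ1 w * φ2 w)*(u1*u2)⁻¹ := by
          rw [phi_decomp cs hU hD hcomm φ1 φ2 hs1 hk1 hs2 hk2 w]
      _ = (u1*(φ1 w)*u1⁻¹)*(u2*(φ2 w)*u2⁻¹) := conj_prod u1 u2 _ _ c1 c2
      _ = φ1 x * φ2 x := by rw [h1, h2]
      _ = x := phi_decomp cs hU hD hcomm φ1 φ2 hs1 hk1 hs2 hk2 x

include hU hD hcomm hs1 hk1 hs2 hk2 in
lemma conj_simple_K1 {i : B} (hi : i ∈ K1) (w : W) :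
    w * cs.simple i * w⁻¹ = φ1 w * cs.simple i * (φ1 w)⁻¹ := by
  have hU' : K2 ∪ K1 = Set.univ := by rw [Set.union_comm]; exact hU
  have hc : Commute (φ2 w) (cs.simple i) :=
    (hcomm _ (simple_mem_parabolic cs hi) _ (phi_mem cs hU' φ2 hs2 hk2 w)).symm
  conv_lhs => rw [← phi_decomp cs hU hD hcomm φ1 φ2 hs1 hk1 hs2 hk2 w]
  calc (φ1 w * φ2 w) * cs.simple i * (φ1 w * φ2 w)⁻¹
      = φ1 w * (φ2 w * cs.simple i * (φ2 w)⁻¹) * (φ1 w)⁻¹ := by group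
    _ = φ1 w * cs.simple i * (φ1 w)⁻¹ := by rw [conj_eq_of_commute hc]


include hU hD hcomm hs1 hk1 hs2 hk2 in
lemma conjSubsets_proj1 {I J : Set B} (h : ConjSubsets cs I J) :
    ConjSubsetsIn cs K1 (I ∩ K1) (J ∩ K1) := by
  have hU' : K2 ∪ K1 = Set.univ := by rw [Set.union_comm]; exact hU
  have hD' : K2 ∩ K1 = ∅ := by rw [Set.inter_comm]; exact hD
  have hcomm' : ∀ x ∈ parabolic cs K2, ∀ y ∈ parabolic cs K1, Commute x y :=
    fun x hx y hy => (hcomm y hy x hx).symm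
  obtain ⟨w, hw⟩ := h
  refine ⟨φ1 w, phi_mem cs hU φ1 hs1 hk1 w, ?_⟩
  ext x
  constructor
  · rintro ⟨y, ⟨i, ⟨hiI, hiK1⟩, rfl⟩, rfl⟩
    have e1 : φ1 w * cs.simple i * (φ1 w)⁻¹ = w * cs.simple i * w⁻¹ :=
      (conj_simple_K1 cs hU hD hcomm φ1 φ2 hs1 hk1 hs2 hk2 hiK1 w).symm
    have hmem : w * cs.simple i * w⁻¹ ∈ cs.simple '' J := by
      rw [← hw]
      exact ⟨cs.simple i, ⟨i, hiI, rfl⟩, rfl⟩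
    obtain ⟨j, hjJ, hj⟩ := hmem
    have hjK1 : j ∈ K1 := by
      apply simple_mem_K1_of_mem cs hU φ2 hs2 hk2
      rw [hj, ← e1]
      exact mul_mem (mul_mem (phi_mem cs hU φ1 hs1 hk1 w) (simple_mem_parabolic cs hiK1))
        (inv_mem (phi_mem cs hU φ1 hs1 hk1 w))
    exact ⟨j, ⟨hjJ, hjK1⟩, by rw [hj, ← e1]⟩
  · rintro ⟨j, ⟨hjJ, hjK1⟩, rfl⟩
    have hmem : cs.simple j ∈ (fun x => w * x * w⁻¹) '' (cs.simple '' I) := by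
      rw [hw]
      exact ⟨j, hjJ, rfl⟩
    obtain ⟨y, ⟨i, hiI, rfl⟩, hy⟩ := hmem
    simp only at hy
    have hiK1 : i ∈ K1 := by
      by_contra hi1
      have hiK2 := mem_K2_of_not_K1 hU hi1
      have e2 : w * cs.simple i * w⁻¹ = φ2 w * cs.simple i * (φ2 w)⁻¹ :=
        conj_simple_K1 cs hU' hD' hcomm' φ2 φ1 hs2 hk2 hs1 hk1 hiK2 w
      have : cs.simple j ∈ parabolic cs K2 := by
        rw [← hy]
        rw [e2]
        exact mul_mem (mul_mem (phi_mem cs hU' φ2 hs2 hk2 w) (simple_mem_parabolic cs hiK2))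
          (inv_mem (phi_mem cs hU' φ2 hs2 hk2 w))
      have hjK2 : j ∈ K2 := simple_mem_K1_of_mem cs hU' φ1 hs1 hk1 this
      exact not_K2_of_K1 hD hjK1 hjK2
    refine ⟨cs.simple i, ⟨i, ⟨hiI, hiK1⟩, rfl⟩, ?_⟩
    simp only
    rw [← conj_simple_K1 cs hU hD hcomm φ1 φ2 hs1 hk1 hs2 hk2 hiK1 w]
    exact hy

include hU hD hcomm in
lemma conjSubsets_of_proj {I J : Set B}
    (h1 : ConjSubsetsIn cs K1 (I ∩ K1) (J ∩ K1))
    (h2 : ConjSubsetsIn cs K2 (I ∩ K2) (J ∩ K2)) :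
    ConjSubsets cs I J := by
  obtain ⟨w1, hw1, e1⟩ := h1
  obtain ⟨w2, hw2, e2⟩ := h2
  refine ⟨w1 * w2, ?_⟩
  have key1 : ∀ i ∈ K1, (w1*w2) * cs.simple i * (w1*w2)⁻¹ = w1 * cs.simple i * w1⁻¹ := by
    intro i hi
    have hc : Commute w2 (cs.simple i) := (hcomm _ (simple_mem_parabolic cs hi) _ hw2).symm
    calc (w1*w2) * cs.simple i * (w1*w2)⁻¹
        = w1 * (w2 * cs.simple i * w2⁻¹) * w1⁻¹ := by group
      _ = w1 * cs.simple i * w1⁻¹ := by rw [conj_eq_of_commute hc]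
  have key2 : ∀ i ∈ K2, (w1*w2) * cs.simple i * (w1*w2)⁻¹ = w2 * cs.simple i * w2⁻¹ := by
    intro i hi
    have hc2 : Commute w1 (w2 * cs.simple i * w2⁻¹) :=
      hcomm _ hw1 _ (mul_mem (mul_mem hw2 (simple_mem_parabolic cs hi)) (inv_mem hw2))
    calc (w1*w2) * cs.simple i * (w1*w2)⁻¹
        = w1 * (w2 * cs.simple i * w2⁻¹) * w1⁻¹ := by group
      _ = w2 * cs.simple i * w2⁻¹ := conj_eq_of_commute hc2
  ext x
  constructor
  · rintro ⟨y, ⟨i, hiI, rfl⟩, rfl⟩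
    by_cases hi1 : i ∈ K1
    · have : w1 * cs.simple i * w1⁻¹ ∈ cs.simple '' (J ∩ K1) := by
        rw [← e1]
        exact ⟨cs.simple i, ⟨i, ⟨hiI, hi1⟩, rfl⟩, rfl⟩
      obtain ⟨j, hj, hjx⟩ := this
      exact ⟨j, hj.1, by simp only; rw [key1 i hi1]; exact hjx⟩
    · have hi2 := mem_K2_of_not_K1 hU hi1
      have : w2 * cs.simple i * w2⁻¹ ∈ cs.simple '' (J ∩ K2) := by
        rw [← e2]
        exact ⟨cs.simple i, ⟨i, ⟨hiI, hi2⟩, rfl⟩, rfl⟩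
      obtain ⟨j, hj, hjx⟩ := this
      exact ⟨j, hj.1, by simp only; rw [key2 i hi2]; exact hjx⟩
  · rintro ⟨j, hjJ, rfl⟩
    by_cases hj1 : j ∈ K1
    · have : cs.simple j ∈ (fun x => w1 * x * w1⁻¹) '' (cs.simple '' (I ∩ K1)) := by
        rw [e1]; exact ⟨j, ⟨hjJ, hj1⟩, rfl⟩
      obtain ⟨y, ⟨i, ⟨hiI, hiK1⟩, rfl⟩, hy⟩ := this
      refine ⟨cs.simple i, ⟨i, hiI, rfl⟩, ?_⟩
      simp only at hy ⊢
      rw [key1 i hiK1]; exact hy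
    · have hj2 := mem_K2_of_not_K1 hU hj1
      have : cs.simple j ∈ (fun x => w2 * x * w2⁻¹) '' (cs.simple '' (I ∩ K2)) := by
        rw [e2]; exact ⟨j, ⟨hjJ, hj2⟩, rfl⟩
      obtain ⟨y, ⟨i, ⟨hiI, hiK2⟩, rfl⟩, hy⟩ := this
      refine ⟨cs.simple i, ⟨i, hiI, rfl⟩, ?_⟩
      simp only at hy ⊢
      rw [key2 i hiK2]; exact hy


include hU hD hcomm hs1 hk1 hs2 hk2 in
lemma cusp_proj1 {J : Set B} {w : W}
    (h : IsCuspidalClass cs J ({x | IsConj w x} ∩ (parabolic cs J : Set W))) :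
    IsCuspidalClass cs (J ∩ K1)
      ({x : W | ∃ u ∈ parabolic cs K1, u * φ1 w * u⁻¹ = x} ∩
        (parabolic cs (J ∩ K1) : Set W)) := by
  have hU' : K2 ∪ K1 = Set.univ := by rw [Set.union_comm]; exact hU
  have hsubJ1 : parabolic cs (J∩K1) ≤ parabolic cs K1 :=
    parabolic_mono cs Set.inter_subset_right
  have hsubJ2 : parabolic cs (J∩K2) ≤ parabolic cs K2 :=
    parabolic_mono cs Set.inter_subset_right
  have hsubJ1' : parabolic cs (J∩K1) ≤ parabolic cs J :=
    parabolic_mono cs Set.inter_subset_left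
  have hsubJ2' : parabolic cs (J∩K2) ≤ parabolic cs J :=
    parabolic_mono cs Set.inter_subset_left
  obtain ⟨⟨v, hvJ, hC⟩, hcusp⟩ := h
  have hvmem : v ∈ {x | IsConj w x} ∩ (parabolic cs J : Set W) := by
    rw [hC]; exact ⟨1, one_mem _, by group⟩
  have hconj : IsConj w v := hvmem.1
  obtain ⟨⟨u1, hu1, hu1e⟩, ⟨u2, hu2, hu2e⟩⟩ :=
    (isConj_iff_proj cs hU hD hcomm φ1 φ2 hs1 hk1 hs2 hk2 w v).mp hconj
  have hv1 : φ1 v ∈ parabolic cs (J∩K1) := phi_mem_inter cs hU φ1 hs1 hk1 J hvJ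
  have hv2 : φ2 v ∈ parabolic cs (J∩K2) := phi_mem_inter cs hU' φ2 hs2 hk2 J hvJ
  have hXconj : ∀ x : W, x ∈ parabolic cs K1 →
      (∃ u ∈ parabolic cs K1, u * φ1 w * u⁻¹ = x) → IsConj w (x * φ2 v) := by
    rintro x hxK1 ⟨u, hu, hue⟩
    apply (isConj_iff_proj cs hU hD hcomm φ1 φ2 hs1 hk1 hs2 hk2 w _).mpr
    have e1 : φ1 (x * φ2 v) = x := by
      rw [map_mul, phi_fix cs φ1 hs1 hxK1,
        phi_kill cs φ1 hk1 (hsubJ2 hv2), mul_one]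
    have e2 : φ2 (x * φ2 v) = φ2 v := by
      rw [map_mul, phi_kill cs φ2 hk2 hxK1,
        phi_fix cs φ2 hs2 (hsubJ2 hv2), one_mul]
    exact ⟨⟨u, hu, by rw [hue, e1]⟩, ⟨u2, hu2, by rw [hu2e, e2]⟩⟩
  constructor
  · refine ⟨φ1 v, hv1, ?_⟩
    ext x
    constructor
    · rintro ⟨⟨u, hu, rfl⟩, hxJ1⟩
      have hxK1 : u * φ1 w * u⁻¹ ∈ parabolic cs K1 := hsubJ1 hxJ1
      have hXc : IsConj w ((u * φ1 w * u⁻¹) * φ2 v) := hXconj _ hxK1 ⟨u, hu, rfl⟩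
      have hXJ : (u * φ1 w * u⁻¹) * φ2 v ∈ parabolic cs J :=
        mul_mem (hsubJ1' hxJ1) (hsubJ2' hv2)
      have hXmem : (u * φ1 w * u⁻¹) * φ2 v ∈ {x | IsConj w x} ∩ (parabolic cs J : Set W) :=
        ⟨hXc, hXJ⟩
      rw [hC] at hXmem
      obtain ⟨U, hUJ, hUe⟩ := hXmem
      refine ⟨φ1 U, phi_mem_inter cs hU φ1 hs1 hk1 J hUJ, ?_⟩
      have hφ := congrArg φ1 hUe
      rw [map_mul, map_mul, map_inv] at hφ
      have hφX : φ1 ((u * φ1 w * u⁻¹) * φ2 v) = u * φ1 w * u⁻¹ := by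
        rw [map_mul, phi_fix cs φ1 hs1 hxK1,
          phi_kill cs φ1 hk1 (hsubJ2 hv2), mul_one]
      rwa [hφX] at hφ
    · rintro ⟨a, haJ1, rfl⟩
      refine ⟨⟨a * u1, mul_mem (hsubJ1 haJ1) hu1, by rw [← hu1e]; group⟩, ?_⟩
      exact mul_mem (mul_mem haJ1 hv1) (inv_mem haJ1)
  · intro K hK
    rw [Set.eq_empty_iff_forall_notMem]
    rintro x ⟨⟨⟨u, hu, rfl⟩, hxJ1⟩, hxK⟩
    have hKJ1 : K ⊆ J ∩ K1 := subset_of_ssubset hK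
    have hxK1 : u * φ1 w * u⁻¹ ∈ parabolic cs K1 := hsubJ1 hxJ1
    have hXc : IsConj w ((u * φ1 w * u⁻¹) * φ2 v) := hXconj _ hxK1 ⟨u, hu, rfl⟩
    have hXJ : (u * φ1 w * u⁻¹) * φ2 v ∈ parabolic cs J :=
      mul_mem (hsubJ1' hxJ1) (hsubJ2' hv2)
    have hXK : (u * φ1 w * u⁻¹) * φ2 v ∈ parabolic cs (K ∪ (J ∩ K2)) :=
      mul_mem (parabolic_mono cs Set.subset_union_left hxK)
        (parabolic_mono cs Set.subset_union_right hv2)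
    have hss : K ∪ (J ∩ K2) ⊂ J := by
      obtain ⟨j, hjJ1, hjK⟩ := Set.exists_of_ssubset hK
      rw [Set.ssubset_def]
      constructor
      · intro y hy
        rcases hy with hy | hy
        · exact (hKJ1 hy).1
        · exact hy.1
      · intro hJsub
        rcases hJsub hjJ1.1 with hj | hj
        · exact hjK hj
        · exact not_K2_of_K1 hD hjJ1.2 hj.2
    have hemp := hcusp _ hss
    rw [Set.eq_empty_iff_forall_notMem] at hemp
    exact hemp _ ⟨⟨hXc, hXJ⟩, hXK⟩

include hU hD hcomm hs1 hk1 hs2 hk2 in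
lemma cusp_of_proj {J : Set B} {w : W}
    (h1 : IsCuspidalClass cs (J ∩ K1)
      ({x : W | ∃ u ∈ parabolic cs K1, u * φ1 w * u⁻¹ = x} ∩
        (parabolic cs (J ∩ K1) : Set W)))
    (h2 : IsCuspidalClass cs (J ∩ K2)
      ({x : W | ∃ u ∈ parabolic cs K2, u * φ2 w * u⁻¹ = x} ∩
        (parabolic cs (J ∩ K2) : Set W))) :
    IsCuspidalClass cs J ({x | IsConj w x} ∩ (parabolic cs J : Set W)) := by
  have hU' : K2 ∪ K1 = Set.univ := by rw [Set.union_comm]; exact hU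
  have hsubJ1 : parabolic cs (J∩K1) ≤ parabolic cs K1 :=
    parabolic_mono cs Set.inter_subset_right
  have hsubJ2 : parabolic cs (J∩K2) ≤ parabolic cs K2 :=
    parabolic_mono cs Set.inter_subset_right
  have hsubJ1' : parabolic cs (J∩K1) ≤ parabolic cs J :=
    parabolic_mono cs Set.inter_subset_left
  have hsubJ2' : parabolic cs (J∩K2) ≤ parabolic cs J :=
    parabolic_mono cs Set.inter_subset_left
  obtain ⟨⟨v1, hv1J, hC1⟩, hcusp1⟩ := h1
  obtain ⟨⟨v2, hv2J, hC2⟩, hcusp2⟩ := h2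
  have hv1mem : v1 ∈ {x : W | ∃ u ∈ parabolic cs K1, u * φ1 w * u⁻¹ = x} ∩
      (parabolic cs (J ∩ K1) : Set W) := by
    rw [hC1]; exact ⟨1, one_mem _, by group⟩
  have hv2mem : v2 ∈ {x : W | ∃ u ∈ parabolic cs K2, u * φ2 w * u⁻¹ = x} ∩
      (parabolic cs (J ∩ K2) : Set W) := by
    rw [hC2]; exact ⟨1, one_mem _, by group⟩
  obtain ⟨⟨a1, ha1, ha1e⟩, hv1J1⟩ := hv1mem
  obtain ⟨⟨a2, ha2, ha2e⟩, hv2J2⟩ := hv2mem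
  have hvJ : v1 * v2 ∈ parabolic cs J := mul_mem (hsubJ1' hv1J1) (hsubJ2' hv2J2)
  have hφ1v : φ1 (v1 * v2) = v1 := by
    rw [map_mul, phi_fix cs φ1 hs1 (hsubJ1 hv1J1),
      phi_kill cs φ1 hk1 (hsubJ2 hv2J2), mul_one]
  have hφ2v : φ2 (v1 * v2) = v2 := by
    rw [map_mul, phi_kill cs φ2 hk2 (hsubJ1 hv1J1),
      phi_fix cs φ2 hs2 (hsubJ2 hv2J2), one_mul]
  have hconj : IsConj w (v1 * v2) :=
    (isConj_iff_proj cs hU hD hcomm φ1 φ2 hs1 hk1 hs2 hk2 w _).mpr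
      ⟨⟨a1, ha1, by rw [hφ1v, ha1e]⟩, ⟨a2, ha2, by rw [hφ2v, ha2e]⟩⟩
  constructor
  · refine ⟨v1 * v2, hvJ, ?_⟩
    ext x
    constructor
    · rintro ⟨hxc, hxJ⟩
      obtain ⟨⟨b1, hb1, hb1e⟩, ⟨b2, hb2, hb2e⟩⟩ :=
        (isConj_iff_proj cs hU hD hcomm φ1 φ2 hs1 hk1 hs2 hk2 w x).mp hxc
      have hx1 : φ1 x ∈ {x : W | ∃ u ∈ parabolic cs K1, u * φ1 w * u⁻¹ = x} ∩
          (parabolic cs (J ∩ K1) : Set W) :=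
        ⟨⟨b1, hb1, hb1e⟩, phi_mem_inter cs hU φ1 hs1 hk1 J hxJ⟩
      have hx2 : φ2 x ∈ {x : W | ∃ u ∈ parabolic cs K2, u * φ2 w * u⁻¹ = x} ∩
          (parabolic cs (J ∩ K2) : Set W) :=
        ⟨⟨b2, hb2, hb2e⟩, phi_mem_inter cs hU' φ2 hs2 hk2 J hxJ⟩
      rw [hC1] at hx1
      rw [hC2] at hx2
      obtain ⟨c1, hc1, hc1e⟩ := hx1
      obtain ⟨c2, hc2, hc2e⟩ := hx2
      refine ⟨c1 * c2, mul_mem (hsubJ1' hc1) (hsubJ2' hc2), ?_⟩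
      have hcp := conj_prod c1 c2 v1 v2
        (hcomm _ (hsubJ1 hv1J1) _ (hsubJ2 hc2))
        ((hcomm _ (inv_mem (hsubJ1 hc1)) _
          (mul_mem (mul_mem (hsubJ2 hc2) (hsubJ2 hv2J2)) (inv_mem (hsubJ2 hc2)))).symm)
      rw [hcp, hc1e, hc2e, phi_decomp cs hU hD hcomm φ1 φ2 hs1 hk1 hs2 hk2 x]
    · rintro ⟨U, hUJ, rfl⟩
      exact ⟨hconj.trans (isConj_iff.mpr ⟨U, rfl⟩),
        mul_mem (mul_mem hUJ hvJ) (inv_mem hUJ)⟩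
  · intro K hK
    rw [Set.eq_empty_iff_forall_notMem]
    rintro x ⟨⟨hxc, hxJ⟩, hxK⟩
    have hKJ : K ⊆ J := subset_of_ssubset hK
    have hKdec : K = (K ∩ K1) ∪ (K ∩ K2) := by
      rw [← Set.inter_union_distrib_left, hU, Set.inter_univ]
    have hJdec : J = (J ∩ K1) ∪ (J ∩ K2) := by
      rw [← Set.inter_union_distrib_left, hU, Set.inter_univ]
    have hcase : K ∩ K1 ≠ J ∩ K1 ∨ K ∩ K2 ≠ J ∩ K2 := by
      by_contra hcon
      push_neg at hcon
      apply ne_of_ssubset hK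
      rw [hKdec, hcon.1, hcon.2, ← hJdec]
    obtain ⟨⟨b1, hb1, hb1e⟩, ⟨b2, hb2, hb2e⟩⟩ :=
      (isConj_iff_proj cs hU hD hcomm φ1 φ2 hs1 hk1 hs2 hk2 w x).mp hxc
    rcases hcase with hne | hne
    · have hss : K ∩ K1 ⊂ J ∩ K1 :=
        ssubset_of_subset_of_ne (Set.inter_subset_inter_left _ hKJ) hne
      have hmem : φ1 x ∈ ({x : W | ∃ u ∈ parabolic cs K1, u * φ1 w * u⁻¹ = x} ∩
          (parabolic cs (J ∩ K1) : Set W)) ∩ (parabolic cs (K ∩ K1) : Set W) :=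
        ⟨⟨⟨b1, hb1, hb1e⟩, phi_mem_inter cs hU φ1 hs1 hk1 J hxJ⟩,
          phi_mem_inter cs hU φ1 hs1 hk1 K hxK⟩
      rw [hcusp1 _ hss] at hmem
      exact hmem
    · have hss : K ∩ K2 ⊂ J ∩ K2 :=
        ssubset_of_subset_of_ne (Set.inter_subset_inter_left _ hKJ) hne
      have hmem : φ2 x ∈ ({x : W | ∃ u ∈ parabolic cs K2, u * φ2 w * u⁻¹ = x} ∩
          (parabolic cs (J ∩ K2) : Set W)) ∩ (parabolic cs (K ∩ K2) : Set W) :=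
        ⟨⟨⟨b2, hb2, hb2e⟩, phi_mem_inter cs hU' φ2 hs2 hk2 J hxJ⟩,
          phi_mem_inter cs hU' φ2 hs2 hk2 K hxK⟩
      rw [hcusp2 _ hss] at hmem
      exact hmem


include hU hD hcomm hs1 hk1 hs2 hk2 in
lemma isElementOf_iff (J : Set B) (w : W) :
    IsElementOf cs J w ↔
      IsElementIn cs K1 (J ∩ K1) (φ1 w) ∧ IsElementIn cs K2 (J ∩ K2) (φ2 w) := by
  have hU' : K2 ∪ K1 = Set.univ := by rw [Set.union_comm]; exact hU
  have hD' : K2 ∩ K1 = ∅ := by rw [Set.inter_comm]; exact hD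
  have hcomm' : ∀ x ∈ parabolic cs K2, ∀ y ∈ parabolic cs K1, Commute x y :=
    fun x hx y hy => (hcomm y hy x hx).symm
  constructor
  · intro h
    exact ⟨⟨phi_mem cs hU φ1 hs1 hk1 w,
        cusp_proj1 cs hU hD hcomm φ1 φ2 hs1 hk1 hs2 hk2 h⟩,
      ⟨phi_mem cs hU' φ2 hs2 hk2 w,
        cusp_proj1 cs hU' hD' hcomm' φ2 φ1 hs2 hk2 hs1 hk1 h⟩⟩
  · rintro ⟨⟨_, h1⟩, ⟨_, h2⟩⟩
    exact cusp_of_proj cs hU hD hcomm φ1 φ2 hs1 hk1 hs2 hk2 h1 h2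

end Proj

lemma commute_parabolic_of_simple {K1 K2 : Set B}
    (hcomm : ∀ i ∈ K1, ∀ j ∈ K2, Commute (cs.simple i) (cs.simple j)) :
    ∀ x ∈ parabolic cs K1, ∀ y ∈ parabolic cs K2, Commute x y := by
  intro x hx
  induction hx using Subgroup.closure_induction with
  | mem a ha =>
      obtain ⟨i, hi, rfl⟩ := ha
      intro y hy
      induction hy using Subgroup.closure_induction with
      | mem b hb =>
          obtain ⟨j, hj, rfl⟩ := hb
          exact hcomm i hi j hj
      | one => exact Commute.one_right _
      | mul a' b' _ _ ha' hb' => exact Commute.mul_right ha' hb'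
      | inv a' _ ha' => exact Commute.inv_right ha'
  | one => exact fun y _ => Commute.one_left _
  | mul a b _ _ ha hb => exact fun y hy => Commute.mul_left (ha y hy) (hb y hy)
  | inv a _ ha => exact fun y hy => Commute.inv_left (ha y hy)

end Part2
end Stmt2Aux

/-- If `S = K₁ ⊔ K₂` with all simple reflections of `K₁` commuting with those
of `K₂`, then `λ ↦ (λ(I ∩ K₁), λ(I ∩ K₂))` is a well-defined bijection
`Λ(W) → Λ(W_{K₁}) × Λ(W_{K₂})`, and `|C(λ)| = |C(π₁ λ)| · |C(π₂ λ)|`. -/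
theorem statement2 [Fintype W] (cs : CoxeterSystem M W) (K1 K2 : Set B)
    (hU : K1 ∪ K2 = Set.univ) (hD : K1 ∩ K2 = ∅)
    (hcomm : ∀ i ∈ K1, ∀ j ∈ K2, Commute (cs.simple i) (cs.simple j)) :
    ∃ pi : CoxeterClass cs → CoxeterClassIn cs K1 × CoxeterClassIn cs K2,
      Function.Bijective pi ∧
      (∀ I : Set B,
        pi (Quotient.mk (coxSetoid cs) I) =
          (Quotient.mk (coxSetoidIn cs K1) ⟨I ∩ K1, Set.inter_subset_right⟩,
           Quotient.mk (coxSetoidIn cs K2) ⟨I ∩ K2, Set.inter_subset_right⟩)) ∧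
      (∀ I : Set B,
        Nat.card (lambdaSetQ cs (Quotient.mk (coxSetoid cs) I)) =
          Nat.card (lambdaSetInQ cs K1
              (Quotient.mk (coxSetoidIn cs K1) ⟨I ∩ K1, Set.inter_subset_right⟩)) *
          Nat.card (lambdaSetInQ cs K2
              (Quotient.mk (coxSetoidIn cs K2) ⟨I ∩ K2, Set.inter_subset_right⟩))) := by
  classical
  have hdisj : ∀ {i : B}, i ∈ K1 → i ∈ K2 → False := by
    intro i h1 h2
    have : i ∈ K1 ∩ K2 := ⟨h1, h2⟩
    rw [hD] at this
    exact this
  have hcommP : ∀ x ∈ parabolic cs K1, ∀ y ∈ parabolic cs K2, Commute x y :=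
    Stmt2Aux.commute_parabolic_of_simple cs hcomm
  have hcommP' : ∀ x ∈ parabolic cs K2, ∀ y ∈ parabolic cs K1, Commute x y :=
    fun x hx y hy => (hcommP y hy x hx).symm
  have hU' : K2 ∪ K1 = Set.univ := by rw [Set.union_comm]; exact hU
  have hD' : K2 ∩ K1 = ∅ := by rw [Set.inter_comm]; exact hD
  have hM2 : ∀ i ∈ K1, ∀ j ∈ K2, M i j = 2 := by
    intro i hi j hj
    have hij : i ≠ j := fun h => hdisj hi (h ▸ hj)
    exact Stmt2Aux.commute_M_eq_two cs hij (hcomm i hi j hj)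
  set f1 : B → W := fun i => if i ∈ K1 then cs.simple i else 1 with hf1
  set f2 : B → W := fun i => if i ∈ K2 then cs.simple i else 1 with hf2
  have hlift1 : M.IsLiftable f1 := by
    intro i j
    simp only [hf1]
    by_cases hi : i ∈ K1
    · by_cases hj : j ∈ K1
      · rw [if_pos hi, if_pos hj]
        exact cs.simple_mul_simple_pow i j
      · have hj2 : j ∈ K2 := Stmt2Aux.mem_K2_of_not_K1 hU hj
        rw [if_pos hi, if_neg hj, mul_one, hM2 i hi j hj2]
        exact cs.simple_sq i
    · by_cases hj : j ∈ K1
      · have hi2 : i ∈ K2 := Stmt2Aux.mem_K2_of_not_K1 hU hi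
        rw [if_neg hi, if_pos hj, one_mul, M.symmetric i j, hM2 j hj i hi2]
        exact cs.simple_sq j
      · rw [if_neg hi, if_neg hj, mul_one, one_pow]
  have hlift2 : M.IsLiftable f2 := by
    intro i j
    simp only [hf2]
    by_cases hi : i ∈ K2
    · by_cases hj : j ∈ K2
      · rw [if_pos hi, if_pos hj]
        exact cs.simple_mul_simple_pow i j
      · have hj1 : j ∈ K1 := Stmt2Aux.mem_K2_of_not_K1 hU' hj
        rw [if_pos hi, if_neg hj, mul_one, M.symmetric i j, hM2 j hj1 i hi]
        exact cs.simple_sq i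
    · by_cases hj : j ∈ K2
      · have hi1 : i ∈ K1 := Stmt2Aux.mem_K2_of_not_K1 hU' hi
        rw [if_neg hi, if_pos hj, one_mul, hM2 i hi1 j hj]
        exact cs.simple_sq j
      · rw [if_neg hi, if_neg hj, mul_one, one_pow]
  set φ1 : W →* W := cs.lift ⟨f1, hlift1⟩ with hφ1
  set φ2 : W →* W := cs.lift ⟨f2, hlift2⟩ with hφ2
  have hs1 : ∀ i ∈ K1, φ1 (cs.simple i) = cs.simple i := by
    intro i hi
    rw [hφ1, cs.lift_apply_simple, hf1]
    exact if_pos hi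
  have hk1 : ∀ i ∈ K2, φ1 (cs.simple i) = 1 := by
    intro i hi
    rw [hφ1, cs.lift_apply_simple, hf1]
    exact if_neg (fun h => hdisj h hi)
  have hs2 : ∀ i ∈ K2, φ2 (cs.simple i) = cs.simple i := by
    intro i hi
    rw [hφ2, cs.lift_apply_simple, hf2]
    exact if_pos hi
  have hk2 : ∀ i ∈ K1, φ2 (cs.simple i) = 1 := by
    intro i hi
    rw [hφ2, cs.lift_apply_simple, hf2]
    exact if_neg (fun h => hdisj hi h)
  -- well-definedness of the projection map
  have wd : ∀ I J : Set B, ConjSubsets cs I J →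
      ((Quotient.mk (coxSetoidIn cs K1) ⟨I ∩ K1, Set.inter_subset_right⟩,
        Quotient.mk (coxSetoidIn cs K2) ⟨I ∩ K2, Set.inter_subset_right⟩) :
          CoxeterClassIn cs K1 × CoxeterClassIn cs K2) =
      (Quotient.mk (coxSetoidIn cs K1) ⟨J ∩ K1, Set.inter_subset_right⟩,
       Quotient.mk (coxSetoidIn cs K2) ⟨J ∩ K2, Set.inter_subset_right⟩) := by
    intro I J h
    have r1 := Stmt2Aux.conjSubsets_proj1 cs hU hD hcommP φ1 φ2 hs1 hk1 hs2 hk2 h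
    have r2 := Stmt2Aux.conjSubsets_proj1 cs hU' hD' hcommP' φ2 φ1 hs2 hk2 hs1 hk1 h
    exact Prod.ext (Quotient.sound r1) (Quotient.sound r2)
  refine ⟨Quotient.lift (fun I : Set B =>
      (Quotient.mk (coxSetoidIn cs K1) ⟨I ∩ K1, Set.inter_subset_right⟩,
       Quotient.mk (coxSetoidIn cs K2) ⟨I ∩ K2, Set.inter_subset_right⟩)) wd,
    ⟨?_, ?_⟩, fun I => rfl, fun I => ?_⟩
  · -- injective
    intro lam mu h
    induction lam using Quotient.inductionOn with
    | h I =>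
      induction mu using Quotient.inductionOn with
      | h J =>
        have h1 := congrArg Prod.fst h
        have h2 := congrArg Prod.snd h
        have r1 : ConjSubsetsIn cs K1 (I ∩ K1) (J ∩ K1) := Quotient.exact (s := coxSetoidIn cs K1)
          (a := ⟨I ∩ K1, Set.inter_subset_right⟩) (b := ⟨J ∩ K1, Set.inter_subset_right⟩) h1
        have r2 : ConjSubsetsIn cs K2 (I ∩ K2) (J ∩ K2) := Quotient.exact (s := coxSetoidIn cs K2)
          (a := ⟨I ∩ K2, Set.inter_subset_right⟩) (b := ⟨J ∩ K2, Set.inter_subset_right⟩) h2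
        exact Quotient.sound (Stmt2Aux.conjSubsets_of_proj cs hU hD hcommP r1 r2)
  · -- surjective
    rintro ⟨lam1, lam2⟩
    induction lam1 using Quotient.inductionOn with
    | h I1 =>
      induction lam2 using Quotient.inductionOn with
      | h I2 =>
        refine ⟨Quotient.mk (coxSetoid cs) (I1.1 ∪ I2.1), ?_⟩
        have e1 : (I1.1 ∪ I2.1) ∩ K1 = I1.1 := by
          ext x
          constructor
          · rintro ⟨hx | hx, hxK⟩
            · exact hx
            · exact absurd hxK (fun h => hdisj h (I2.2 hx))
          · intro hx
            exact ⟨Or.inl hx, I1.2 hx⟩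
        have e2 : (I1.1 ∪ I2.1) ∩ K2 = I2.1 := by
          ext x
          constructor
          · rintro ⟨hx | hx, hxK⟩
            · exact absurd hxK (hdisj (I1.2 hx))
            · exact hx
          · intro hx
            exact ⟨Or.inr hx, I2.2 hx⟩
        have : (⟨(I1.1 ∪ I2.1) ∩ K1, Set.inter_subset_right⟩ : {I : Set B // I ⊆ K1}) = I1 :=
          Subtype.ext e1
        have h2 : (⟨(I1.1 ∪ I2.1) ∩ K2, Set.inter_subset_right⟩ : {I : Set B // I ⊆ K2}) = I2 :=
          Subtype.ext e2
        show (Quotient.mk (coxSetoidIn cs K1) ⟨(I1.1 ∪ I2.1) ∩ K1, Set.inter_subset_right⟩,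
          Quotient.mk (coxSetoidIn cs K2) ⟨(I1.1 ∪ I2.1) ∩ K2, Set.inter_subset_right⟩) = _
        rw [this, h2]
        rfl
  · -- cardinality
    have mem1 : ∀ w : W, w ∈ lambdaSetQ cs (Quotient.mk (coxSetoid cs) I) →
        φ1 w ∈ lambdaSetInQ cs K1
          (Quotient.mk (coxSetoidIn cs K1) ⟨I ∩ K1, Set.inter_subset_right⟩) := by
      rintro w ⟨J, hJq, hel⟩
      have rel : ConjSubsets cs J I := Quotient.exact hJq
      exact ⟨⟨J ∩ K1, Set.inter_subset_right⟩,
        Quotient.sound (Stmt2Aux.conjSubsets_proj1 cs hU hD hcommP φ1 φ2 hs1 hk1 hs2 hk2 rel),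
        ((Stmt2Aux.isElementOf_iff cs hU hD hcommP φ1 φ2 hs1 hk1 hs2 hk2 J w).mp hel).1⟩
    have mem2 : ∀ w : W, w ∈ lambdaSetQ cs (Quotient.mk (coxSetoid cs) I) →
        φ2 w ∈ lambdaSetInQ cs K2
          (Quotient.mk (coxSetoidIn cs K2) ⟨I ∩ K2, Set.inter_subset_right⟩) := by
      rintro w ⟨J, hJq, hel⟩
      have rel : ConjSubsets cs J I := Quotient.exact hJq
      exact ⟨⟨J ∩ K2, Set.inter_subset_right⟩,
        Quotient.sound (Stmt2Aux.conjSubsets_proj1 cs hU' hD' hcommP' φ2 φ1 hs2 hk2 hs1 hk1 rel),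
        ((Stmt2Aux.isElementOf_iff cs hU hD hcommP φ1 φ2 hs1 hk1 hs2 hk2 J w).mp hel).2⟩
    have memback : ∀ v1 v2 : W,
        v1 ∈ lambdaSetInQ cs K1
          (Quotient.mk (coxSetoidIn cs K1) ⟨I ∩ K1, Set.inter_subset_right⟩) →
        v2 ∈ lambdaSetInQ cs K2
          (Quotient.mk (coxSetoidIn cs K2) ⟨I ∩ K2, Set.inter_subset_right⟩) →
        v1 * v2 ∈ lambdaSetQ cs (Quotient.mk (coxSetoid cs) I) := by
      rintro v1 v2 ⟨J1, hJ1q, hel1⟩ ⟨J2, hJ2q, hel2⟩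
      have hv1K : v1 ∈ parabolic cs K1 := hel1.1
      have hv2K : v2 ∈ parabolic cs K2 := hel2.1
      have eJ1 : (J1.1 ∪ J2.1) ∩ K1 = J1.1 := by
        ext x
        constructor
        · rintro ⟨hx | hx, hxK⟩
          · exact hx
          · exact absurd hxK (fun h => hdisj h (J2.2 hx))
        · intro hx
          exact ⟨Or.inl hx, J1.2 hx⟩
      have eJ2 : (J1.1 ∪ J2.1) ∩ K2 = J2.1 := by
        ext x
        constructor
        · rintro ⟨hx | hx, hxK⟩
          · exact absurd hxK (hdisj (J1.2 hx))
          · exact hx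
        · intro hx
          exact ⟨Or.inr hx, J2.2 hx⟩
      have hrel1 : ConjSubsetsIn cs K1 J1.1 (I ∩ K1) := Quotient.exact hJ1q
      have hrel2 : ConjSubsetsIn cs K2 J2.1 (I ∩ K2) := Quotient.exact hJ2q
      have p1 : φ1 (v1 * v2) = v1 := by
        rw [map_mul, Stmt2Aux.phi_fix cs φ1 hs1 hv1K, Stmt2Aux.phi_kill cs φ1 hk1 hv2K, mul_one]
      have p2 : φ2 (v1 * v2) = v2 := by
        rw [map_mul, Stmt2Aux.phi_kill cs φ2 hk2 hv1K, Stmt2Aux.phi_fix cs φ2 hs2 hv2K, one_mul]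
      refine ⟨J1.1 ∪ J2.1, ?_, ?_⟩
      · apply Quotient.sound
        apply Stmt2Aux.conjSubsets_of_proj cs hU hD hcommP
        · rw [eJ1]; exact hrel1
        · rw [eJ2]; exact hrel2
      · apply (Stmt2Aux.isElementOf_iff cs hU hD hcommP φ1 φ2 hs1 hk1 hs2 hk2 _ (v1 * v2)).mpr
        constructor
        · rw [p1, eJ1]; exact hel1
        · rw [p2, eJ2]; exact hel2
    have eqv : lambdaSetQ cs (Quotient.mk (coxSetoid cs) I) ≃
        (lambdaSetInQ cs K1
          (Quotient.mk (coxSetoidIn cs K1) ⟨I ∩ K1, Set.inter_subset_right⟩) ×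
         lambdaSetInQ cs K2
          (Quotient.mk (coxSetoidIn cs K2) ⟨I ∩ K2, Set.inter_subset_right⟩)) :=
      { toFun := fun w => (⟨φ1 w.1, mem1 w.1 w.2⟩, ⟨φ2 w.1, mem2 w.1 w.2⟩)
        invFun := fun p => ⟨p.1.1 * p.2.1, memback _ _ p.1.2 p.2.2⟩
        left_inv := fun w => Subtype.ext
          (Stmt2Aux.phi_decomp cs hU hD hcommP φ1 φ2 hs1 hk1 hs2 hk2 w.1)
        right_inv := by
          rintro ⟨⟨v1, hv1⟩, ⟨v2, hv2⟩⟩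
          obtain ⟨J1, _, hel1⟩ := hv1
          obtain ⟨J2, _, hel2⟩ := hv2
          have p1 : φ1 (v1 * v2) = v1 := by
            rw [map_mul, Stmt2Aux.phi_fix cs φ1 hs1 hel1.1,
              Stmt2Aux.phi_kill cs φ1 hk1 hel2.1, mul_one]
          have p2 : φ2 (v1 * v2) = v2 := by
            rw [map_mul, Stmt2Aux.phi_kill cs φ2 hk2 hel1.1,
              Stmt2Aux.phi_fix cs φ2 hs2 hel2.1, one_mul]
          exact Prod.ext (Subtype.ext p1) (Subtype.ext p2) }
    rw [Nat.card_congr eqv, Nat.card_prod]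
end

section
/- Let (W,S) be a finite Coxeter system and suppose S = K₁ ⊔ K₂ is a disjoint union such that every element of K₁ commutes with every element of K₂ (so W = W_{K₁} × W_{K₂} internally). Let Φ_p denote the Solomon homomorphism of the Coxeter system (W_{K_p}, K_p), p = 1,2. If Φ_p(x_p)(y_p) = Φ_p(y_p)(x_p) for all x_p, y_p ∈ ΣW_{K_p} and p = 1,2, then Φ(x)(y) = Φ(y)(x) for all x,y ∈ ΣW. -/
open scoped Classical

variable {B : Type*} {W : Type*} [Group W] {M : CoxeterMatrix B}

/-- `x_I = Σ_{w ∈ X_I} w`, an element of the group algebra `ℚW`. -/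
noncomputable def xElt [Fintype W] (cs : CoxeterSystem M W) (I : Set B) :
    MonoidAlgebra ℚ W :=
  ∑ w : W, if w ∈ minReps cs I then MonoidAlgebra.single w (1 : ℚ) else 0

/-- The Solomon descent algebra `ΣW`, the span of the `x_I`. -/
noncomputable def descentAlgebra [Fintype W] (cs : CoxeterSystem M W) :
    Submodule ℚ (MonoidAlgebra ℚ W) :=
  Submodule.span ℚ (Set.range (xElt cs))

/-- The scalar product on `ℚW` with `⟨w, g⟩ = 1` if `w = g⁻¹` and `0` otherwise. -/
noncomputable def groupAlgPairing [Fintype W] (x y : MonoidAlgebra ℚ W) : ℚ :=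
  ∑ w : W, x.coeff w * y.coeff w⁻¹

/-- The classical scalar product of class functions on `W`. -/
noncomputable def classInner (W : Type*) [Group W] [Fintype W] (f g : W → ℚ) : ℚ :=
  (∑ w : W, f w * g w) / (Fintype.card W : ℚ)

/-- The linear extension of a function on `W` to the group algebra `ℚW`. -/
noncomputable def extEval [Fintype W] (f : W → ℚ) (x : MonoidAlgebra ℚ W) : ℚ :=
  ∑ w : W, x.coeff w * f w

/-- `X^K_I = W_K ∩ X_I`: the minimal coset representatives of `W_K / W_I` for `I ⊆ K`. -/
def minRepsRel (cs : CoxeterSystem M W) (K I : Set B) : Set W :=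
  (parabolic cs K : Set W) ∩ minReps cs I

/-- The element `x^K_I = Σ_{w ∈ X^K_I} w` of the group algebra. -/
noncomputable def xEltRel [Fintype W] (cs : CoxeterSystem M W) (K I : Set B) :
    MonoidAlgebra ℚ W :=
  ∑ w : W, if w ∈ minRepsRel cs K I then MonoidAlgebra.single w (1 : ℚ) else 0

/-- The induced character `1_{W_I}^{W_K}` of the trivial character of `W_I` to `W_K`
(`I ⊆ K`), as a function on `W` (supported on the subgroup `W_K`). -/
noncomputable def indTrivRel (cs : CoxeterSystem M W) (K I : Set B) : W → ℚ :=
  fun w => (Nat.card {g : W | g ∈ minRepsRel cs K I ∧ g⁻¹ * w * g ∈ parabolic cs I} : ℚ)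

/-- The Solomon descent algebra `Σ W_K` of the parabolic Coxeter system `(W_K, K)`. -/
noncomputable def descentAlgebraRel [Fintype W] (cs : CoxeterSystem M W) (K : Set B) :
    Submodule ℚ (MonoidAlgebra ℚ W) :=
  Submodule.span ℚ {x : MonoidAlgebra ℚ W | ∃ I : Set B, I ⊆ K ∧ x = xEltRel cs K I}


noncomputable section Stmt12Geom

namespace Stmt12Aux

variable {B : Type*}

/-- The value of the standard bilinear form on basis vectors. -/
def bval (M : CoxeterMatrix B) (k l : B) : ℝ :=
  if M k l = 0 then -1 else -Real.cos (Real.pi / M k l)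

lemma bval_diag (M : CoxeterMatrix B) (k : B) : bval M k k = 1 := by
  simp [bval, M.diagonal k]

lemma bval_symm (M : CoxeterMatrix B) (k l : B) : bval M k l = bval M l k := by
  unfold bval
  rw [M.symmetric k l]

/-- The linear functional `v ↦ B(e_k, v)`. -/
def formAt (M : CoxeterMatrix B) (k : B) : (B →₀ ℝ) →ₗ[ℝ] ℝ :=
  Finsupp.linearCombination ℝ (bval M k)

lemma formAt_single (M : CoxeterMatrix B) (k l : B) :
    formAt M k (Finsupp.single l 1) = bval M k l := by
  simp [formAt]

/-- The reflection `v ↦ v - 2 B(e_k, v) e_k` as a linear endomorphism. -/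
def reflAt (M : CoxeterMatrix B) (k : B) : Module.End ℝ (B →₀ ℝ) :=
  LinearMap.id - (Finsupp.lsingle k) ∘ₗ ((2 : ℝ) • formAt M k)

lemma reflAt_apply (M : CoxeterMatrix B) (k : B) (v : B →₀ ℝ) :
    reflAt M k v = v - Finsupp.single k (2 * formAt M k v) := by
  simp [reflAt]

end Stmt12Aux

end Stmt12Geom

namespace Stmt12Aux

variable {B : Type*}

lemma formAt_single' (M : CoxeterMatrix B) (k l : B) (x : ℝ) :
    formAt M k (Finsupp.single l x) = x * bval M k l := by
  simp [formAt, Finsupp.linearCombination_single, smul_eq_mul]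

lemma reflAt_sq (M : CoxeterMatrix B) (k : B) : reflAt M k * reflAt M k = 1 := by
  apply LinearMap.ext
  intro v
  rw [Module.End.mul_apply, reflAt_apply, reflAt_apply, map_sub, formAt_single',
    bval_diag, Module.End.one_apply]
  ext t
  simp only [Finsupp.sub_apply, Finsupp.single_apply]
  by_cases h : k = t <;> simp [h] <;> ring

lemma reflAt_mul_pow (M : CoxeterMatrix B) (k l : B) (hkl : k ≠ l) (hm0 : M k l ≠ 0) :
    (reflAt M k * reflAt M l) ^ (M k l) = 1 := by
  have hm1 : M k l ≠ 1 := M.off_diagonal k l hkl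
  have hm2 : 2 ≤ M k l := by omega
  set m : ℕ := M k l with hm
  set θ : ℝ := Real.pi / m with hθ
  have hmR : (2:ℝ) ≤ (m:ℝ) := by exact_mod_cast hm2
  have hθpos : 0 < θ := div_pos Real.pi_pos (by linarith)
  have hθlt : θ < Real.pi := by
    have : θ ≤ Real.pi / 2 := by
      apply div_le_div_of_nonneg_left Real.pi_pos.le (by norm_num) hmR
    linarith [Real.pi_pos]
  set c : ℝ := Real.cos θ with hc
  set s : ℝ := Real.sin θ with hs
  have hspos : 0 < s := Real.sin_pos_of_pos_of_lt_pi hθpos hθlt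
  have hsc : s ^ 2 + c ^ 2 = 1 := Real.sin_sq_add_cos_sq θ
  have hbkl : bval M k l = -c := by rw [bval, if_neg hm0]
  have hblk : bval M l k = -c := by rw [bval_symm, hbkl]
  apply LinearMap.ext
  intro v
  set ek : B →₀ ℝ := Finsupp.single k 1 with hek
  set el : B →₀ ℝ := Finsupp.single l 1 with hel
  set α : ℝ := formAt M k v with hα
  set β : ℝ := formAt M l v with hβ
  set T : Module.End ℝ (B →₀ ℝ) := reflAt M k * reflAt M l with hT
  have hfkk : formAt M k ek = 1 := by rw [hek, formAt_single', bval_diag]; ring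
  have hfkl : formAt M k el = -c := by rw [hel, formAt_single', hbkl]; ring
  have hflk : formAt M l ek = -c := by rw [hek, formAt_single', hblk]; ring
  have hfll : formAt M l el = 1 := by rw [hel, formAt_single', bval_diag]; ring
  have hTapp : ∀ w : B →₀ ℝ, T w =
      w - (2 * formAt M k w + 4 * c * formAt M l w) • ek - (2 * formAt M l w) • el := by
    intro w
    rw [hT, Module.End.mul_apply, reflAt_apply M l, reflAt_apply M k, map_sub,
      formAt_single', hbkl]
    ext t
    simp [hek, hel, Finsupp.single_apply]
    by_cases h1 : k = t <;> by_cases h2 : l = t <;> simp [h1, h2] <;> ring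
  -- the coefficient sequences, scaled by s^2
  set P : ℕ → ℝ := fun n => (α + c*β) * (Real.cos (2*n*θ) - 1) - β*s*Real.sin (2*n*θ) with hP
  set Q : ℕ → ℝ := fun n => (β + c*α) * (Real.cos (2*n*θ) - 1) + α*s*Real.sin (2*n*θ) with hQ
  have key : ∀ n : ℕ, s^2 • ((T ^ n) v) = s^2 • v + P n • ek + Q n • el := by
    intro n
    induction n with
    | zero => simp [hP, hQ]
    | succ n ih =>
      have hPn1 : P (n+1) = P n - (2*(s^2*α + P n - c * Q n) + 4*c*(s^2*β - c * P n + Q n)) := by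
        rw [hP, hQ]
        have harg : 2*((n:ℝ)+1)*θ = 2*n*θ + 2*θ := by ring
        push_cast
        rw [harg, Real.cos_add, Real.sin_add, Real.cos_two_mul, Real.sin_two_mul]
        linear_combination (2*α + 4*β*c - 2*β*c*Real.cos (2*n*θ)) * hsc
      have hQn1 : Q (n+1) = Q n - 2*(s^2*β - c * P n + Q n) := by
        rw [hP, hQ]
        have harg : 2*((n:ℝ)+1)*θ = 2*n*θ + 2*θ := by ring
        push_cast
        rw [harg, Real.cos_add, Real.sin_add, Real.cos_two_mul, Real.sin_two_mul]
        linear_combination (2*β + 2*α*c*Real.cos (2*n*θ)) * hsc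
      have hpow : (T ^ (n+1)) v = T ((T ^ n) v) := by
        rw [pow_succ']; rfl
      set w : B →₀ ℝ := (T ^ n) v with hw
      have hαn : s^2 * formAt M k w = s^2*α + P n - c * Q n := by
        have := congrArg (formAt M k) ih
        simpa [map_add, map_smul, hfkk, hfkl, smul_eq_mul, hα, mul_comm, sub_eq_add_neg] using this
      have hβn : s^2 * formAt M l w = s^2*β - c * P n + Q n := by
        have := congrArg (formAt M l) ih
        simpa [map_add, map_smul, hflk, hfll, smul_eq_mul, hβ, mul_comm, sub_eq_add_neg] using this
      rw [hpow, hTapp w, hPn1, hQn1]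
      rw [smul_sub, smul_sub, ih, smul_smul, smul_smul]
      rw [show s^2 * (2 * formAt M k w + 4 * c * formAt M l w)
            = 2*(s^2*α + P n - c * Q n) + 4*c*(s^2*β - c * P n + Q n) by
          rw [← hαn, ← hβn]; ring,
        show s^2 * (2 * formAt M l w) = 2*(s^2*β - c * P n + Q n) by rw [← hβn]; ring]
      module
  have hPm : P m = 0 := by
    have h2 : 2*(m:ℝ)*θ = 2*Real.pi := by
      rw [hθ]; field_simp
    show (α + c*β) * (Real.cos (2*(m:ℝ)*θ) - 1) - β*s*Real.sin (2*(m:ℝ)*θ) = 0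
    rw [h2, Real.cos_two_pi, Real.sin_two_pi]
    ring
  have hQm : Q m = 0 := by
    have h2 : 2*(m:ℝ)*θ = 2*Real.pi := by
      rw [hθ]; field_simp
    show (β + c*α) * (Real.cos (2*(m:ℝ)*θ) - 1) + α*s*Real.sin (2*(m:ℝ)*θ) = 0
    rw [h2, Real.cos_two_pi, Real.sin_two_pi]
    ring
  have := key m
  rw [hPm, hQm] at this
  simp only [zero_smul, add_zero] at this
  have hs2 : s^2 ≠ 0 := pow_ne_zero 2 (ne_of_gt hspos)
  rw [Module.End.one_apply]
  exact smul_right_injective (B →₀ ℝ) hs2 this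

end Stmt12Aux

namespace Stmt12Aux

open CoxeterSystem

variable {B : Type*} {W : Type*} [Group W] {M : CoxeterMatrix B}

theorem isLiftable_reflAt (M : CoxeterMatrix B) :
    M.IsLiftable (fun k => reflAt M k) := by
  intro k l
  rcases eq_or_ne k l with rfl | hkl
  · rw [M.diagonal, pow_one, reflAt_sq]
  · rcases eq_or_ne (M k l) 0 with h0 | h0
    · rw [h0, pow_zero]
    · exact reflAt_mul_pow M k l hkl h0

theorem simple_inj (cs : CoxeterSystem M W) {i j : B} (h : cs.simple i = cs.simple j) :
    i = j := by
  by_contra hij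
  have h2 : reflAt M i = reflAt M j := by
    have := congrArg (cs.lift ⟨fun k => reflAt M k, isLiftable_reflAt M⟩) h
    rwa [CoxeterSystem.lift_apply_simple, CoxeterSystem.lift_apply_simple] at this
  have h3 := congrArg (fun f : Module.End ℝ (B →₀ ℝ) => (f (Finsupp.single i 1)) i) h2
  simp only [reflAt_apply, formAt_single', bval_diag, Finsupp.sub_apply,
    Finsupp.single_apply, if_pos rfl, if_neg (Ne.symm hij)] at h3
  norm_num at h3

section Proj

variable (cs : CoxeterSystem M W) (K1 K2 : Set B)

/-- cross entries are even, given that the cross simple reflections commute. -/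
theorem cross_even (hD : K1 ∩ K2 = ∅)
    (hcomm : ∀ i ∈ K1, ∀ j ∈ K2, Commute (cs.simple i) (cs.simple j))
    {i j : B} (hi : i ∈ K1) (hj : j ∈ K2) : Even (M i j) := by
  rcases Nat.even_or_odd (M i j) with he | ho
  · exact he
  · exfalso
    have hij : i ≠ j := by
      rintro rfl
      exact absurd (Set.mem_inter hi hj) (by simp [hD])
    have hsq : (cs.simple i * cs.simple j) ^ 2 = 1 := by
      have hc := hcomm i hi j hj
      calc (cs.simple i * cs.simple j) ^ 2
          = cs.simple i * (cs.simple j * cs.simple i) * cs.simple j := by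
            rw [pow_two]; group
        _ = cs.simple i * (cs.simple i * cs.simple j) * cs.simple j := by rw [hc.eq]
        _ = 1 := by
            rw [← mul_assoc, mul_assoc (cs.simple i * cs.simple i)]
            rw [cs.simple_mul_simple_self, cs.simple_mul_simple_self]
            simp
    obtain ⟨t, ht⟩ := ho
    have h1 : (cs.simple i * cs.simple j) ^ (M i j) = 1 := cs.simple_mul_simple_pow i j
    rw [ht, pow_add, pow_mul, hsq, one_pow, pow_one, one_mul] at h1
    have : cs.simple i = cs.simple j := by
      have := congrArg (fun x => x * cs.simple j) h1
      simpa [mul_assoc, cs.simple_mul_simple_self] using this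
    exact hij (simple_inj cs this)

theorem pow_cross (hD : K1 ∩ K2 = ∅)
    (hcomm : ∀ i ∈ K1, ∀ j ∈ K2, Commute (cs.simple i) (cs.simple j))
    {i j k : B} (hi : i ∈ K1) (hj : j ∈ K2) :
    (cs.simple k) ^ (M i j) = 1 := by
  obtain ⟨t, ht⟩ := cross_even cs K1 K2 hD hcomm hi hj
  rw [ht, ← two_mul, pow_mul, cs.simple_sq, one_pow]

/-- The function defining the projection onto the `K`-factor. -/
noncomputable def projf (cs : CoxeterSystem M W) (K : Set B) : B → W :=
  fun k => if k ∈ K then cs.simple k else 1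

theorem projf_liftable1 (hU : K1 ∪ K2 = Set.univ) (hD : K1 ∩ K2 = ∅)
    (hcomm : ∀ i ∈ K1, ∀ j ∈ K2, Commute (cs.simple i) (cs.simple j)) :
    M.IsLiftable (projf cs K1) := by
  intro k l
  have hk2 : k ∉ K1 → k ∈ K2 := by
    intro h
    have h' : k ∈ K1 ∪ K2 := by rw [hU]; trivial
    rcases h' with h' | h'
    · exact absurd h' h
    · exact h'
  have hl2 : l ∉ K1 → l ∈ K2 := by
    intro h
    have h' : l ∈ K1 ∪ K2 := by rw [hU]; trivial
    rcases h' with h' | h'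
    · exact absurd h' h
    · exact h'
  by_cases hk : k ∈ K1 <;> by_cases hl : l ∈ K1 <;>
      simp only [projf, hk, hl, if_true, if_false, mul_one, one_mul, one_pow]
  · exact cs.simple_mul_simple_pow k l
  · exact pow_cross cs K1 K2 hD hcomm hk (hl2 hl)
  · rw [M.symmetric k l]
    exact pow_cross cs K1 K2 hD hcomm hl (hk2 hk)

end Proj

end Stmt12Aux

namespace Stmt12Aux

open CoxeterSystem

variable {B : Type*} {W : Type*} [Group W] {M : CoxeterMatrix B}

theorem commute_closure {H : Set W} {x : W} (h : ∀ h ∈ H, Commute h x) :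
    ∀ u ∈ Subgroup.closure H, Commute u x := by
  intro u hu
  induction hu using Subgroup.closure_induction with
  | mem y hy => exact h y hy
  | one => exact Commute.one_left x
  | mul y z _ _ hy hz => exact hy.mul_left hz
  | inv y _ hy => exact hy.inv_left

section Proj2

variable (cs : CoxeterSystem M W) (K1 K2 : Set B) (φ1 φ2 : W →* W)

theorem parabolic_mono {I J : Set B} (h : I ⊆ J) : parabolic cs I ≤ parabolic cs J :=
  Subgroup.closure_mono (Set.image_mono h)

theorem simple_mem_parabolic {I : Set B} {i : B} (hi : i ∈ I) :
    cs.simple i ∈ parabolic cs I :=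
  Subgroup.subset_closure ⟨i, hi, rfl⟩

variable (hU : K1 ∪ K2 = Set.univ) (hD : K1 ∩ K2 = ∅)
variable (hcomm : ∀ i ∈ K1, ∀ j ∈ K2, Commute (cs.simple i) (cs.simple j))
variable (h1K1 : ∀ k ∈ K1, φ1 (cs.simple k) = cs.simple k)
variable (h1K2 : ∀ k ∈ K2, φ1 (cs.simple k) = 1)
variable (h2K1 : ∀ k ∈ K1, φ2 (cs.simple k) = 1)
variable (h2K2 : ∀ k ∈ K2, φ2 (cs.simple k) = cs.simple k)

include hU in
theorem mem_cover (k : B) : k ∈ K1 ∨ k ∈ K2 := by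
  have h' : k ∈ K1 ∪ K2 := by rw [hU]; trivial
  exact h'

include hU hD in
theorem mem_two_iff (k : B) : k ∈ K2 ↔ k ∉ K1 := by
  constructor
  · intro h2 h1
    exact absurd (Set.mem_inter h1 h2) (by simp [hD])
  · intro h1
    rcases mem_cover K1 K2 hU k with h | h
    · exact absurd h h1
    · exact h

include hcomm in
theorem commute_simple_parab1 {i : B} (hi : i ∈ K2) :
    ∀ u ∈ parabolic cs K1, Commute u (cs.simple i) := by
  apply commute_closure
  rintro h ⟨j, hj, rfl⟩
  exact hcomm j hj i hi

include hU h1K1 h1K2 in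
theorem proj1_mem (w : W) : φ1 w ∈ parabolic cs K1 := by
  induction w using cs.simple_induction with
  | simple i =>
    rcases mem_cover K1 K2 hU i with h | h
    · rw [h1K1 i h]; exact simple_mem_parabolic cs h
    · rw [h1K2 i h]; exact one_mem _
  | one => rw [map_one]; exact one_mem _
  | mul u v hu hv => rw [map_mul]; exact mul_mem hu hv

include hU h2K1 h2K2 in
theorem proj2_mem (w : W) : φ2 w ∈ parabolic cs K2 := by
  induction w using cs.simple_induction with
  | simple i =>
    rcases mem_cover K1 K2 hU i with h | h
    · rw [h2K1 i h]; exact one_mem _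
    · rw [h2K2 i h]; exact simple_mem_parabolic cs h
  | one => rw [map_one]; exact one_mem _
  | mul u v hu hv => rw [map_mul]; exact mul_mem hu hv

include hU hcomm h1K1 h1K2 h2K1 h2K2 in
theorem proj_decomp (w : W) : φ1 w * φ2 w = w := by
  induction w using cs.simple_induction_left with
  | one => rw [map_one, map_one, one_mul]
  | mul_simple_left w i hw =>
    rw [map_mul, map_mul]
    rcases mem_cover K1 K2 hU i with h | h
    · rw [h1K1 i h, h2K1 i h, one_mul, mul_assoc, hw]
    · rw [h1K2 i h, h2K2 i h, one_mul]
      have hc : Commute (φ1 w) (cs.simple i) :=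
        commute_simple_parab1 cs K1 K2 hcomm h
          (φ1 w) (proj1_mem cs K1 K2 φ1 hU h1K1 h1K2 w)
      rw [← mul_assoc, hc.eq, mul_assoc, hw]

include h1K1 in
theorem proj1_fix : ∀ u ∈ parabolic cs K1, φ1 u = u := by
  intro u hu
  induction hu using Subgroup.closure_induction with
  | mem y hy => obtain ⟨j, hj, rfl⟩ := hy; exact h1K1 j hj
  | one => exact map_one _
  | mul y z _ _ hy hz => rw [map_mul, hy, hz]
  | inv y _ hy => rw [map_inv, hy]

include h1K2 in
theorem proj1_kill : ∀ v ∈ parabolic cs K2, φ1 v = 1 := by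
  intro v hv
  induction hv using Subgroup.closure_induction with
  | mem y hy => obtain ⟨j, hj, rfl⟩ := hy; exact h1K2 j hj
  | one => exact map_one _
  | mul y z _ _ hy hz => rw [map_mul, hy, hz, one_mul]
  | inv y _ hy => rw [map_inv, hy, inv_one]

include h2K2 in
theorem proj2_fix : ∀ u ∈ parabolic cs K2, φ2 u = u := by
  intro u hu
  induction hu using Subgroup.closure_induction with
  | mem y hy => obtain ⟨j, hj, rfl⟩ := hy; exact h2K2 j hj
  | one => exact map_one _
  | mul y z _ _ hy hz => rw [map_mul, hy, hz]
  | inv y _ hy => rw [map_inv, hy]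

include h2K1 in
theorem proj2_kill : ∀ v ∈ parabolic cs K1, φ2 v = 1 := by
  intro v hv
  induction hv using Subgroup.closure_induction with
  | mem y hy => obtain ⟨j, hj, rfl⟩ := hy; exact h2K1 j hj
  | one => exact map_one _
  | mul y z _ _ hy hz => rw [map_mul, hy, hz, one_mul]
  | inv y _ hy => rw [map_inv, hy, inv_one]

include h1K1 h1K2 in
theorem proj1_mul {u v : W} (hu : u ∈ parabolic cs K1) (hv : v ∈ parabolic cs K2) :
    φ1 (u * v) = u := by
  rw [map_mul, proj1_fix cs K1 φ1 h1K1 u hu, proj1_kill cs K2 φ1 h1K2 v hv, mul_one]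

include h2K1 h2K2 in
theorem proj2_mul {u v : W} (hu : u ∈ parabolic cs K1) (hv : v ∈ parabolic cs K2) :
    φ2 (u * v) = v := by
  rw [map_mul, proj2_kill cs K1 φ2 h2K1 u hu, proj2_fix cs K2 φ2 h2K2 v hv, one_mul]

include hU h1K1 h1K2 in
theorem proj1_parab {I : Set B} : ∀ w ∈ parabolic cs I, φ1 w ∈ parabolic cs (I ∩ K1) := by
  intro w hw
  induction hw using Subgroup.closure_induction with
  | mem y hy =>
    obtain ⟨j, hj, rfl⟩ := hy
    rcases mem_cover K1 K2 hU j with h | h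
    · rw [h1K1 j h]; exact simple_mem_parabolic cs ⟨hj, h⟩
    · rw [h1K2 j h]; exact one_mem _
  | one => rw [map_one]; exact one_mem _
  | mul y z _ _ hy hz => rw [map_mul]; exact mul_mem hy hz
  | inv y _ hy => rw [map_inv]; exact inv_mem hy

include hU h2K1 h2K2 in
theorem proj2_parab {I : Set B} : ∀ w ∈ parabolic cs I, φ2 w ∈ parabolic cs (I ∩ K2) := by
  intro w hw
  induction hw using Subgroup.closure_induction with
  | mem y hy =>
    obtain ⟨j, hj, rfl⟩ := hy
    rcases mem_cover K1 K2 hU j with h | h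
    · rw [h2K1 j h]; exact one_mem _
    · rw [h2K2 j h]; exact simple_mem_parabolic cs ⟨hj, h⟩
  | one => rw [map_one]; exact one_mem _
  | mul y z _ _ hy hz => rw [map_mul]; exact mul_mem hy hz
  | inv y _ hy => rw [map_inv]; exact inv_mem hy

include hU hcomm h1K1 h1K2 h2K1 h2K2 in
theorem mem_parab_iff {I : Set B} (w : W) :
    w ∈ parabolic cs I ↔
      φ1 w ∈ parabolic cs (I ∩ K1) ∧ φ2 w ∈ parabolic cs (I ∩ K2) := by
  constructor
  · intro hw
    exact ⟨proj1_parab cs K1 K2 φ1 hU h1K1 h1K2 w hw,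
      proj2_parab cs K1 K2 φ2 hU h2K1 h2K2 w hw⟩
  · rintro ⟨h1, h2⟩
    rw [← proj_decomp cs K1 K2 φ1 φ2 hU hcomm h1K1 h1K2 h2K1 h2K2 w]
    exact mul_mem (parabolic_mono cs Set.inter_subset_left h1)
      (parabolic_mono cs Set.inter_subset_left h2)

include hU h1K1 h1K2 in
theorem proj1_wordProd (ω : List B) :
    φ1 (cs.wordProd ω) = cs.wordProd (ω.filter (fun k => decide (k ∈ K1))) := by
  induction ω with
  | nil => rw [cs.wordProd_nil, map_one, List.filter_nil, cs.wordProd_nil]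
  | cons k ω ih =>
    rw [cs.wordProd_cons, map_mul, List.filter_cons]
    by_cases h' : k ∈ K1
    · rw [if_pos (by simpa using h'), h1K1 k h', ih, cs.wordProd_cons]
    · have h2 : k ∈ K2 := by
        rcases mem_cover K1 K2 hU k with h | h
        · exact absurd h h'
        · exact h
      rw [if_neg (by simpa using h'), h1K2 k h2, one_mul, ih]

include hU hD h2K1 h2K2 in
theorem proj2_wordProd (ω : List B) :
    φ2 (cs.wordProd ω) = cs.wordProd (ω.filter (fun k => !decide (k ∈ K1))) := by
  induction ω with
  | nil => rw [cs.wordProd_nil, map_one, List.filter_nil, cs.wordProd_nil]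
  | cons k ω ih =>
    rw [cs.wordProd_cons, map_mul, List.filter_cons]
    by_cases h' : k ∈ K1
    · rw [if_neg (by simpa using h'), h2K1 k h', one_mul, ih]
    · have h2 : k ∈ K2 := (mem_two_iff K1 K2 hU hD k).mpr h'
      rw [if_pos (by simpa using h'), h2K2 k h2, ih, cs.wordProd_cons]

include hU hD hcomm h1K1 h1K2 h2K1 h2K2 in
theorem length_add (w : W) : cs.length (φ1 w) + cs.length (φ2 w) = cs.length w := by
  apply le_antisymm
  · obtain ⟨ω, hlen, hw⟩ := cs.exists_reduced_word w
    calc cs.length (φ1 w) + cs.length (φ2 w)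
        = cs.length (cs.wordProd (ω.filter (fun k => decide (k ∈ K1))))
          + cs.length (cs.wordProd (ω.filter (fun k => !decide (k ∈ K1)))) := by
          rw [hw, proj1_wordProd cs K1 K2 φ1 hU h1K1 h1K2,
            proj2_wordProd cs K1 K2 φ2 hU hD h2K1 h2K2]
      _ ≤ (ω.filter (fun k => decide (k ∈ K1))).length
          + (ω.filter (fun k => !decide (k ∈ K1))).length :=
          Nat.add_le_add (cs.length_wordProd_le _) (cs.length_wordProd_le _)
      _ = ω.length := (List.length_eq_length_filter_add _).symm
      _ = cs.length w := by rw [hw]; exact Eq.symm hlen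
  · have h := cs.length_mul_le (φ1 w) (φ2 w)
    rwa [proj_decomp cs K1 K2 φ1 φ2 hU hcomm h1K1 h1K2 h2K1 h2K2 w] at h

include hU hD hcomm h1K1 h1K2 h2K1 h2K2 in
theorem minReps_iff {I : Set B} (w : W) :
    w ∈ minReps cs I ↔
      φ1 w ∈ minRepsRel cs K1 (I ∩ K1) ∧ φ2 w ∈ minRepsRel cs K2 (I ∩ K2) := by
  have hLA := length_add cs K1 K2 φ1 φ2 hU hD hcomm h1K1 h1K2 h2K1 h2K2
  have key1 : ∀ (v : W), ∀ i ∈ K1,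
      (cs.length v < cs.length (v * cs.simple i)
        ↔ cs.length (φ1 v) < cs.length (φ1 v * cs.simple i)) := by
    intro v i hi
    have e1 : φ1 (v * cs.simple i) = φ1 v * cs.simple i := by
      rw [map_mul, h1K1 i hi]
    have e2 : φ2 (v * cs.simple i) = φ2 v := by
      rw [map_mul, h2K1 i hi, mul_one]
    have hv := hLA v
    have hvs := hLA (v * cs.simple i)
    rw [e1, e2] at hvs
    omega
  have key2 : ∀ (v : W), ∀ i ∈ K2,
      (cs.length v < cs.length (v * cs.simple i)
        ↔ cs.length (φ2 v) < cs.length (φ2 v * cs.simple i)) := by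
    intro v i hi
    have e1 : φ1 (v * cs.simple i) = φ1 v := by
      rw [map_mul, h1K2 i hi, mul_one]
    have e2 : φ2 (v * cs.simple i) = φ2 v * cs.simple i := by
      rw [map_mul, h2K2 i hi]
    have hv := hLA v
    have hvs := hLA (v * cs.simple i)
    rw [e1, e2] at hvs
    omega
  constructor
  · intro hw
    refine ⟨⟨proj1_mem cs K1 K2 φ1 hU h1K1 h1K2 w, ?_⟩,
      ⟨proj2_mem cs K1 K2 φ2 hU h2K1 h2K2 w, ?_⟩⟩
    · rintro i ⟨hiI, hiK⟩
      exact (key1 w i hiK).mp (hw i hiI)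
    · rintro i ⟨hiI, hiK⟩
      exact (key2 w i hiK).mp (hw i hiI)
  · rintro ⟨⟨_, h1⟩, ⟨_, h2⟩⟩ i hiI
    rcases mem_cover K1 K2 hU i with h | h
    · exact (key1 w i h).mpr (h1 i ⟨hiI, h⟩)
    · exact (key2 w i h).mpr (h2 i ⟨hiI, h⟩)

end Proj2

end Stmt12Aux
namespace Stmt12Aux

open CoxeterSystem

variable {B : Type*} {W : Type*} [Group W] {M : CoxeterMatrix B}

section Count

variable [Fintype W]
variable (cs : CoxeterSystem M W) (K1 K2 : Set B) (φ1 φ2 : W →* W)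
variable (hU : K1 ∪ K2 = Set.univ) (hD : K1 ∩ K2 = ∅)
variable (hcomm : ∀ i ∈ K1, ∀ j ∈ K2, Commute (cs.simple i) (cs.simple j))
variable (h1K1 : ∀ k ∈ K1, φ1 (cs.simple k) = cs.simple k)
variable (h1K2 : ∀ k ∈ K2, φ1 (cs.simple k) = 1)
variable (h2K1 : ∀ k ∈ K1, φ2 (cs.simple k) = 1)
variable (h2K2 : ∀ k ∈ K2, φ2 (cs.simple k) = cs.simple k)

include hU hD hcomm h1K1 h1K2 h2K1 h2K2 in
theorem indTriv_factor {I : Set B} (w : W) :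
    indTriv cs I w
      = indTrivRel cs K1 (I ∩ K1) (φ1 w) * indTrivRel cs K2 (I ∩ K2) (φ2 w) := by
  have hmm : ∀ g : W, (g ∈ minReps cs I ∧ g⁻¹ * w * g ∈ parabolic cs I) ↔
      ((φ1 g ∈ minRepsRel cs K1 (I ∩ K1) ∧
          (φ1 g)⁻¹ * (φ1 w) * (φ1 g) ∈ parabolic cs (I ∩ K1)) ∧
        (φ2 g ∈ minRepsRel cs K2 (I ∩ K2) ∧
          (φ2 g)⁻¹ * (φ2 w) * (φ2 g) ∈ parabolic cs (I ∩ K2))) := by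
    intro g
    rw [minReps_iff cs K1 K2 φ1 φ2 hU hD hcomm h1K1 h1K2 h2K1 h2K2 g,
      mem_parab_iff cs K1 K2 φ1 φ2 hU hcomm h1K1 h1K2 h2K1 h2K2 (g⁻¹ * w * g)]
    rw [map_mul, map_mul, map_inv, map_mul, map_mul, map_inv]
    tauto
  rw [indTriv, indTrivRel, indTrivRel, ← Nat.cast_mul, ← Nat.card_prod]
  congr 1
  apply Nat.card_congr
  refine
    { toFun := fun g => (⟨φ1 g.1, ((hmm g.1).mp g.2).1⟩, ⟨φ2 g.1, ((hmm g.1).mp g.2).2⟩)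
      invFun := fun p => ⟨p.1.1 * p.2.1, ?_⟩
      left_inv := ?_
      right_inv := ?_ }
  · apply (hmm (p.1.1 * p.2.1)).mpr
    have e1 : φ1 (p.1.1 * p.2.1) = p.1.1 :=
      proj1_mul cs K1 K2 φ1 h1K1 h1K2 p.1.2.1.1 p.2.2.1.1
    have e2 : φ2 (p.1.1 * p.2.1) = p.2.1 :=
      proj2_mul cs K1 K2 φ2 h2K1 h2K2 p.1.2.1.1 p.2.2.1.1
    rw [e1, e2]
    exact ⟨p.1.2, p.2.2⟩
  · intro g
    apply Subtype.ext
    exact proj_decomp cs K1 K2 φ1 φ2 hU hcomm h1K1 h1K2 h2K1 h2K2 g.1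
  · intro p
    have e1 : φ1 (p.1.1 * p.2.1) = p.1.1 :=
      proj1_mul cs K1 K2 φ1 h1K1 h1K2 p.1.2.1.1 p.2.2.1.1
    have e2 : φ2 (p.1.1 * p.2.1) = p.2.1 :=
      proj2_mul cs K1 K2 φ2 h2K1 h2K2 p.1.2.1.1 p.2.2.1.1
    ext
    · exact e1
    · exact e2

theorem sum_single_coeff (R : Set W) (v : W) :
    (∑ w : W, if w ∈ R then MonoidAlgebra.single w (1 : ℚ) else 0).coeff v
      = if v ∈ R then 1 else 0 := by
  classical
  rw [MonoidAlgebra.coeff_sum, Finset.sum_apply']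
  rw [Finset.sum_eq_single v]
  · by_cases hv : v ∈ R <;> simp [hv, MonoidAlgebra.coeff_single, Finsupp.single_apply]
  · intro b _ hb
    by_cases hbR : b ∈ R <;> simp [hbR, MonoidAlgebra.coeff_single, Finsupp.single_apply, hb]
  · intro h
    exact absurd (Finset.mem_univ v) h

theorem xElt_coeff (I : Set B) (v : W) :
    (xElt cs I).coeff v = if v ∈ minReps cs I then (1 : ℚ) else 0 := by
  rw [xElt]; exact sum_single_coeff _ v

theorem xEltRel_coeff (K I : Set B) (v : W) :
    (xEltRel cs K I).coeff v = if v ∈ minRepsRel cs K I then (1 : ℚ) else 0 := by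
  rw [xEltRel]; exact sum_single_coeff _ v

include hU hD hcomm h1K1 h1K2 h2K1 h2K2 in
theorem extEval_factor (I J : Set B) :
    extEval (indTriv cs I) (xElt cs J)
      = extEval (indTrivRel cs K1 (I ∩ K1)) (xEltRel cs K1 (J ∩ K1))
        * extEval (indTrivRel cs K2 (I ∩ K2)) (xEltRel cs K2 (J ∩ K2)) := by
  classical
  rw [extEval, extEval, extEval]
  set F : W → ℚ :=
    fun u => (xEltRel cs K1 (J ∩ K1)).coeff u * indTrivRel cs K1 (I ∩ K1) u with hF
  set G : W → ℚ :=
    fun u => (xEltRel cs K2 (J ∩ K2)).coeff u * indTrivRel cs K2 (I ∩ K2) u with hG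
  have hterm : ∀ w : W, (xElt cs J).coeff w * indTriv cs I w = F (φ1 w) * G (φ2 w) := by
    intro w
    rw [hF, hG]
    dsimp only
    rw [xElt_coeff, xEltRel_coeff, xEltRel_coeff,
      indTriv_factor cs K1 K2 φ1 φ2 hU hD hcomm h1K1 h1K2 h2K1 h2K2 w]
    by_cases h1 : φ1 w ∈ minRepsRel cs K1 (J ∩ K1) <;>
        by_cases h2 : φ2 w ∈ minRepsRel cs K2 (J ∩ K2) <;>
      rw [minReps_iff cs K1 K2 φ1 φ2 hU hD hcomm h1K1 h1K2 h2K1 h2K2 w] <;>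
      simp [h1, h2] <;> ring
  rw [Finset.sum_congr rfl (fun w _ => hterm w)]
  have hinj : ∀ x ∈ (Finset.univ : Finset W), ∀ y ∈ (Finset.univ : Finset W),
      (fun w => (φ1 w, φ2 w)) x = (fun w => (φ1 w, φ2 w)) y → x = y := by
    intro x _ y _ hxy
    have h1 : φ1 x = φ1 y := congrArg Prod.fst hxy
    have h2 : φ2 x = φ2 y := congrArg Prod.snd hxy
    calc x = φ1 x * φ2 x :=
          (proj_decomp cs K1 K2 φ1 φ2 hU hcomm h1K1 h1K2 h2K1 h2K2 x).symm
      _ = φ1 y * φ2 y := by rw [h1, h2]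
      _ = y := proj_decomp cs K1 K2 φ1 φ2 hU hcomm h1K1 h1K2 h2K1 h2K2 y
  have himg : ∑ w : W, F (φ1 w) * G (φ2 w)
      = ∑ q ∈ Finset.univ.image (fun w => (φ1 w, φ2 w)), F q.1 * G q.2 := by
    rw [Finset.sum_image hinj]
  rw [himg]
  have hvan : ∀ q ∈ (Finset.univ : Finset (W × W)),
      q ∉ Finset.univ.image (fun w => (φ1 w, φ2 w)) → F q.1 * G q.2 = 0 := by
    intro q _ hq
    by_contra hne
    have hF1 : F q.1 ≠ 0 := fun h => hne (by rw [h, zero_mul])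
    have hG1 : G q.2 ≠ 0 := fun h => hne (by rw [h, mul_zero])
    have hq1 : q.1 ∈ minRepsRel cs K1 (J ∩ K1) := by
      by_contra h
      apply hF1
      rw [hF]
      dsimp only
      rw [xEltRel_coeff, if_neg h, zero_mul]
    have hq2 : q.2 ∈ minRepsRel cs K2 (J ∩ K2) := by
      by_contra h
      apply hG1
      rw [hG]
      dsimp only
      rw [xEltRel_coeff, if_neg h, zero_mul]
    apply hq
    apply Finset.mem_image.mpr
    refine ⟨q.1 * q.2, Finset.mem_univ _, ?_⟩
    have e1 : φ1 (q.1 * q.2) = q.1 :=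
      proj1_mul cs K1 K2 φ1 h1K1 h1K2 hq1.1 hq2.1
    have e2 : φ2 (q.1 * q.2) = q.2 :=
      proj2_mul cs K1 K2 φ2 h2K1 h2K2 hq1.1 hq2.1
    rw [e1, e2]
  rw [Finset.sum_subset (Finset.subset_univ _) hvan]
  rw [Finset.sum_mul_sum]
  rw [← Finset.sum_product']
  rw [Finset.univ_product_univ]

end Count

section EvalLemmas

variable [Fintype W]

theorem extEval_zero_right (f : W → ℚ) : extEval f (0 : MonoidAlgebra ℚ W) = 0 := by
  simp [extEval]

theorem extEval_zero_left (x : MonoidAlgebra ℚ W) : extEval (0 : W → ℚ) x = 0 := by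
  simp [extEval]

theorem extEval_add_right (f : W → ℚ) (a b : MonoidAlgebra ℚ W) :
    extEval f (a + b) = extEval f a + extEval f b := by
  rw [extEval, extEval, extEval, ← Finset.sum_add_distrib]
  apply Finset.sum_congr rfl
  intro w _
  rw [MonoidAlgebra.coeff_add, Finsupp.add_apply]
  ring

theorem extEval_add_left (f g : W → ℚ) (a : MonoidAlgebra ℚ W) :
    extEval (f + g) a = extEval f a + extEval g a := by
  rw [extEval, extEval, extEval, ← Finset.sum_add_distrib]
  apply Finset.sum_congr rfl
  intro w _
  rw [Pi.add_apply]
  ring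

theorem extEval_smul_right (f : W → ℚ) (r : ℚ) (a : MonoidAlgebra ℚ W) :
    extEval f (r • a) = r * extEval f a := by
  rw [extEval, extEval, Finset.mul_sum]
  apply Finset.sum_congr rfl
  intro w _
  rw [MonoidAlgebra.coeff_smul_apply, smul_eq_mul]
  ring

theorem extEval_smul_left (f : W → ℚ) (r : ℚ) (a : MonoidAlgebra ℚ W) :
    extEval (r • f) a = r * extEval f a := by
  rw [extEval, extEval, Finset.mul_sum]
  apply Finset.sum_congr rfl
  intro w _
  rw [Pi.smul_apply, smul_eq_mul]
  ring

end EvalLemmas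

end Stmt12Aux


/-- If `S = K₁ ⊔ K₂` with the simple reflections of `K₁` commuting with
those of `K₂`, and the Solomon homomorphisms of the two factors `(W_{K_p}, K_p)` have the
symmetry property, then so does the Solomon homomorphism of `(W, S)`. -/
theorem statement12 [Fintype W] (cs : CoxeterSystem M W) (K1 K2 : Set B)
    (hU : K1 ∪ K2 = Set.univ) (hD : K1 ∩ K2 = ∅)
    (hcomm : ∀ i ∈ K1, ∀ j ∈ K2, Commute (cs.simple i) (cs.simple j))
    (Phi : MonoidAlgebra ℚ W →ₗ[ℚ] (W → ℚ))
    (hPhi : ∀ I : Set B, Phi (xElt cs I) = indTriv cs I)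
    (Phi1 Phi2 : MonoidAlgebra ℚ W →ₗ[ℚ] (W → ℚ))
    (hPhi1 : ∀ I : Set B, I ⊆ K1 → Phi1 (xEltRel cs K1 I) = indTrivRel cs K1 I)
    (hPhi2 : ∀ I : Set B, I ⊆ K2 → Phi2 (xEltRel cs K2 I) = indTrivRel cs K2 I)
    (hsym1 : ∀ x ∈ descentAlgebraRel cs K1, ∀ y ∈ descentAlgebraRel cs K1,
        extEval (Phi1 x) y = extEval (Phi1 y) x)
    (hsym2 : ∀ x ∈ descentAlgebraRel cs K2, ∀ y ∈ descentAlgebraRel cs K2,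
        extEval (Phi2 x) y = extEval (Phi2 y) x) :
    ∀ x ∈ descentAlgebra cs, ∀ y ∈ descentAlgebra cs,
      extEval (Phi x) y = extEval (Phi y) x := by
  have hU' : K2 ∪ K1 = Set.univ := by rw [Set.union_comm]; exact hU
  have hD' : K2 ∩ K1 = ∅ := by rw [Set.inter_comm]; exact hD
  have hcomm' : ∀ i ∈ K2, ∀ j ∈ K1, Commute (cs.simple i) (cs.simple j) :=
    fun i hi j hj => (hcomm j hj i hi).symm
  have hdisj : ∀ k : B, k ∈ K1 → k ∈ K2 → False := by
    intro k h1 h2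
    rw [Set.eq_empty_iff_forall_notMem] at hD
    exact hD k ⟨h1, h2⟩
  set φ1 : W →* W := cs.lift ⟨Stmt12Aux.projf cs K1,
    Stmt12Aux.projf_liftable1 cs K1 K2 hU hD hcomm⟩ with hφ1
  set φ2 : W →* W := cs.lift ⟨Stmt12Aux.projf cs K2,
    Stmt12Aux.projf_liftable1 cs K2 K1 hU' hD' hcomm'⟩ with hφ2
  have h1K1 : ∀ k ∈ K1, φ1 (cs.simple k) = cs.simple k := by
    intro k hk
    rw [hφ1, CoxeterSystem.lift_apply_simple]
    simp [Stmt12Aux.projf, hk]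
  have h1K2 : ∀ k ∈ K2, φ1 (cs.simple k) = 1 := by
    intro k hk
    have hk1 : k ∉ K1 := fun h => hdisj k h hk
    rw [hφ1, CoxeterSystem.lift_apply_simple]
    simp [Stmt12Aux.projf, hk1]
  have h2K1 : ∀ k ∈ K1, φ2 (cs.simple k) = 1 := by
    intro k hk
    have hk2 : k ∉ K2 := fun h => hdisj k hk h
    rw [hφ2, CoxeterSystem.lift_apply_simple]
    simp [Stmt12Aux.projf, hk2]
  have h2K2 : ∀ k ∈ K2, φ2 (cs.simple k) = cs.simple k := by
    intro k hk
    rw [hφ2, CoxeterSystem.lift_apply_simple]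
    simp [Stmt12Aux.projf, hk]
  have hgen : ∀ I J : Set B,
      extEval (Phi (xElt cs I)) (xElt cs J) = extEval (Phi (xElt cs J)) (xElt cs I) := by
    intro I J
    rw [hPhi, hPhi]
    rw [Stmt12Aux.extEval_factor cs K1 K2 φ1 φ2 hU hD hcomm h1K1 h1K2 h2K1 h2K2 I J,
      Stmt12Aux.extEval_factor cs K1 K2 φ1 φ2 hU hD hcomm h1K1 h1K2 h2K1 h2K2 J I]
    have m1I : xEltRel cs K1 (I ∩ K1) ∈ descentAlgebraRel cs K1 :=
      Submodule.subset_span ⟨I ∩ K1, Set.inter_subset_right, rfl⟩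
    have m1J : xEltRel cs K1 (J ∩ K1) ∈ descentAlgebraRel cs K1 :=
      Submodule.subset_span ⟨J ∩ K1, Set.inter_subset_right, rfl⟩
    have m2I : xEltRel cs K2 (I ∩ K2) ∈ descentAlgebraRel cs K2 :=
      Submodule.subset_span ⟨I ∩ K2, Set.inter_subset_right, rfl⟩
    have m2J : xEltRel cs K2 (J ∩ K2) ∈ descentAlgebraRel cs K2 :=
      Submodule.subset_span ⟨J ∩ K2, Set.inter_subset_right, rfl⟩
    have e1 : extEval (indTrivRel cs K1 (I ∩ K1)) (xEltRel cs K1 (J ∩ K1))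
        = extEval (indTrivRel cs K1 (J ∩ K1)) (xEltRel cs K1 (I ∩ K1)) := by
      rw [← hPhi1 _ Set.inter_subset_right, ← hPhi1 _ Set.inter_subset_right]
      exact hsym1 _ m1I _ m1J
    have e2 : extEval (indTrivRel cs K2 (I ∩ K2)) (xEltRel cs K2 (J ∩ K2))
        = extEval (indTrivRel cs K2 (J ∩ K2)) (xEltRel cs K2 (I ∩ K2)) := by
      rw [← hPhi2 _ Set.inter_subset_right, ← hPhi2 _ Set.inter_subset_right]
      exact hsym2 _ m2I _ m2J
    rw [e1, e2]
  intro x hx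
  induction hx using Submodule.span_induction with
  | mem a ha =>
    obtain ⟨I, rfl⟩ := ha
    intro y hy
    induction hy using Submodule.span_induction with
    | mem b hb =>
      obtain ⟨J, rfl⟩ := hb
      exact hgen I J
    | zero =>
      rw [map_zero, Stmt12Aux.extEval_zero_right, Stmt12Aux.extEval_zero_left]
    | add b c _ _ hb hc =>
      rw [map_add, Stmt12Aux.extEval_add_right, Stmt12Aux.extEval_add_left, hb, hc]
    | smul r b _ hb =>
      rw [map_smul, Stmt12Aux.extEval_smul_right, Stmt12Aux.extEval_smul_left, hb]
  | zero =>
    intro y hy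
    rw [map_zero, Stmt12Aux.extEval_zero_left, Stmt12Aux.extEval_zero_right]
  | add a b _ _ ha hb =>
    intro y hy
    rw [map_add, Stmt12Aux.extEval_add_left, Stmt12Aux.extEval_add_right,
      ha y hy, hb y hy]
  | smul r a _ ha =>
    intro y hy
    rw [map_smul, Stmt12Aux.extEval_smul_left, Stmt12Aux.extEval_smul_right, ha y hy]
end

section
/- Let (W,S) be a finite Coxeter system and I,J ⊆ S. Then Σ_{w ∈ X_I} 1_{W_J}^W(w) = Σ_{b ∈ X_{IJ}} |W(I,J,b)|; that is, Φ(x_J)(x_I) equals the sum over the minimal double coset representatives b ∈ X_{IJ} of the cardinalities of the sets W(I,J,b). -/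
open scoped Classical

variable {B : Type*} {W : Type*} [Group W] {M : CoxeterMatrix B}

/-- `X_{IJ} = X_I⁻¹ ∩ X_J`: the minimal length representatives of the double cosets
`W_I \\ W / W_J`. -/
def doubleReps (cs : CoxeterSystem M W) (I J : Set B) : Set W :=
  (minReps cs I)⁻¹ ∩ minReps cs J

/-- `W(I,J,b) = {w ∈ W | w^J b⁻¹ = (w b⁻¹)_I}`, expressed through the (unique) parabolic
components `w = u·c` (`u ∈ X_J`, `c ∈ W_J`) and `w b⁻¹ = p·q` (`p ∈ X_I`, `q ∈ W_I`). -/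
def Wset (cs : CoxeterSystem M W) (I J : Set B) (b : W) : Set W :=
  {w : W | ∃ u c p q : W,
    u ∈ minReps cs J ∧ c ∈ parabolic cs J ∧ w = u * c ∧
    p ∈ minReps cs I ∧ q ∈ parabolic cs I ∧ w * b⁻¹ = p * q ∧ u * b⁻¹ = q}


section CoxProofDev

open Function Set List

namespace CoxProof

variable (cs : CoxeterSystem M W)

local prefix:100 "s" => cs.simple
local prefix:100 "π" => cs.wordProd
local prefix:100 "ℓ" => cs.length
local prefix:100 "ris" => cs.rightInvSeq

/-- The sign-flipping permutation used in the standard parity proof. -/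
noncomputable def eta (i : B) : Equiv.Perm (W × ZMod 2) :=
  Function.Involutive.toPerm
    (fun p => (s i * p.1 * s i, p.2 + if p.1 = s i then 1 else 0))
    (by
      rintro ⟨u, e⟩
      have h1 : s i * u * s i = s i ↔ u = s i := by
        constructor
        · intro h
          have := congrArg (fun x => s i * x * s i) h
          simpa [mul_assoc, cs.simple_mul_simple_cancel_left,
            cs.simple_mul_simple_self] using this
        · rintro rfl; simp [mul_assoc, cs.simple_mul_simple_self]
      simp only [Prod.mk.injEq]
      constructor
      · rw [← mul_assoc, ← mul_assoc]
        simp [mul_assoc, cs.simple_mul_simple_cancel_left, cs.simple_mul_simple_cancel_right]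
      · rw [h1]
        rcases eq_or_ne u (s i) with h | h <;> simp [h]
        · show e + 1 + 1 = e
          rw [add_assoc]
          norm_num
          decide)

lemma eta_apply (i : B) (u : W) (e : ZMod 2) :
    eta cs i (u, e) = (s i * u * s i, e + if u = s i then 1 else 0) := rfl

lemma ris_cons (i : B) (ω : List B) :
    ris (i :: ω) = ((π ω)⁻¹ * (s i) * (π ω)) :: ris ω := rfl

/-- Product of etas along a word computes conjugation and counts inversions. -/
lemma prod_eta_apply (ω : List B) (u : W) (e : ZMod 2) :
    (ω.map (eta cs)).prod (u, e)
      = ((π ω) * u * (π ω)⁻¹, e + ((ris ω).count u : ZMod 2)) := by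
  induction ω generalizing u e with
  | nil => simp
  | cons i α ih =>
    rw [List.map_cons, List.prod_cons, Equiv.Perm.mul_apply, ih, eta_apply]
    rw [ris_cons]
    have hcond : (π α) * u * (π α)⁻¹ = s i ↔ u = (π α)⁻¹ * s i * (π α) := by
      constructor
      · intro h; rw [← h]; group
      · intro h; rw [h]; group
    rw [List.count_cons]
    refine Prod.ext ?_ ?_
    · simp only [cs.wordProd_cons]
      group
      simp only [zpow_neg, zpow_one, cs.inv_simple]
    · simp only []
      rw [hcond]
      rcases eq_or_ne u ((π α)⁻¹ * s i * (π α)) with h | h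
      · rw [if_pos h, if_pos (beq_iff_eq.mpr h.symm)]
        push_cast
        ring
      · rw [if_neg h, if_neg (fun hc => h (beq_iff_eq.mp hc).symm)]
        simp

/-- dihedral word -/
def LL (i j : B) : ℕ → List B
  | 0 => []
  | m + 1 => i :: j :: LL i j m

lemma wordProd_LL (i j : B) (m : ℕ) : π (LL i j m) = (s i * s j) ^ m := by
  induction m with
  | zero => simp [LL]
  | succ m ih =>
    rw [LL, cs.wordProd_cons, cs.wordProd_cons, ih, pow_succ']
    group

lemma semiconj (i j : B) : SemiconjBy (s j) (s i * s j) (s j * s i) := by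
  unfold SemiconjBy
  group

lemma ris_LL_perm (i j : B) (m : ℕ) :
    (ris (LL i j m)).Perm
      (((List.range (2 * m)).map (fun k => (s j * s i) ^ k * s j))) := by
  induction m with
  | zero => simp [LL]
  | succ m ih =>
    have h1 : ris (LL i j (m+1)) =
        ((s j * s i) ^ (2*m+1) * s j) :: ((s j * s i) ^ (2*m) * s j) :: ris (LL i j m) := by
      show (π (j :: LL i j m))⁻¹ * (s i) * (π (j :: LL i j m)) ::
          ((π (LL i j m))⁻¹ * (s j) * (π (LL i j m))) :: ris (LL i j m) = _
      rw [cs.wordProd_cons, wordProd_LL]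
      have hsc : (s j) * (s i * s j) ^ m = (s j * s i) ^ m * (s j) :=
        ((semiconj cs i j).pow_right m).eq
      have hinv : ((s i * s j) ^ m)⁻¹ = (s j * s i) ^ m := by
        rw [← inv_pow, mul_inv_rev, cs.inv_simple, cs.inv_simple]
      congr 1
      · -- (s j * (s i s j)^m)⁻¹ * s i * (s j * (s i s j)^m) = q^(2m+1) * s j
        rw [mul_inv_rev, hinv, cs.inv_simple]
        calc (s j * s i) ^ m * (s j) * (s i) * ((s j) * (s i * s j) ^ m)
            = (s j * s i) ^ m * ((s j) * (s i)) * ((s j) * (s i * s j) ^ m) := by group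
          _ = (s j * s i) ^ (m+1) * ((s j) * (s i * s j) ^ m) := by rw [pow_succ]
          _ = (s j * s i) ^ (m+1) * ((s j * s i) ^ m * (s j)) := by rw [hsc]
          _ = (s j * s i) ^ (2*m+1) * s j := by rw [← mul_assoc, ← pow_add]; ring_nf
      congr 1
      · rw [hinv]
        calc (s j * s i) ^ m * (s j) * (s i * s j) ^ m
            = (s j * s i) ^ m * ((s j) * (s i * s j) ^ m) := by group
          _ = (s j * s i) ^ m * ((s j * s i) ^ m * (s j)) := by rw [hsc]
          _ = (s j * s i) ^ (2*m) * s j := by rw [← mul_assoc, ← pow_add]; ring_nf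
    rw [h1]
    have h2 : List.range (2 * (m+1)) = List.range (2*m) ++ [2*m, 2*m+1] := by
      have : 2 * (m+1) = (2*m + 1) + 1 := by ring
      rw [this, List.range_succ, List.range_succ]
      simp
    rw [h2, List.map_append]
    calc ((s j * s i) ^ (2*m+1) * s j) :: ((s j * s i) ^ (2*m) * s j) :: ris (LL i j m)
        ~ ((s j * s i) ^ (2*m) * s j) :: ((s j * s i) ^ (2*m+1) * s j) :: ris (LL i j m) :=
          List.Perm.swap _ _ _
      _ ~ (([(s j * s i) ^ (2*m) * s j, (s j * s i) ^ (2*m+1) * s j] : List W)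
            ++ ris (LL i j m)) := by rfl
      _ ~ ris (LL i j m) ++ [(s j * s i) ^ (2*m) * s j, (s j * s i) ^ (2*m+1) * s j] :=
          List.perm_append_comm
      _ ~ _ := by
          refine List.Perm.append (ih) ?_
          simp

lemma count_ris_LL_even (i j : B) (u : W) :
    2 ∣ (ris (LL i j (M i j))).count u := by
  rw [(ris_LL_perm cs i j (M i j)).count_eq]
  set m := M i j
  have hq : ((s j * s i) : W) ^ m = 1 := cs.simple_mul_simple_pow' i j
  have h2 : 2 * m = m + m := by ring
  rw [h2, List.range_add, List.map_append, List.count_append]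
  have : (List.range m).map (fun k => (s j * s i) ^ (m + k) * s j)
      = (List.range m).map (fun k => (s j * s i) ^ k * s j) := by
    apply List.map_congr_left
    intro k _
    rw [pow_add, hq, one_mul]
  rw [List.map_map]
  show 2 ∣ _ + ((List.range m).map (fun k => (s j * s i) ^ (m + k) * s j)).count u
  rw [this]
  omega


lemma prod_eta_LL (i j : B) (m : ℕ) :
    ((LL i j m).map (eta cs)).prod = (eta cs i * eta cs j) ^ m := by
  induction m with
  | zero => simp [LL]
  | succ m ih =>
    rw [LL, List.map_cons, List.map_cons, List.prod_cons, List.prod_cons, ih, pow_succ']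
    rw [mul_assoc]

lemma liftable : CoxeterMatrix.IsLiftable M (eta cs) := by
  intro i j
  rw [← prod_eta_LL]
  apply Equiv.ext
  rintro ⟨u, e⟩
  rw [prod_eta_apply, wordProd_LL, cs.simple_mul_simple_pow]
  obtain ⟨c, hc⟩ := count_ris_LL_even cs i j u
  rw [hc]
  have h0 : ((2 * c : ℕ) : ZMod 2) = 0 := by
    push_cast
    rw [show (2 : ZMod 2) = 0 by decide, zero_mul]
  rw [h0, add_zero]
  simp

noncomputable def phi : W →* Equiv.Perm (W × ZMod 2) := cs.lift ⟨eta cs, liftable cs⟩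

lemma phi_wordProd (ω : List B) : phi cs (π ω) = (ω.map (eta cs)).prod := by
  induction ω with
  | nil => simp
  | cons i α ih =>
    rw [cs.wordProd_cons, map_mul, ih, List.map_cons, List.prod_cons]
    congr 1
    exact cs.lift_apply_simple (liftable cs) i

/-- parity of inversion-count depends only on the group element -/
lemma count_parity {ω ω' : List B} (h : π ω = π ω') (u : W) :
    ((ris ω).count u : ZMod 2) = ((ris ω').count u : ZMod 2) := by
  have heq : (ω.map (eta cs)).prod = (ω'.map (eta cs)).prod := by
    rw [← phi_wordProd, ← phi_wordProd, h]
  have := congrArg (fun p : Equiv.Perm (W × ZMod 2) => p (u, (0 : ZMod 2))) heq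
  simp only [prod_eta_apply] at this
  have h2 := congrArg Prod.snd this
  simpa using h2

/-- Exchange property. -/
lemma exchange {ω : List B} (hω : cs.IsReduced ω) {i : B}
    (h : cs.IsRightDescent (π ω) i) :
    ∃ j < ω.length, π (ω.eraseIdx j) = π ω * s i := by
  obtain ⟨μ, hμlen, hμ⟩ := cs.exists_reduced_word (π ω * s i)
  have hμred : cs.IsReduced μ := hμlen
  have hπ : π (μ.concat i) = π ω := by
    rw [cs.wordProd_concat, ← hμ, mul_assoc, cs.simple_mul_simple_self, mul_one]
  have hnotmem : (s i) ∉ ris μ := by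
    intro hmem
    have := (cs.isRightInversion_of_mem_rightInvSeq hμred hmem).2
    rw [← hμ, mul_assoc, cs.simple_mul_simple_self, mul_one] at this
    exact absurd this (not_lt.mpr (le_of_lt h))
  have hcount0 : (ris μ).count (s i) = 0 := List.count_eq_zero.mpr hnotmem
  have hconcat : (ris (μ.concat i)).count (s i)
      = ((ris μ).map (MulAut.conj (s i))).count (s i) + 1 := by
    rw [cs.rightInvSeq_concat]
    rw [List.concat_eq_append, List.count_append]
    simp
  have hmapcount : ((ris μ).map (MulAut.conj (s i))).count (s i) = 0 := by
    rw [List.count_eq_zero]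
    intro hmem
    obtain ⟨t, ht, hconj⟩ := List.mem_map.mp hmem
    have h2 : s i = t := by
      have := congrArg (fun x => (s i)⁻¹ * x * (s i)) hconj
      simpa [MulAut.conj_apply, mul_assoc, cs.inv_simple,
        cs.simple_mul_simple_cancel_left, cs.simple_mul_simple_cancel_right] using this.symm
    rw [← h2] at ht
    exact hnotmem ht
  have hpar := count_parity cs hπ.symm (s i)
  rw [hconcat, hmapcount] at hpar
  have hne : (ris ω).count (s i) ≠ 0 := by
    intro h0
    rw [h0] at hpar
    simp at hpar
  have hmem : (s i) ∈ ris ω := List.count_pos_iff.mp (Nat.pos_of_ne_zero hne)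
  obtain ⟨j, hj, hget⟩ := List.mem_iff_getElem.mp hmem
  rw [cs.length_rightInvSeq] at hj
  refine ⟨j, hj, ?_⟩
  have := cs.wordProd_mul_getD_rightInvSeq ω j
  rw [List.getD_eq_getElem _ 1 (by simp [hj]), hget] at this
  exact this.symm


variable (K : Set B)



lemma simple_mem_parabolic {j : B} (hj : j ∈ K) : s j ∈ parabolic cs K :=
  Subgroup.subset_closure (Set.mem_image_of_mem _ hj)

lemma wordProd_mem_parabolic {ω : List B} (hω : ∀ b ∈ ω, b ∈ K) :
    π ω ∈ parabolic cs K := by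
  induction ω with
  | nil => simp [cs.wordProd_nil]
  | cons i α ih =>
    rw [cs.wordProd_cons]
    exact mul_mem (simple_mem_parabolic cs K (hω i List.mem_cons_self))
      (ih fun b hb => hω b (List.mem_cons_of_mem i hb))

lemma exists_word_of_mem_parabolic {v : W} (hv : v ∈ parabolic cs K) :
    ∃ ω : List B, (∀ b ∈ ω, b ∈ K) ∧ π ω = v := by
  refine Subgroup.closure_induction ?_ ?_ ?_ ?_ hv
  · rintro x ⟨j, hj, rfl⟩
    exact ⟨[j], by simpa using hj, by simp⟩
  · exact ⟨[], by simp, by simp⟩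
  · rintro x y - - ⟨α, hα, hα2⟩ ⟨β, hβ, hβ2⟩
    refine ⟨α ++ β, ?_, ?_⟩
    · intro b hb
      rcases List.mem_append.mp hb with h | h
      · exact hα b h
      · exact hβ b h
    · rw [cs.wordProd_append, hα2, hβ2]
  · rintro x - ⟨α, hα, hα2⟩
    exact ⟨α.reverse, fun b hb => hα b (List.mem_reverse.mp hb), by rw [cs.wordProd_reverse, hα2]⟩

/-- Every element of a parabolic subgroup has a reduced word with letters in `K`. -/
lemma reduced_subword : ∀ (n : ℕ) (ω : List B), ω.length ≤ n → (∀ b ∈ ω, b ∈ K) →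
    ∃ ω' : List B, (∀ b ∈ ω', b ∈ K) ∧ cs.IsReduced ω' ∧ π ω' = π ω := by
  intro n
  induction n with
  | zero =>
    intro ω hlen _
    rw [Nat.le_zero, List.length_eq_zero_iff] at hlen
    exact ⟨[], by simp, by simp [CoxeterSystem.IsReduced], by rw [hlen]⟩
  | succ n ih =>
  intro ω hlen hωK
  by_cases hred : cs.IsReduced ω
  · exact ⟨ω, hωK, hred, rfl⟩
  · -- find minimal non-reduced prefix
    have hex : ∃ k, ¬ cs.IsReduced (ω.take k) := ⟨ω.length, by rwa [List.take_length]⟩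
    have hk₀spec' : ¬ cs.IsReduced (ω.take (Nat.find hex)) := Nat.find_spec hex
    have hk₀pos : Nat.find hex ≠ 0 := by
      intro h0
      rw [h0] at hk₀spec'
      exact hk₀spec' (by simp [CoxeterSystem.IsReduced])
    obtain ⟨k, hk⟩ : ∃ k, Nat.find hex = k + 1 := ⟨Nat.find hex - 1, (Nat.succ_pred_eq_of_pos
      (Nat.pos_of_ne_zero hk₀pos)).symm⟩
    have hk₀spec : ¬ cs.IsReduced (ω.take (k+1)) := by rwa [hk] at hk₀spec'
    have hkred : cs.IsReduced (ω.take k) := by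
      by_contra hc
      exact Nat.find_min hex (by omega) hc
    have hklt : k < ω.length := by
      by_contra hc
      push_neg at hc
      rw [List.take_of_length_le (by omega)] at hk₀spec
      rw [List.take_of_length_le hc] at hkred
      exact hk₀spec hkred
    have htake : ω.take (k+1) = ω.take k ++ [ω[k]] := by
      rw [List.take_succ, List.getElem?_eq_getElem hklt]
      simp
    have hlen_take : (ω.take k).length = k := List.length_take_of_le (by omega)
    have hdesc : cs.IsRightDescent (π (ω.take k)) (ω[k]) := by
      have hlt : ℓ (π (ω.take (k+1))) < k + 1 := by
        have hle := cs.length_wordProd_le (ω.take (k+1))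
        rw [List.length_take_of_le (by omega)] at hle
        have hne : ℓ (π (ω.take (k+1))) ≠ k + 1 := by
          intro he
          exact hk₀spec (by rw [CoxeterSystem.IsReduced, he, List.length_take_of_le (by omega)])
        omega
      rw [htake, cs.wordProd_append, cs.wordProd_singleton] at hlt
      have hky : ℓ (π (ω.take k)) = k := by
        rw [CoxeterSystem.IsReduced] at hkred
        rw [hkred, hlen_take]
      unfold CoxeterSystem.IsRightDescent
      rcases cs.length_mul_simple (π (ω.take k)) (ω[k]) with h | h <;> omega
    obtain ⟨j, hjk, hjer⟩ := exchange cs hkred hdesc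
    set ω' := (ω.take k).eraseIdx j ++ ω.drop (k+1) with hω'
    have hω'K : ∀ b ∈ ω', b ∈ K := by
      intro b hb
      rcases List.mem_append.mp hb with h | h
      · exact hωK b (List.take_subset k ω (List.eraseIdx_subset h))
      · exact hωK b (List.drop_subset _ ω h)
    have hω'prod : π ω' = π ω := by
      rw [hω', cs.wordProd_append, hjer]
      calc (π (ω.take k) * s (ω[k])) * π (ω.drop (k+1))
          = π ((ω.take k ++ [ω[k]]) ++ ω.drop (k+1)) := by
            rw [cs.wordProd_append, cs.wordProd_append, cs.wordProd_singleton]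
        _ = π ω := by rw [← htake, List.take_append_drop]
    have hω'len : ω'.length < ω.length := by
      rw [hω', List.length_append, List.length_eraseIdx]
      rw [hlen_take] at hjk ⊢
      simp [hjk, List.length_drop]
      omega
    obtain ⟨ωf, h1, h2, h3⟩ := ih ω' (by omega) hω'K
    exact ⟨ωf, h1, h2, by rw [h3, hω'prod]⟩

lemma exists_reduced_word_of_mem_parabolic {v : W} (hv : v ∈ parabolic cs K) :
    ∃ ω : List B, (∀ b ∈ ω, b ∈ K) ∧ cs.IsReduced ω ∧ π ω = v := by
  obtain ⟨ω, hωK, rfl⟩ := exists_word_of_mem_parabolic cs K hv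
  exact reduced_subword cs K ω.length ω le_rfl hωK


/-- descent decomposition of a nontrivial parabolic element -/
lemma parabolic_descent {v : W} (hv : v ∈ parabolic cs K) (hv1 : v ≠ 1) :
    ∃ j ∈ K, ∃ v' ∈ parabolic cs K, v = v' * s j ∧ ℓ v' + 1 = ℓ v := by
  obtain ⟨ω, hωK, hred, rfl⟩ := exists_reduced_word_of_mem_parabolic cs K hv
  rcases List.eq_nil_or_concat ω with rfl | ⟨ω', j, rfl⟩
  · simp at hv1
  · refine ⟨j, hωK j (by simp), π ω', wordProd_mem_parabolic cs K
      (fun b hb => hωK b (by simp [hb])), by rw [cs.wordProd_concat], ?_⟩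
    have h1 : ℓ (π (ω'.concat j)) = ω'.length + 1 := by
      rw [CoxeterSystem.IsReduced] at hred
      rw [hred, List.length_concat]
    have h2 : ℓ (π ω') ≤ ω'.length := cs.length_wordProd_le ω'
    have h3 : ℓ (π (ω'.concat j)) ≤ ℓ (π ω') + 1 := by
      rw [cs.wordProd_concat]
      have := cs.length_mul_le (π ω') (s j)
      rw [cs.length_simple] at this
      exact this
    omega

/-- existence of a minimal length element in each coset -/
lemma exists_min_in_coset (w : W) :
    ∃ u : W, u⁻¹ * w ∈ parabolic cs K ∧ ∀ v ∈ parabolic cs K, ℓ u ≤ ℓ (u * v) := by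
  have hex : ∃ n, ∃ x : W, x⁻¹ * w ∈ parabolic cs K ∧ ℓ x = n :=
    ⟨ℓ w, w, by simp [one_mem], rfl⟩
  obtain ⟨u, hu, hlen⟩ := Nat.find_spec hex
  refine ⟨u, hu, fun v hv => ?_⟩
  have : (u * v)⁻¹ * w ∈ parabolic cs K := by
    have : (u * v)⁻¹ * w = v⁻¹ * (u⁻¹ * w) := by group
    rw [this]
    exact mul_mem (inv_mem hv) hu
  have h2 : Nat.find hex ≤ ℓ (u * v) := Nat.find_le ⟨u * v, this, rfl⟩
  omega

/-- additivity of length for a coset-minimal element -/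
lemma min_additive {u : W} (hmin : ∀ v ∈ parabolic cs K, ℓ u ≤ ℓ (u * v)) :
    ∀ v ∈ parabolic cs K, ℓ (u * v) = ℓ u + ℓ v := by
  have main : ∀ n (v : W), ℓ v ≤ n → v ∈ parabolic cs K → ℓ (u * v) = ℓ u + ℓ v := by
    intro n
    induction n with
    | zero =>
      intro v hlv _
      rw [Nat.le_zero] at hlv
      rw [cs.length_eq_zero_iff] at hlv
      simp [hlv]
    | succ n ih =>
      intro v hlv hv
      rcases eq_or_ne v 1 with rfl | hv1
      · simp
      obtain ⟨j, hjK, v', hv', hvv', hlen'⟩ := parabolic_descent cs K hv hv1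
      have ihv' : ℓ (u * v') = ℓ u + ℓ v' := ih v' (by omega) hv'
      -- show ℓ (u * v' * s j) = ℓ (u * v') + 1
      by_contra hne
      have hval : u * v = u * v' * s j := by rw [hvv', mul_assoc]
      have hdesc : cs.IsRightDescent (u * v') j := by
        unfold CoxeterSystem.IsRightDescent
        rcases cs.length_mul_simple (u * v') j with h | h
        · exact absurd (by rw [hval, h, ihv']; omega) hne
        · omega
      -- build a reduced word for u * v'
      obtain ⟨ωu, hωulen, hωu⟩ := cs.exists_reduced_word u
      replace hωulen : ℓ u = ωu.length := by rw [hωu]; exact hωulen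
      obtain ⟨α, hαK, hαred, hα⟩ := exists_reduced_word_of_mem_parabolic cs K hv'
      have hαlen : α.length = ℓ v' := by
        rw [CoxeterSystem.IsReduced] at hαred
        rw [hα] at hαred
        omega
      have hωred : cs.IsReduced (ωu ++ α) := by
        rw [CoxeterSystem.IsReduced, cs.wordProd_append, ← hωu, hα, ihv',
          List.length_append, hωulen, hαlen]
      have hπ : π (ωu ++ α) = u * v' := by rw [cs.wordProd_append, ← hωu, hα]
      obtain ⟨idx, hidx, hjer⟩ := exchange cs hωred (by rwa [hπ])
      rcases Nat.lt_or_ge idx ωu.length with hcase | hcase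
      · -- contradiction with coset minimality
        rw [List.eraseIdx_append_of_lt_length hcase, cs.wordProd_append, hπ, hα] at hjer
        set t := v' * s j * v'⁻¹ with ht
        have htK : t ∈ parabolic cs K :=
          mul_mem (mul_mem hv' (simple_mem_parabolic cs K hjK)) (inv_mem hv')
        have hut : u * t = π (ωu.eraseIdx idx) := by
          rw [ht]
          have h' : π (ωu.eraseIdx idx) = (u * v' * s j) * v'⁻¹ := by rw [← hjer]; group
          rw [h']
          group
        have hlt : ℓ (u * t) < ℓ u := by
          rw [hut]
          have h1 := cs.length_wordProd_le (ωu.eraseIdx idx)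
          have h2 : (ωu.eraseIdx idx).length = ωu.length - 1 := by
            rw [List.length_eraseIdx]
            simp [hcase]
          omega
        exact absurd (hmin t htK) (by omega)
      · -- contradiction with ℓ v' + 1 = ℓ v
        rw [List.eraseIdx_append_of_length_le hcase, cs.wordProd_append, ← hωu, hπ] at hjer
        have hcanc : π (α.eraseIdx (idx - ωu.length)) = v' * s j :=
          mul_left_cancel (show u * π (α.eraseIdx (idx - ωu.length)) = u * (v' * s j) by
            rw [hjer, mul_assoc])
        have hveq : v = π (α.eraseIdx (idx - ωu.length)) := by rw [hvv', ← hcanc]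
        have hlv2 : ℓ v ≤ α.length - 1 := by
          rw [hveq]
          have h1 := cs.length_wordProd_le (α.eraseIdx (idx - ωu.length))
          have h2 : (α.eraseIdx (idx - ωu.length)).length = α.length - 1 := by
            rw [List.length_eraseIdx]
            have : idx - ωu.length < α.length := by
              rw [List.length_append] at hidx
              omega
            simp [this]
          omega
        omega
  intro v hv
  exact main (ℓ v) v le_rfl hv

/-- a minReps element is coset-minimal -/
lemma minReps_min {u : W} (hu : u ∈ minReps cs K) :
    ∀ v ∈ parabolic cs K, ℓ u ≤ ℓ (u * v) := by
  obtain ⟨u₀, hu₀, hmin₀⟩ := exists_min_in_coset cs K u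
  have hv : u₀⁻¹ * u ∈ parabolic cs K := hu₀
  rcases eq_or_ne (u₀⁻¹ * u) 1 with h1 | h1
  · rw [inv_mul_eq_one.mp h1] at hmin₀
    exact hmin₀
  · exfalso
    obtain ⟨j, hjK, v', hv', hvv', hlen'⟩ := parabolic_descent cs K hv h1
    have hu₀u : u = u₀ * (u₀⁻¹ * u) := by group
    have h2 : ℓ (u * s j) < ℓ u := by
      have e1 : u * s j = u₀ * v' := by
        rw [hu₀u, hvv']
        simp [mul_assoc, cs.simple_mul_simple_self]
      have e2 : ℓ (u₀ * v') = ℓ u₀ + ℓ v' := min_additive cs K hmin₀ v' hv'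
      have e3 : ℓ u = ℓ u₀ + ℓ (u₀⁻¹ * u) := by
        conv_lhs => rw [hu₀u]
        exact min_additive cs K hmin₀ _ hv
      rw [e1, e2, e3]
      omega
    exact absurd (hu j hjK) (by omega)

/-- additivity for minReps elements -/
lemma minReps_additive {u : W} (hu : u ∈ minReps cs K) {v : W} (hv : v ∈ parabolic cs K) :
    ℓ (u * v) = ℓ u + ℓ v :=
  min_additive cs K (minReps_min cs K hu) v hv

/-- existence and uniqueness of the minimal coset representative -/
lemma existsUnique_rep (w : W) :
    ∃! u : W, u ∈ minReps cs K ∧ u⁻¹ * w ∈ parabolic cs K := by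
  obtain ⟨u, hu, hmin⟩ := exists_min_in_coset cs K w
  refine ⟨u, ⟨?_, hu⟩, ?_⟩
  · intro i hiK
    have hne := cs.length_mul_simple_ne u i
    have := hmin (s i) (simple_mem_parabolic cs K hiK)
    omega
  · rintro u' ⟨hu', hu'w⟩
    have hmem : u'⁻¹ * u ∈ parabolic cs K := by
      have : u'⁻¹ * u = (u'⁻¹ * w) * (u⁻¹ * w)⁻¹ := by group
      rw [this]
      exact mul_mem hu'w (inv_mem hu)
    have hmem' : u⁻¹ * u' ∈ parabolic cs K := by
      have : u⁻¹ * u' = (u'⁻¹ * u)⁻¹ := by group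
      rw [this]
      exact inv_mem hmem
    have h1 : ℓ u = ℓ u' + ℓ (u'⁻¹ * u) := by
      have := minReps_additive cs K hu' hmem
      rwa [mul_inv_cancel_left] at this
    have h2 : ℓ u' = ℓ u + ℓ (u⁻¹ * u') := by
      have humem : u ∈ minReps cs K := by
        intro i hiK
        have hne := cs.length_mul_simple_ne u i
        have := hmin (s i) (simple_mem_parabolic cs K hiK)
        omega
      have := minReps_additive cs K humem hmem'
      rwa [mul_inv_cancel_left] at this
    have h3 : ℓ (u'⁻¹ * u) = 0 := by omega
    rw [cs.length_eq_zero_iff] at h3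
    exact inv_mul_eq_one.mp h3


/-- The minimal length representative of the coset `w * W_K`. -/
noncomputable def rep (w : W) : W := (existsUnique_rep cs K w).exists.choose

lemma rep_mem (w : W) : rep cs K w ∈ minReps cs K :=
  (existsUnique_rep cs K w).exists.choose_spec.1

lemma rep_rel (w : W) : (rep cs K w)⁻¹ * w ∈ parabolic cs K :=
  (existsUnique_rep cs K w).exists.choose_spec.2

lemma rep_eq {u w : W} (hu : u ∈ minReps cs K) (huw : u⁻¹ * w ∈ parabolic cs K) :
    rep cs K w = u := by
  obtain ⟨x, hx, hun⟩ := existsUnique_rep cs K w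
  rw [hun (rep cs K w) ⟨rep_mem cs K w, rep_rel cs K w⟩, hun u ⟨hu, huw⟩]

/-- Lemma D : the minimal double coset representative is also in `X_J`. -/
lemma rep_inv_mem (I J : Set B) {g : W} (hg : g ∈ minReps cs J) :
    (rep cs I g⁻¹)⁻¹ ∈ minReps cs J := by
  set β := rep cs I g⁻¹ with hβ
  set κ := β⁻¹ * g⁻¹ with hκ
  have hβm : β ∈ minReps cs I := rep_mem cs I g⁻¹
  have hκm : κ ∈ parabolic cs I := rep_rel cs I g⁻¹
  have hadd : ℓ (g⁻¹) = ℓ β + ℓ κ := by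
    have := minReps_additive cs I hβm hκm
    rwa [hκ, mul_inv_cancel_left] at this
  intro j hj
  have hne : ℓ (β⁻¹ * s j) ≠ ℓ β⁻¹ := cs.length_mul_simple_ne β⁻¹ j
  rcases lt_or_gt_of_ne hne with hlt | hgt
  · exfalso
    have hgs : g * s j = κ⁻¹ * (β⁻¹ * s j) := by
      have : g = κ⁻¹ * β⁻¹ := by rw [hκ]; group
      rw [this, mul_assoc]
    have h1 : ℓ (g * s j) ≤ ℓ κ + ℓ (β⁻¹ * s j) := by
      rw [hgs]
      have := cs.length_mul_le κ⁻¹ (β⁻¹ * s j)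
      rwa [cs.length_inv] at this
    have h2 : ℓ β⁻¹ = ℓ β := cs.length_inv β
    have h3 : ℓ g = ℓ (g⁻¹) := (cs.length_inv g).symm
    have := hg j hj
    omega
  · exact hgt


end CoxProof

end CoxProofDev

open CoxProof

set_option maxHeartbeats 1000000 in
/-- `Φ(x_J)(x_I) = Σ_{w ∈ X_I} 1_{W_J}^W(w) = Σ_{b ∈ X_{IJ}} |W(I,J,b)|`. -/
theorem statement14 [Fintype W] (cs : CoxeterSystem M W) (I J : Set B) :
    ∑ w : W, (minReps cs I).indicator (indTriv cs J) w
      = ∑ b : W, (doubleReps cs I J).indicator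
          (fun b => (Nat.card (Wset cs I J b) : ℚ)) b := by
  have natcard_eq : ∀ (S : Set W), Nat.card S = (Finset.univ.filter (fun x => x ∈ S)).card := by
    intro S
    rw [Nat.card_coe_set_eq, Set.ncard_eq_toFinset_card']
    congr 1
    ext x
    simp
  -- pointwise conversion, LHS
  have lhs_pt : ∀ w : W, (minReps cs I).indicator (indTriv cs J) w
      = ((Finset.univ.filter (fun g : W => w ∈ minReps cs I ∧ g ∈ minReps cs J ∧
          g⁻¹ * w * g ∈ parabolic cs J)).card : ℚ) := by
    intro w
    by_cases hw : w ∈ minReps cs I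
    · rw [Set.indicator_of_mem hw]
      unfold indTriv
      rw [natcard_eq]
      congr 2
      ext g
      simp [hw, Set.mem_setOf_eq]
    · rw [Set.indicator_of_notMem hw]
      rw [Finset.filter_false_of_mem (fun g _ => by simp [hw])]
      simp
  have rhs_pt : ∀ b : W, (doubleReps cs I J).indicator
        (fun b => (Nat.card (Wset cs I J b) : ℚ)) b
      = ((Finset.univ.filter (fun v : W => b ∈ doubleReps cs I J ∧ v ∈ Wset cs I J b)).card
          : ℚ) := by
    intro b
    by_cases hb : b ∈ doubleReps cs I J
    · rw [Set.indicator_of_mem hb]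
      rw [natcard_eq]
      congr 2
      ext v
      simp [hb]
    · rw [Set.indicator_of_notMem hb]
      rw [Finset.filter_false_of_mem (fun v _ => by simp [hb])]
      simp
  simp_rw [lhs_pt, rhs_pt]
  rw [← Nat.cast_sum, ← Nat.cast_sum]
  congr 1
  -- convert to cards over the product
  have prod_card : ∀ (q : W → W → Prop) (inst1 : ∀ w, DecidablePred (q w))
      (inst2 : DecidablePred (fun x : W × W => q x.1 x.2)),
      ∑ w : W, (@Finset.filter _ (q w) (inst1 w) Finset.univ).card
        = (@Finset.filter _ _ inst2 (Finset.univ : Finset (W × W))).card := by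
    intro q inst1 inst2
    rw [Finset.card_filter]
    rw [← Finset.univ_product_univ, Finset.sum_product]
    congr 1
    ext w
    rw [Finset.card_filter]
    congr 1
    funext g
    by_cases h : q w g <;> simp [h]
  have hLkey : ∑ w : W, (Finset.univ.filter (fun g : W => w ∈ minReps cs I ∧ g ∈ minReps cs J ∧
        g⁻¹ * w * g ∈ parabolic cs J)).card
      = ((Finset.univ : Finset (W × W)).filter (fun x => x.1 ∈ minReps cs I ∧
        x.2 ∈ minReps cs J ∧ x.2⁻¹ * x.1 * x.2 ∈ parabolic cs J)).card :=
    prod_card _ _ _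
  have hRkey : ∑ b : W, (Finset.univ.filter (fun v : W => b ∈ doubleReps cs I J ∧
        v ∈ Wset cs I J b)).card
      = ((Finset.univ : Finset (W × W)).filter (fun y => y.1 ∈ doubleReps cs I J ∧
        y.2 ∈ Wset cs I J y.1)).card :=
    prod_card _ _ _
  rw [hLkey, hRkey]
  -- the bijection
  apply Finset.card_bij'
    (i := fun (x : W × W) _ => ((rep cs I x.2⁻¹)⁻¹, x.1 * x.2))
    (j := fun (y : W × W) _ => (y.2 * (rep cs J y.2)⁻¹, rep cs J y.2))
  · -- maps into S₂
    rintro ⟨w, g⟩ hx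
    rw [Finset.mem_filter] at hx ⊢
    dsimp only at hx ⊢
    obtain ⟨-, hw, hg, hc⟩ := hx
    refine ⟨Finset.mem_univ _, ?_, ?_⟩
    · constructor
      · rw [Set.mem_inv, inv_inv]
        exact rep_mem cs I g⁻¹
      · exact rep_inv_mem cs I J hg
    · refine ⟨g, g⁻¹ * w * g, w, g * (rep cs I g⁻¹), hg, hc, by group, hw, ?_, ?_, ?_⟩
      · have := rep_rel cs I g⁻¹
        have h2 : g * rep cs I g⁻¹ = ((rep cs I g⁻¹)⁻¹ * g⁻¹)⁻¹ := by group
        rw [h2]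
        exact inv_mem this
      · show (w * g) * ((rep cs I g⁻¹)⁻¹)⁻¹ = w * (g * rep cs I g⁻¹)
        group
      · show g * ((rep cs I g⁻¹)⁻¹)⁻¹ = g * rep cs I g⁻¹
        group
  · -- maps into S₁
    rintro ⟨b, v⟩ hy
    rw [Finset.mem_filter] at hy ⊢
    dsimp only at hy ⊢
    obtain ⟨-, hb, u, c, p, q, hu, hc, hvuc, hp, hq, hvb, hub⟩ := hy
    have hrep : rep cs J v = u := rep_eq cs J hu (by rw [hvuc, inv_mul_cancel_left]; exact hc)
    have hpv : v * u⁻¹ = p := by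
      have h1 : v * b⁻¹ = (p * u) * b⁻¹ := by rw [hvb, ← hub]; group
      have h2 : v = p * u := mul_right_cancel h1
      rw [h2]; group
    refine ⟨Finset.mem_univ _, ?_, ?_, ?_⟩
    · show v * (rep cs J v)⁻¹ ∈ minReps cs I
      rw [hrep, hpv]
      exact hp
    · show rep cs J v ∈ minReps cs J
      rw [hrep]; exact hu
    · show (rep cs J v)⁻¹ * (v * (rep cs J v)⁻¹) * rep cs J v ∈ parabolic cs J
      rw [hrep]
      have : u⁻¹ * (v * u⁻¹) * u = u⁻¹ * v := by group
      rw [this, hvuc, inv_mul_cancel_left]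
      exact hc
  · -- left inverse
    rintro ⟨w, g⟩ hx
    rw [Finset.mem_filter] at hx
    dsimp only at hx
    obtain ⟨-, hw, hg, hc⟩ := hx
    have hrep : rep cs J (w * g) = g := rep_eq cs J hg (by
      have : g⁻¹ * (w * g) = g⁻¹ * w * g := by group
      rw [this]; exact hc)
    show ((w * g) * (rep cs J (w * g))⁻¹, rep cs J (w * g)) = (w, g)
    rw [hrep]
    ext
    · show (w * g) * g⁻¹ = w
      group
    · rfl
  · -- right inverse
    rintro ⟨b, v⟩ hy
    rw [Finset.mem_filter] at hy
    dsimp only at hy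
    obtain ⟨-, hb, u, c, p, q, hu, hc, hvuc, hp, hq, hvb, hub⟩ := hy
    have hrep : rep cs J v = u := rep_eq cs J hu (by rw [hvuc, inv_mul_cancel_left]; exact hc)
    have hbrep : rep cs I (rep cs J v)⁻¹ = b⁻¹ := by
      rw [hrep]
      refine rep_eq cs I ?_ ?_
      · have := hb.1
        rwa [Set.mem_inv] at this
      · rw [inv_inv]
        have : b * u⁻¹ = (u * b⁻¹)⁻¹ := by group
        rw [this, hub]
        exact inv_mem hq
    show ((rep cs I (rep cs J v)⁻¹)⁻¹, (v * (rep cs J v)⁻¹) * rep cs J v) = (b, v)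
    rw [hbrep, hrep]
    ext
    · show b⁻¹⁻¹ = b
      group
    · show (v * u⁻¹) * u = v
      group
end

section
/- Let (W,S) be a finite Coxeter system, I,J ⊆ S, b ∈ X_{IJ}, and w ∈ W. Then w ∈ W(I,J,b) if and only if there exist a ∈ X^I_{I ∩ bJb^{-1}}, c ∈ X^J_{J ∩ b^{-1}Ib}, and u ∈ X_I such that w = abc = uab; moreover such a, c, u are unique. -/
open scoped Classical

variable {B : Type*} {W : Type*} [Group W] {M : CoxeterMatrix B}

/-- The subset `I ∩ bJb⁻¹` of the simple reflections: those `i ∈ I` whose reflection is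
`b`-conjugate to a simple reflection indexed by `J`. -/
def interConj (cs : CoxeterSystem M W) (I J : Set B) (b : W) : Set B :=
  {i : B | i ∈ I ∧ ∃ j ∈ J, cs.simple i = b * cs.simple j * b⁻¹}

/-- `X^I_K = W_I ∩ X_K`: the minimal coset representatives of `W_I / W_K` for `K ⊆ I`. -/
def relReps (cs : CoxeterSystem M W) (I K : Set B) : Set W :=
  (parabolic cs I : Set W) ∩ minReps cs K

section Cox15Aux

variable (cs : CoxeterSystem M W)

local prefix:100 "𝔰" => cs.simple
local prefix:100 "πw" => cs.wordProd
local prefix:100 "ℓw" => cs.length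

private lemma cox15_zmod2 (x : ZMod 2) : x = 0 ∨ x = 1 := by revert x; decide

private lemma cox15_zmod2_add (x : ZMod 2) : x + x = 0 := by revert x; decide

private lemma cox15_conj_eq_iff (g t x : W) : (g * t * g⁻¹ = x) ↔ (t = g⁻¹ * x * g) := by
  constructor <;> intro h <;> subst h <;> group

/-- The basic involution used for the reflection-parity representation. -/
noncomputable def cox15_sig (i : B) : Equiv.Perm (W × ZMod 2) :=
  Function.Involutive.toPerm
    (fun p => (𝔰 i * p.1 * 𝔰 i, p.2 + if p.1 = 𝔰 i then 1 else 0))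
    (by
      rintro ⟨t, e⟩
      simp only [Prod.mk.injEq]
      constructor
      · calc 𝔰 i * (𝔰 i * t * 𝔰 i) * 𝔰 i
            = (𝔰 i * 𝔰 i) * t * (𝔰 i * 𝔰 i) := by group
          _ = t := by rw [cs.simple_mul_simple_self]; group
      · have h : (𝔰 i * t * 𝔰 i = 𝔰 i) ↔ (t = 𝔰 i) := by
          constructor
          · intro h
            have h2 : 𝔰 i * (t * 𝔰 i) = 𝔰 i * 1 := by rw [← mul_assoc, h, mul_one]
            have h3 : t * 𝔰 i = 𝔰 i * 𝔰 i := by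
              rw [mul_left_cancel h2, cs.simple_mul_simple_self]
            exact mul_right_cancel h3
          · intro h; rw [h, cs.simple_mul_simple_self, one_mul]
        rw [if_congr h rfl rfl, add_assoc, cox15_zmod2_add, add_zero])

lemma cox15_sig_apply (i : B) (t : W) (e : ZMod 2) :
    cox15_sig cs i (t, e) = (𝔰 i * t * 𝔰 i, e + if t = 𝔰 i then 1 else 0) := rfl

private lemma cox15_semiconj (i j : B) (n : ℕ) :
    𝔰 j * (𝔰 i * 𝔰 j) ^ n = (𝔰 j * 𝔰 i) ^ n * 𝔰 j :=
  SemiconjBy.pow_right (by unfold SemiconjBy; rw [mul_assoc]) n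

lemma cox15_sig_pow_apply (i j : B) (n : ℕ) (t : W) (e : ZMod 2) :
    ((cox15_sig cs i * cox15_sig cs j) ^ n) (t, e) =
      ((𝔰 i * 𝔰 j) ^ n * t * ((𝔰 i * 𝔰 j) ^ n)⁻¹,
        e + ∑ r ∈ Finset.range (2 * n),
          if t = (𝔰 j * 𝔰 i) ^ r * 𝔰 j then 1 else 0) := by
  induction n with
  | zero => simp
  | succ n ih =>
    have hinv : ((𝔰 i * 𝔰 j) ^ n)⁻¹ = (𝔰 j * 𝔰 i) ^ n := by
      rw [← inv_pow, mul_inv_rev, cs.inv_simple, cs.inv_simple]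
    have key1 : ((𝔰 i * 𝔰 j) ^ n)⁻¹ * 𝔰 j * (𝔰 i * 𝔰 j) ^ n = (𝔰 j * 𝔰 i) ^ (2 * n) * 𝔰 j := by
      rw [hinv, mul_assoc, cox15_semiconj, two_mul, pow_add, mul_assoc]
    have key2 : ((𝔰 i * 𝔰 j) ^ n)⁻¹ * (𝔰 j * (𝔰 i * 𝔰 j)) * (𝔰 i * 𝔰 j) ^ n
        = (𝔰 j * 𝔰 i) ^ (2 * n + 1) * 𝔰 j := by
      have hsc : SemiconjBy (𝔰 j * (𝔰 i * 𝔰 j)) (𝔰 i * 𝔰 j) (𝔰 j * 𝔰 i) := by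
        unfold SemiconjBy; simp only [mul_assoc]
      have h5 := hsc.pow_right n
      unfold SemiconjBy at h5
      rw [hinv, mul_assoc, h5, pow_succ, two_mul, pow_add]
      simp only [mul_assoc]
    rw [pow_succ', Equiv.Perm.mul_apply, ih, Equiv.Perm.mul_apply,
      cox15_sig_apply, cox15_sig_apply]
    have hcond1 : ((𝔰 i * 𝔰 j) ^ n * t * ((𝔰 i * 𝔰 j) ^ n)⁻¹ = 𝔰 j) ↔
        (t = (𝔰 j * 𝔰 i) ^ (2 * n) * 𝔰 j) := by
      rw [cox15_conj_eq_iff, key1]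
    have hg : 𝔰 j * ((𝔰 i * 𝔰 j) ^ n * t * ((𝔰 i * 𝔰 j) ^ n)⁻¹) * 𝔰 j =
        (𝔰 j * (𝔰 i * 𝔰 j) ^ n) * t * (𝔰 j * (𝔰 i * 𝔰 j) ^ n)⁻¹ := by
      rw [mul_inv_rev, cs.inv_simple]; simp only [mul_assoc]
    have hh : (𝔰 j * (𝔰 i * 𝔰 j) ^ n)⁻¹ * 𝔰 i * (𝔰 j * (𝔰 i * 𝔰 j) ^ n) =
        ((𝔰 i * 𝔰 j) ^ n)⁻¹ * (𝔰 j * (𝔰 i * 𝔰 j)) * (𝔰 i * 𝔰 j) ^ n := by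
      rw [mul_inv_rev, cs.inv_simple]; simp only [mul_assoc]
    have hcond2 : (𝔰 j * ((𝔰 i * 𝔰 j) ^ n * t * ((𝔰 i * 𝔰 j) ^ n)⁻¹) * 𝔰 j = 𝔰 i) ↔
        (t = (𝔰 j * 𝔰 i) ^ (2 * n + 1) * 𝔰 j) := by
      rw [hg, cox15_conj_eq_iff, hh, key2]
    have hc : (𝔰 i * 𝔰 j)⁻¹ = 𝔰 j * 𝔰 i := by
      rw [mul_inv_rev, cs.inv_simple, cs.inv_simple]
    simp only [Prod.mk.injEq]
    constructor
    · rw [pow_succ' (𝔰 i * 𝔰 j) n, mul_inv_rev, hc]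
      simp only [mul_assoc]
    · rw [if_congr hcond1 rfl rfl, if_congr hcond2 rfl rfl,
        show 2 * (n + 1) = 2 * n + 1 + 1 from by ring,
        Finset.sum_range_succ, Finset.sum_range_succ]
      simp only [add_assoc]

lemma cox15_liftable : M.IsLiftable (fun i => cox15_sig cs i) := by
  intro i j
  apply Equiv.ext
  rintro ⟨t, e⟩
  rw [cox15_sig_pow_apply, cs.simple_mul_simple_pow]
  simp only [one_mul, inv_one, mul_one, Equiv.Perm.one_apply, Prod.mk.injEq]
  refine ⟨trivial, ?_⟩
  have hrw : ∀ r, (𝔰 j * 𝔰 i) ^ (M i j + r) = (𝔰 j * 𝔰 i) ^ r := by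
    intro r; rw [pow_add, cs.simple_mul_simple_pow' i j, one_mul]
  rw [two_mul, Finset.sum_range_add]
  simp only [hrw]
  rw [cox15_zmod2_add, add_zero]

/-- The reflection-parity representation `W →* Perm (W × ZMod 2)`. -/
noncomputable def cox15_FF : W →* Equiv.Perm (W × ZMod 2) :=
  cs.lift ⟨fun i => cox15_sig cs i, cox15_liftable cs⟩

lemma cox15_FF_simple (i : B) : cox15_FF cs (𝔰 i) = cox15_sig cs i :=
  cs.lift_apply_simple (cox15_liftable cs) i

/-- Parity function: `NN w t` is the mod-2 number of occurrences of `t` in the right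
inversion sequence of any word for `w`. -/
noncomputable def cox15_NN (w t : W) : ZMod 2 := (cox15_FF cs w (t, 0)).2

lemma cox15_FF_word (ω : List B) (t : W) (e : ZMod 2) :
    cox15_FF cs (πw ω) (t, e) =
      (πw ω * t * (πw ω)⁻¹,
        e + ((cs.rightInvSeq ω).map (fun x => if t = x then (1 : ZMod 2) else 0)).sum) := by
  induction ω with
  | nil => simp
  | cons i ω ih =>
    have hris : cs.rightInvSeq (i :: ω) =
        ((πw ω)⁻¹ * 𝔰 i * πw ω) :: cs.rightInvSeq ω := rfl
    rw [cs.wordProd_cons, map_mul, Equiv.Perm.mul_apply, ih, cox15_FF_simple,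
      cox15_sig_apply, hris]
    have hcond : (πw ω * t * (πw ω)⁻¹ = 𝔰 i) ↔ (t = (πw ω)⁻¹ * 𝔰 i * πw ω) :=
      cox15_conj_eq_iff _ _ _
    simp only [Prod.mk.injEq]
    constructor
    · rw [mul_inv_rev, cs.inv_simple]
      simp only [mul_assoc]
    · rw [if_congr hcond rfl rfl, List.map_cons, List.sum_cons]
      ring

lemma cox15_FF_apply (w t : W) (e : ZMod 2) :
    cox15_FF cs w (t, e) = (w * t * w⁻¹, e + cox15_NN cs w t) := by
  obtain ⟨ω, rfl⟩ := cs.wordProd_surjective w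
  rw [cox15_FF_word]
  unfold cox15_NN
  rw [cox15_FF_word, zero_add]

lemma cox15_NN_one (t : W) : cox15_NN cs 1 t = 0 := by
  unfold cox15_NN
  rw [map_one]
  rfl

lemma cox15_NN_mul (u v t : W) :
    cox15_NN cs (u * v) t = cox15_NN cs v t + cox15_NN cs u (v * t * v⁻¹) := by
  have h1 : cox15_FF cs (u * v) (t, 0) =
      (u * (v * t * v⁻¹) * u⁻¹, (0 + cox15_NN cs v t) + cox15_NN cs u (v * t * v⁻¹)) := by
    rw [map_mul, Equiv.Perm.mul_apply, cox15_FF_apply, cox15_FF_apply]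
  show (cox15_FF cs (u * v) (t, 0)).2 = _
  rw [h1]
  change (0 + cox15_NN cs v t) + cox15_NN cs u (v * t * v⁻¹) = _
  rw [zero_add]

/-- If the parity is 1 then `t` occurs in the right inversion sequence,
and multiplication by `t` erases a letter. -/
lemma cox15_erase (ω : List B) (t : W) (h : cox15_NN cs (πw ω) t = 1) :
    t ∈ cs.rightInvSeq ω ∧ ∃ k, k < ω.length ∧ πw ω * t = πw (ω.eraseIdx k) := by
  have hsum : cox15_NN cs (πw ω) t =
      ((cs.rightInvSeq ω).map (fun x => if t = x then (1 : ZMod 2) else 0)).sum := by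
    unfold cox15_NN
    rw [cox15_FF_word, zero_add]
  have hmem : t ∈ cs.rightInvSeq ω := by
    by_contra hmem
    have : ((cs.rightInvSeq ω).map (fun x => if t = x then (1 : ZMod 2) else 0)).sum = 0 := by
      apply List.sum_eq_zero
      intro x hx
      obtain ⟨y, hy, rfl⟩ := List.mem_map.mp hx
      rw [if_neg]
      rintro rfl
      exact hmem hy
    rw [hsum, this] at h
    exact absurd h (by decide)
  refine ⟨hmem, ?_⟩
  obtain ⟨k, hk, hkt⟩ := List.mem_iff_getElem.mp hmem
  have hk' : k < ω.length := by
    have := cs.length_rightInvSeq ω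
    omega
  refine ⟨k, hk', ?_⟩
  have hgd : (cs.rightInvSeq ω).getD k 1 = t := by
    rw [List.getD_eq_getElem _ _ hk, hkt]
  rw [← hgd]
  exact cs.wordProd_mul_getD_rightInvSeq ω k

lemma cox15_length_mul_lt_of_NN (w t : W) (h : cox15_NN cs w t = 1) :
    ℓw (w * t) < ℓw w := by
  obtain ⟨ω, hlen, hw⟩ := cs.exists_reduced_word w
  subst hw
  obtain ⟨-, k, hk, hkerase⟩ := cox15_erase cs ω t h
  calc ℓw (πw ω * t) = ℓw (πw (ω.eraseIdx k)) := by rw [hkerase]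
    _ ≤ (ω.eraseIdx k).length := cs.length_wordProd_le _
    _ < ω.length := by rw [List.length_eraseIdx]; simp only [if_pos hk]; omega
    _ = ℓw (πw ω) := hlen.eq.symm

lemma cox15_NN_simple_self (i : B) : cox15_NN cs (𝔰 i) (𝔰 i) = 1 := by
  unfold cox15_NN
  rw [cox15_FF_simple, cox15_sig_apply, if_pos rfl]
  simp

lemma cox15_NN_refl_self {t : W} (ht : cs.IsReflection t) : cox15_NN cs t t = 1 := by
  obtain ⟨u, i, rfl⟩ := ht
  set T := u * 𝔰 i * u⁻¹ with hT
  have hsimp : u⁻¹ * T * u⁻¹⁻¹ = 𝔰 i := by rw [hT]; group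
  have h0 : cox15_NN cs u⁻¹ T + cox15_NN cs u (𝔰 i) = 0 := by
    rw [← hsimp, ← cox15_NN_mul, mul_inv_cancel, cox15_NN_one]
  have hsimp2 : (𝔰 i * u⁻¹) * T * (𝔰 i * u⁻¹)⁻¹ = 𝔰 i := by
    rw [hT, mul_inv_rev, inv_inv, cs.inv_simple]
    simp only [mul_assoc, inv_mul_cancel_left]
    rw [cs.simple_mul_simple_self, mul_one]
  have hsimp3 : u⁻¹ * T * u⁻¹⁻¹ = 𝔰 i := hsimp
  have hTT : cox15_NN cs T T = cox15_NN cs (𝔰 i * u⁻¹) T + cox15_NN cs u (𝔰 i) := by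
    nth_rw 1 [show T = u * (𝔰 i * u⁻¹) from by rw [hT, mul_assoc]]
    rw [cox15_NN_mul, hsimp2]
  have hsplit : cox15_NN cs (𝔰 i * u⁻¹) T = cox15_NN cs u⁻¹ T + 1 := by
    rw [cox15_NN_mul, hsimp3, cox15_NN_simple_self]
  rw [hTT, hsplit]
  calc cox15_NN cs u⁻¹ T + 1 + cox15_NN cs u (𝔰 i)
      = (cox15_NN cs u⁻¹ T + cox15_NN cs u (𝔰 i)) + 1 := by ring
    _ = 1 := by rw [h0, zero_add]

lemma cox15_NN_eq_one_iff {t : W} (ht : cs.IsReflection t) (w : W) :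
    cox15_NN cs w t = 1 ↔ ℓw (w * t) < ℓw w := by
  constructor
  · exact cox15_length_mul_lt_of_NN cs w t
  · intro hlt
    rcases cox15_zmod2 (cox15_NN cs w t) with h0 | h1
    · exfalso
      have h2 : cox15_NN cs (w * t) t = 1 := by
        rw [cox15_NN_mul, cox15_NN_refl_self cs ht,
          show t * t * t⁻¹ = t from by rw [ht.mul_self, one_mul, ht.inv], h0, add_zero]
      have h3 := cox15_length_mul_lt_of_NN cs (w * t) t h2
      rw [mul_assoc, ht.mul_self, mul_one] at h3
      omega
    · exact h1

lemma cox15_NN_eq_zero_iff {t : W} (ht : cs.IsReflection t) (w : W) :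
    cox15_NN cs w t = 0 ↔ ℓw w < ℓw (w * t) := by
  have hne := ht.length_mul_left_ne w
  rcases cox15_zmod2 (cox15_NN cs w t) with h0 | h1
  · have hnlt := (cox15_NN_eq_one_iff cs ht w).not.mp (by rw [h0]; decide)
    simp only [h0, true_iff]
    omega
  · have hlt := (cox15_NN_eq_one_iff cs ht w).mp h1
    rw [h1]
    constructor
    · intro h; exact absurd h (by decide)
    · intro h; omega

/-! ### Parabolic subgroups and words -/

lemma cox15_wordProd_mem_parabolic {I : Set B} {ω : List B} (h : ∀ i ∈ ω, i ∈ I) :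
    πw ω ∈ parabolic cs I := by
  induction ω with
  | nil => rw [cs.wordProd_nil]; exact one_mem _
  | cons i ω ih =>
    rw [cs.wordProd_cons]
    exact mul_mem (Subgroup.subset_closure ⟨i, h i (List.mem_cons_self), rfl⟩)
      (ih fun j hj => h j (List.mem_cons_of_mem i hj))

lemma cox15_exists_word_of_mem_parabolic {I : Set B} {w : W} (h : w ∈ parabolic cs I) :
    ∃ ω, (∀ i ∈ ω, i ∈ I) ∧ w = πw ω := by
  induction h using Subgroup.closure_induction with
  | mem x hx =>
    obtain ⟨i, hi, rfl⟩ := hx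
    exact ⟨[i], by simpa using hi, by rw [cs.wordProd_singleton]⟩
  | one => exact ⟨[], by simp, by rw [cs.wordProd_nil]⟩
  | mul x y hx hy ihx ihy =>
    obtain ⟨ω₁, h₁, rfl⟩ := ihx
    obtain ⟨ω₂, h₂, rfl⟩ := ihy
    exact ⟨ω₁ ++ ω₂, by
      intro i hi
      rcases List.mem_append.mp hi with h | h
      exacts [h₁ i h, h₂ i h], by rw [cs.wordProd_append]⟩
  | inv x hx ihx =>
    obtain ⟨ω, h₁, rfl⟩ := ihx
    exact ⟨ω.reverse, fun i hi => h₁ i (List.mem_reverse.mp hi), by rw [cs.wordProd_reverse]⟩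

lemma cox15_exists_reduced_word_of_word {I : Set B} :
    ∀ ω : List B, (∀ i ∈ ω, i ∈ I) →
      ∃ α, (∀ i ∈ α, i ∈ I) ∧ cs.IsReduced α ∧ πw α = πw ω := by
  intro ω
  induction ω with
  | nil => exact fun _ => ⟨[], by simp, by simp [CoxeterSystem.IsReduced], rfl⟩
  | cons i ω ih =>
    intro h
    obtain ⟨α, hαI, hαred, hα⟩ := ih fun j hj => h j (List.mem_cons_of_mem i hj)
    have hiI : i ∈ I := h i (List.mem_cons_self)
    rcases cs.length_simple_mul (πw α) i with hup | hdown
    · refine ⟨i :: α, ?_, ?_, ?_⟩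
      · intro j hj
        rcases List.mem_cons.mp hj with rfl | hj
        exacts [hiI, hαI j hj]
      · show ℓw (πw (i :: α)) = (i :: α).length
        rw [cs.wordProd_cons, hup, hαred]
        simp
      · rw [cs.wordProd_cons, cs.wordProd_cons, hα]
    · -- a left descent: use the reverse word
      set β := α.reverse with hβ
      have hβred : cs.IsReduced β := (cs.isReduced_reverse_iff α).mpr hαred
      have hβprod : πw β = (πw α)⁻¹ := cs.wordProd_reverse α
      have e1 : ℓw ((πw α)⁻¹ * 𝔰 i) = ℓw (𝔰 i * πw α) := by
        calc ℓw ((πw α)⁻¹ * 𝔰 i) = ℓw (((πw α)⁻¹ * 𝔰 i)⁻¹) := (cs.length_inv _).symm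
          _ = ℓw (𝔰 i * πw α) := by rw [mul_inv_rev, inv_inv, cs.inv_simple]
      have hlt : ℓw (πw β * 𝔰 i) < ℓw (πw β) := by
        rw [hβprod, e1, cs.length_inv]
        omega
      have hNN : cox15_NN cs (πw β) (𝔰 i) = 1 :=
        (cox15_NN_eq_one_iff cs (cs.isReflection_simple i) _).mpr hlt
      obtain ⟨-, k, hk, hkerase⟩ := cox15_erase cs β (𝔰 i) hNN
      set γ := (β.eraseIdx k).reverse with hγ
      have hγI : ∀ j ∈ γ, j ∈ I := by
        intro j hj
        have h1 : j ∈ β.eraseIdx k := List.mem_reverse.mp hj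
        have h2 : j ∈ β := (List.eraseIdx_sublist β k).mem h1
        exact hαI j (List.mem_reverse.mp h2)
      have hγprod : πw γ = 𝔰 i * πw α := by
        rw [hγ, cs.wordProd_reverse, ← hkerase, hβprod, mul_inv_rev, inv_inv, cs.inv_simple]
      have hγlen : γ.length + 1 = α.length := by
        have := List.length_eraseIdx (l := β) (i := k)
        have hkβ : k < β.length := hk
        simp only [hγ, List.length_reverse]
        rw [this, if_pos hkβ]
        have : β.length = α.length := by simp [hβ]
        omega
      refine ⟨γ, hγI, ?_, ?_⟩
      · show ℓw (πw γ) = γ.length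
        rw [hγprod]
        have hα2 : ℓw (πw α) = α.length := hαred
        omega
      · rw [hγprod, cs.wordProd_cons, hα]

lemma cox15_exists_reduced_word_parabolic {I : Set B} {w : W} (h : w ∈ parabolic cs I) :
    ∃ ω, (∀ i ∈ ω, i ∈ I) ∧ cs.IsReduced ω ∧ w = πw ω := by
  obtain ⟨ω, hω, rfl⟩ := cox15_exists_word_of_mem_parabolic cs h
  obtain ⟨α, h1, h2, h3⟩ := cox15_exists_reduced_word_of_word cs ω hω
  exact ⟨α, h1, h2, h3.symm⟩

lemma cox15_mem_parabolic_of_mem_rightInvSeq {I : Set B} :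
    ∀ (ω : List B), (∀ i ∈ ω, i ∈ I) → ∀ t ∈ cs.rightInvSeq ω, t ∈ parabolic cs I := by
  intro ω
  induction ω with
  | nil => intro _ t ht; simp at ht
  | cons i ω ih =>
    intro h t ht
    have hris : cs.rightInvSeq (i :: ω) =
        ((πw ω)⁻¹ * 𝔰 i * πw ω) :: cs.rightInvSeq ω := rfl
    rw [hris] at ht
    rcases List.mem_cons.mp ht with rfl | ht
    · have hω : πw ω ∈ parabolic cs I :=
        cox15_wordProd_mem_parabolic cs fun j hj => h j (List.mem_cons_of_mem i hj)
      exact mul_mem (mul_mem (inv_mem hω)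
        (Subgroup.subset_closure ⟨i, h i (List.mem_cons_self), rfl⟩)) hω
    · exact ih (fun j hj => h j (List.mem_cons_of_mem i hj)) t ht

lemma cox15_simple_of_parabolic_length_one {I : Set B} {t : W} (ht : t ∈ parabolic cs I)
    (h1 : ℓw t = 1) : ∃ i ∈ I, t = 𝔰 i := by
  obtain ⟨ω, hωI, hωred, rfl⟩ := cox15_exists_reduced_word_parabolic cs ht
  have hlen : ω.length = 1 := by rw [← hωred]; exact h1
  obtain ⟨i, rfl⟩ := List.length_eq_one_iff.mp hlen
  exact ⟨i, hωI i (List.mem_singleton_self i), by rw [cs.wordProd_singleton]⟩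

lemma cox15_descent_parabolic {I : Set B} {v : W} (hv : v ∈ parabolic cs I) (hne : v ≠ 1) :
    ∃ i ∈ I, v * 𝔰 i ∈ parabolic cs I ∧ ℓw (v * 𝔰 i) + 1 = ℓw v := by
  obtain ⟨ω, hωI, hωred, rfl⟩ := cox15_exists_reduced_word_parabolic cs hv
  rcases List.eq_nil_or_concat ω with rfl | ⟨α, i, rfl⟩
  · exact absurd (cs.wordProd_nil) hne
  · have hprod : πw (α.concat i) = πw α * 𝔰 i := cs.wordProd_concat i α
    have hmemα : ∀ j ∈ α, j ∈ I := fun j hj => hωI j (by simp [hj])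
    have hαred : cs.IsReduced α := by
      have := hωred.take α.length
      rwa [show (α.concat i).take α.length = α from by
        rw [List.concat_eq_append, List.take_left]] at this
    refine ⟨i, hωI i (by simp), ?_, ?_⟩
    · rw [hprod, mul_assoc, cs.simple_mul_simple_self, mul_one]
      exact cox15_wordProd_mem_parabolic cs hmemα
    · rw [hprod, mul_assoc, cs.simple_mul_simple_self, mul_one]
      have h1 : ℓw (πw α) = α.length := hαred
      have h2 : ℓw (πw α * 𝔰 i) = α.length + 1 := by
        rw [← hprod]
        have h3 : ℓw (πw (α.concat i)) = (α.concat i).length := hωred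
        simpa using h3
      omega

lemma cox15_parabolic_mono {K I : Set B} (h : K ⊆ I) : parabolic cs K ≤ parabolic cs I :=
  Subgroup.closure_mono (Set.image_mono h)


/-! ### Minimal coset representatives and the decomposition `w = w^I · w_I` -/

lemma cox15_exists_min_decomp (I : Set B) (w : W) :
    ∃ x v, x ∈ minReps cs I ∧ v ∈ parabolic cs I ∧ w = x * v ∧
      ∀ u ∈ parabolic cs I, ℓw (x * u) = ℓw x + ℓw u := by
  have hP : ∃ n, ∃ v ∈ parabolic cs I, ℓw (w * v) = n := ⟨ℓw (w * 1), 1, one_mem _, rfl⟩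
  obtain ⟨v₀, hv₀, hlen0⟩ := Nat.find_spec hP
  set x := w * v₀ with hx
  have hmin : ∀ v ∈ parabolic cs I, ℓw x ≤ ℓw (x * v) := by
    intro v hv
    have : ℓw (x * v) = ℓw (w * (v₀ * v)) := by rw [hx, mul_assoc]
    rw [this, hlen0]
    exact Nat.find_min' hP ⟨v₀ * v, mul_mem hv₀ hv, rfl⟩
  have key : ∀ n, ∀ u ∈ parabolic cs I, ℓw u ≤ n → ℓw (x * u) = ℓw x + ℓw u := by
    intro n
    induction n with
    | zero =>
      intro u hu hun
      have : u = 1 := cs.length_eq_zero_iff.mp (Nat.le_zero.mp hun)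
      subst this
      simp
    | succ n ih =>
      intro u hu hun
      by_cases h1 : u = 1
      · subst h1; simp
      obtain ⟨i, hiI, humem, hlen'⟩ := cox15_descent_parabolic cs hu h1
      set u' := u * 𝔰 i with hu'
      have huu : u = u' * 𝔰 i := by
        rw [hu', mul_assoc, cs.simple_mul_simple_self, mul_one]
      have ihu : ℓw (x * u') = ℓw x + ℓw u' := ih u' humem (by omega)
      have hstep : ℓw (x * u' * 𝔰 i) = ℓw (x * u') + 1 := by
        rcases cs.length_mul_simple (x * u') i with h | h
        · exact h
        · exfalso
          have hNN : cox15_NN cs (x * u') (𝔰 i) = 1 :=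
            (cox15_NN_eq_one_iff cs (cs.isReflection_simple i) _).mpr (by omega)
          rw [cox15_NN_mul] at hNN
          have hNu' : cox15_NN cs u' (𝔰 i) = 0 := by
            apply (cox15_NN_eq_zero_iff cs (cs.isReflection_simple i) u').mpr
            rw [← huu]
            omega
          have hNx : cox15_NN cs x (u' * 𝔰 i * u'⁻¹) = 1 := by
            rw [hNu', zero_add] at hNN
            exact hNN
          have hlt := cox15_length_mul_lt_of_NN cs x _ hNx
          have htmem : u' * 𝔰 i * u'⁻¹ ∈ parabolic cs I :=
            mul_mem (mul_mem humem (Subgroup.subset_closure ⟨i, hiI, rfl⟩)) (inv_mem humem)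
          exact absurd (hmin _ htmem) (by omega)
      rw [huu, ← mul_assoc, hstep, ihu, ← huu]
      omega
  refine ⟨x, v₀⁻¹, ?_, inv_mem hv₀, by rw [hx, mul_assoc, mul_inv_cancel, mul_one], fun u hu => key (ℓw u) u hu le_rfl⟩
  intro i hi
  have := key (ℓw (𝔰 i)) (𝔰 i) (Subgroup.subset_closure ⟨i, hi, rfl⟩) le_rfl
  rw [this, cs.length_simple]
  omega

lemma cox15_minReps_mul_length {I : Set B} {x : W} (hx : x ∈ minReps cs I) :
    ∀ u ∈ parabolic cs I, ℓw (x * u) = ℓw x + ℓw u := by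
  obtain ⟨x₀, v₀, hx₀, hv₀, hxe, hadd⟩ := cox15_exists_min_decomp cs I x
  have hv1 : v₀ = 1 := by
    by_contra h1
    obtain ⟨i, hiI, hmem, hlen'⟩ := cox15_descent_parabolic cs hv₀ h1
    have h2 : ℓw (x * 𝔰 i) < ℓw x := by
      rw [hxe, mul_assoc, hadd (v₀ * 𝔰 i) hmem, hadd v₀ hv₀]
      omega
    exact absurd (hx i hiI) (by omega)
  rw [hv1, mul_one] at hxe
  subst hxe
  exact hadd

lemma cox15_decomp_unique {I : Set B} {x x' v v' : W} (hx : x ∈ minReps cs I)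
    (hx' : x' ∈ minReps cs I) (hv : v ∈ parabolic cs I) (hv' : v' ∈ parabolic cs I)
    (he : x * v = x' * v') : x = x' ∧ v = v' := by
  have hd : x' = x * (v * v'⁻¹) := by
    rw [← mul_assoc, he, mul_assoc, mul_inv_cancel, mul_one]
  have hdm : v * v'⁻¹ ∈ parabolic cs I := mul_mem hv (inv_mem hv')
  have hd1 : v * v'⁻¹ = 1 := by
    by_contra h1
    obtain ⟨i, hiI, hmem, hlen'⟩ := cox15_descent_parabolic cs hdm h1
    have h2 : ℓw (x' * 𝔰 i) < ℓw x' := by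
      rw [hd, mul_assoc, cox15_minReps_mul_length cs hx _ hmem,
        cox15_minReps_mul_length cs hx _ hdm]
      omega
    exact absurd (hx' i hiI) (by omega)
  have hvv : v = v' := by
    have := mul_inv_eq_one.mp hd1
    exact this
  refine ⟨?_, hvv⟩
  rw [hd, hd1, mul_one]

lemma cox15_exists_decomp (I : Set B) (w : W) :
    ∃ x v, x ∈ minReps cs I ∧ v ∈ parabolic cs I ∧ w = x * v := by
  obtain ⟨x, v, h1, h2, h3, -⟩ := cox15_exists_min_decomp cs I w
  exact ⟨x, v, h1, h2, h3⟩

lemma cox15_minReps_simple_add {I : Set B} {x : W} (hx : x ∈ minReps cs I) {i : B}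
    (hi : i ∈ I) : ℓw (x * 𝔰 i) = ℓw x + 1 := by
  rw [cox15_minReps_mul_length cs hx (𝔰 i) (Subgroup.subset_closure ⟨i, hi, rfl⟩),
    cs.length_simple]

lemma cox15_parab_mul_length {I : Set B} {v b : W} (hb : b⁻¹ ∈ minReps cs I)
    (hv : v ∈ parabolic cs I) : ℓw (v * b) = ℓw v + ℓw b := by
  calc ℓw (v * b) = ℓw ((v * b)⁻¹) := (cs.length_inv _).symm
    _ = ℓw (b⁻¹ * v⁻¹) := by rw [mul_inv_rev]
    _ = ℓw b⁻¹ + ℓw v⁻¹ := cox15_minReps_mul_length cs hb v⁻¹ (inv_mem hv)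
    _ = ℓw v + ℓw b := by rw [cs.length_inv, cs.length_inv, Nat.add_comm]


/-! ### The key lemmas for Statement 15 -/

lemma cox15_ab_minReps {I J : Set B} {b : W} (hb : b ∈ doubleReps cs I J) {a : W}
    (haI : a ∈ parabolic cs I) (haK : a ∈ minReps cs (interConj cs I J b)) :
    a * b ∈ minReps cs J := by
  have hbI : b⁻¹ ∈ minReps cs I := Set.mem_inv.mp hb.1
  have hbJ : b ∈ minReps cs J := hb.2
  simp only [minReps, Set.mem_setOf_eq]
  intro j hj
  by_contra hcon
  push_neg at hcon
  have hne := cs.length_mul_simple_ne (a * b) j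
  have hlt : ℓw (a * b * 𝔰 j) < ℓw (a * b) := by omega
  have hNN : cox15_NN cs (a * b) (𝔰 j) = 1 :=
    (cox15_NN_eq_one_iff cs (cs.isReflection_simple j) _).mpr hlt
  rw [cox15_NN_mul] at hNN
  have hNb : cox15_NN cs b (𝔰 j) = 0 :=
    (cox15_NN_eq_zero_iff cs (cs.isReflection_simple j) b).mpr (hbJ j hj)
  rw [hNb, zero_add] at hNN
  set t := b * 𝔰 j * b⁻¹ with ht
  have hlt2 : ℓw (a * t) < ℓw a := cox15_length_mul_lt_of_NN cs a t hNN
  obtain ⟨α, hαI, hαred, hαa⟩ := cox15_exists_reduced_word_parabolic cs haI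
  have htmem : t ∈ cs.rightInvSeq α :=
    (cox15_erase cs α t (by rw [← hαa]; exact hNN)).1
  have htI : t ∈ parabolic cs I := cox15_mem_parabolic_of_mem_rightInvSeq cs α hαI t htmem
  have htb : t * b = b * 𝔰 j := by rw [ht]; simp [mul_assoc]
  have hbsj : ℓw (b * 𝔰 j) = ℓw b + 1 := by
    have h1 := hbJ j hj
    rcases cs.length_mul_simple b j with h | h
    · exact h
    · omega
  have h5 : ℓw (t * b) = ℓw t + ℓw b := cox15_parab_mul_length cs hbI htI
  have hlt1 : ℓw t = 1 := by rw [htb, hbsj] at h5; omega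
  obtain ⟨i, hiI, hti⟩ := cox15_simple_of_parabolic_length_one cs htI hlt1
  have hiK : i ∈ interConj cs I J b := ⟨hiI, j, hj, by rw [← hti, ht]⟩
  have hfin := haK i hiK
  rw [← hti] at hfin
  omega

lemma cox15_conj_interConj {I J : Set B} {b : W} {d : W}
    (hd : d ∈ parabolic cs (interConj cs I J b)) :
    b⁻¹ * d * b ∈ parabolic cs (interConj cs J I b⁻¹) := by
  induction hd using Subgroup.closure_induction with
  | mem x hx =>
    obtain ⟨i, hi, rfl⟩ := hx
    obtain ⟨hiI, j, hjJ, hs⟩ := hi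
    have h1 : b⁻¹ * 𝔰 i * b = 𝔰 j := by rw [hs]; group
    rw [h1]
    refine Subgroup.subset_closure ⟨j, ⟨hjJ, i, hiI, ?_⟩, rfl⟩
    rw [inv_inv, ← h1]
  | one => simpa using one_mem _
  | mul x y hx hy ihx ihy =>
    have h2 : b⁻¹ * (x * y) * b = (b⁻¹ * x * b) * (b⁻¹ * y * b) := by group
    rw [h2]; exact mul_mem ihx ihy
  | inv x hx ihx =>
    have h2 : b⁻¹ * x⁻¹ * b = (b⁻¹ * x * b)⁻¹ := by group
    rw [h2]; exact inv_mem ihx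


end Cox15Aux



/-- For `b ∈ X_{IJ}`: `w ∈ W(I,J,b)` iff there exist
`a ∈ X^I_{I ∩ bJb⁻¹}`, `c ∈ X^J_{J ∩ b⁻¹Ib}` and `u ∈ X_I` with `w = abc = uab`;
moreover such `a, c, u` are unique. -/
theorem statement15 [Fintype W] (cs : CoxeterSystem M W) (I J : Set B) (b : W)
    (hb : b ∈ doubleReps cs I J) (w : W) :
    (w ∈ Wset cs I J b ↔ ∃ a c u : W,
        a ∈ relReps cs I (interConj cs I J b) ∧
        c ∈ relReps cs J (interConj cs J I b⁻¹) ∧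
        u ∈ minReps cs I ∧ w = a * b * c ∧ w = u * a * b) ∧
    (∀ a c u a' c' u' : W,
        (a ∈ relReps cs I (interConj cs I J b) ∧
          c ∈ relReps cs J (interConj cs J I b⁻¹) ∧
          u ∈ minReps cs I ∧ w = a * b * c ∧ w = u * a * b) →
        (a' ∈ relReps cs I (interConj cs I J b) ∧
          c' ∈ relReps cs J (interConj cs J I b⁻¹) ∧
          u' ∈ minReps cs I ∧ w = a' * b * c' ∧ w = u' * a' * b) →
        a = a' ∧ c = c' ∧ u = u') := by
  have hbI : b⁻¹ ∈ minReps cs I := Set.mem_inv.mp hb.1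
  have hbJ : b ∈ minReps cs J := hb.2
  have hKI : interConj cs I J b ⊆ I := fun i hi => hi.1
  have hK'J : interConj cs J I b⁻¹ ⊆ J := fun j hj => hj.1
  constructor
  · constructor
    · -- forward direction
      rintro ⟨u₀, c₀, p, q, hu₀, hc₀, hw, hp, hq, hwb, hub⟩
      obtain ⟨a, d, haK, hdK, hqad⟩ := cox15_exists_decomp cs (interConj cs I J b) q
      have haI : a ∈ parabolic cs I := by
        have hdI : d ∈ parabolic cs I := cox15_parabolic_mono cs hKI hdK
        have h0 : a = q * d⁻¹ := by rw [hqad]; group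
        rw [h0]; exact mul_mem hq (inv_mem hdI)
      have habJ : a * b ∈ minReps cs J := cox15_ab_minReps cs hb haI haK
      have he : b⁻¹ * d * b ∈ parabolic cs (interConj cs J I b⁻¹) :=
        cox15_conj_interConj cs hdK
      have heJ : b⁻¹ * d * b ∈ parabolic cs J := cox15_parabolic_mono cs hK'J he
      have hu₀b : u₀ = q * b := by rw [← hub]; group
      have hu₀2 : u₀ * 1 = (a * b) * (b⁻¹ * d * b) := by
        rw [mul_one, hu₀b, hqad]; group
      obtain ⟨hu₀ab, hed⟩ :=
        cox15_decomp_unique cs hu₀ habJ (one_mem _) heJ hu₀2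
      have hd1 : d = 1 := by
        have h2 : b * 1 * b⁻¹ = d := by rw [hed]; group
        simpa using h2.symm
      have hqa : q = a := by rw [hqad, hd1, mul_one]
      rw [hqa] at hq hwb
      have hwabc : w = a * b * c₀ := by rw [hw, hu₀ab]
      have hwpab : w = p * a * b := by rw [← hwb]; group
      have hc₀K' : c₀ ∈ minReps cs (interConj cs J I b⁻¹) := by
        simp only [minReps, Set.mem_setOf_eq]
        intro j hjK'
        by_contra hcon
        push_neg at hcon
        have hne := cs.length_mul_simple_ne c₀ j
        have hcdesc : cs.length (c₀ * cs.simple j) < cs.length c₀ := by omega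
        obtain ⟨hjJ, i, hiI, hsji⟩ := hjK'
        have hsj : cs.simple j = b⁻¹ * cs.simple i * b := by rw [hsji, inv_inv]
        have hbs : b * cs.simple j * b⁻¹ = cs.simple i := by rw [hsj]; group
        have hiK : i ∈ interConj cs I J b := ⟨hiI, j, hjJ, hbs.symm⟩
        have hlt : cs.length (w * cs.simple j) < cs.length w := by
          have h1 : cs.length (w * cs.simple j) =
              cs.length (a * b) + cs.length (c₀ * cs.simple j) := by
            rw [hwabc, mul_assoc (a * b) c₀]
            exact cox15_minReps_mul_length cs habJ _
              (mul_mem hc₀ (Subgroup.subset_closure ⟨j, hjJ, rfl⟩))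
          have h2 : cs.length w = cs.length (a * b) + cs.length c₀ := by
            rw [hwabc]
            exact cox15_minReps_mul_length cs habJ _ hc₀
          omega
        have hN1 : cox15_NN cs w (cs.simple j) = 1 :=
          (cox15_NN_eq_one_iff cs (cs.isReflection_simple j) w).mpr hlt
        have hasi : a * cs.simple i ∈ parabolic cs I :=
          mul_mem haI (Subgroup.subset_closure ⟨i, hiI, rfl⟩)
        have hgt : cs.length (w * b⁻¹) < cs.length (w * b⁻¹ * cs.simple i) := by
          have h3 : cs.length (w * b⁻¹ * cs.simple i) =
              cs.length p + cs.length (a * cs.simple i) := by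
            rw [hwb, mul_assoc]
            exact cox15_minReps_mul_length cs hp _ hasi
          have h4 : cs.length (a * cs.simple i) = cs.length a + 1 :=
            cox15_minReps_simple_add cs haK hiK
          have h5 : cs.length (w * b⁻¹) = cs.length p + cs.length a := by
            rw [hwb]
            exact cox15_minReps_mul_length cs hp a hq
          omega
        have hN0 : cox15_NN cs (w * b⁻¹) (cs.simple i) = 0 :=
          (cox15_NN_eq_zero_iff cs (cs.isReflection_simple i) (w * b⁻¹)).mpr hgt
        have hNbj : cox15_NN cs b (cs.simple j) = 0 :=
          (cox15_NN_eq_zero_iff cs (cs.isReflection_simple j) b).mpr (hbJ j hjJ)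
        have hsplit : cox15_NN cs w (cs.simple j) =
            cox15_NN cs b (cs.simple j) +
              cox15_NN cs (w * b⁻¹) (b * cs.simple j * b⁻¹) := by
          conv_lhs => rw [show w = (w * b⁻¹) * b from by group]
          rw [cox15_NN_mul]
        rw [hbs, hNbj, hN0, add_zero, hN1] at hsplit
        exact absurd hsplit (by decide)
      exact ⟨a, c₀, p, ⟨haI, haK⟩, ⟨hc₀, hc₀K'⟩, hp, hwabc, hwpab⟩
    · -- backward direction
      rintro ⟨a, c, u, ⟨haI, haK⟩, ⟨hcJ, hcK'⟩, hu, hw1, hw2⟩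
      refine ⟨a * b, c, u, a, cox15_ab_minReps cs hb haI haK, hcJ, hw1, hu, haI, ?_, ?_⟩
      · rw [hw2]; group
      · group
  · -- uniqueness
    rintro a c u a' c' u' ⟨⟨haI, haK⟩, ⟨hcJ, hcK'⟩, hu, hw1, hw2⟩
      ⟨⟨haI', haK'⟩, ⟨hcJ', hcK''⟩, hu', hw1', hw2'⟩
    have heq : (a * b) * c = (a' * b) * c' := by rw [← hw1]; exact hw1'
    obtain ⟨hab, hcc⟩ := cox15_decomp_unique cs (cox15_ab_minReps cs hb haI haK)
      (cox15_ab_minReps cs hb haI' haK') hcJ hcJ' heq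
    have ha : a = a' := mul_right_cancel hab
    refine ⟨ha, hcc, ?_⟩
    have h3 : u * a * b = u' * a * b := by rw [← hw2, hw2', ha]
    exact mul_right_cancel (mul_right_cancel h3)
end
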